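/- arXiv:math/0508371 — 8 statements merged into one kernel-verified Lean document; each statement's English description precedes it below -/
import Mathlib

section
/- Let ξ be a real random variable with 1 + ξ > 0 a.s. For θ ∈ [0, 1], one has (1+ξ)^θ ≤ 2 + ξ pointwise. Consequently, if K > 0 satisfies E[(2+ξ) ln²(1+ξ)] ≤ K |E ln(1+ξ)| and 0 < α < min(1/K, 1), then α·E[ln(1+ξ)] ≤ E[(1+ξ)^α] − 1 ≤ α·(E[ln(1+ξ)] + |E ln(1+ξ)|/2). -/
lemma exp_quad_neg {t : ℝ} (ht : t ≤ 0) : Real.exp t ≤ 1 + t + t ^ 2 / 2 := by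
  have hA : AntitoneOn (fun t : ℝ => 1 + t + t ^ 2 / 2 - Real.exp t) (Set.Iic 0) := by
    apply antitoneOn_of_deriv_nonpos (convex_Iic 0)
    · fun_prop
    · intro x hx
      exact (Differentiable.differentiableAt (by fun_prop)).differentiableWithinAt
    · intro x hx
      have hd : HasDerivAt (fun t : ℝ => 1 + t + t ^ 2 / 2 - Real.exp t)
          (1 + x - Real.exp x) x := by
        have : HasDerivAt (fun t : ℝ => 1 + t + t ^ 2 / 2 - Real.exp t)
            (0 + 1 + (2 * x ^ 1) / 2 - Real.exp x) x := by
          exact (((hasDerivAt_const x (1:ℝ)).add (hasDerivAt_id x)).add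
            ((hasDerivAt_pow 2 x).div_const 2)).sub (Real.hasDerivAt_exp x)
        convert this using 1; ring
      rw [hd.deriv]
      have := Real.add_one_le_exp x
      linarith
  have h0 : (0:ℝ) ∈ Set.Iic (0:ℝ) := Set.mem_Iic.mpr le_rfl
  have := hA (Set.mem_Iic.mpr ht) h0 ht
  simpa using this

lemma exp_quad_pos {t : ℝ} (ht : 0 ≤ t) : Real.exp t ≤ 1 + t + t ^ 2 / 2 * Real.exp t := by
  -- first: derivative h t = 1 + t * exp t + t^2/2 * exp t - exp t is nonneg on Ici 0
  have hd' : ∀ x : ℝ, HasDerivAt (fun t : ℝ => 1 + t * Real.exp t + t ^ 2 / 2 * Real.exp t - Real.exp t)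
      ((2 * x + x ^ 2 / 2) * Real.exp x) x := by
    intro x
    have h1 : HasDerivAt (fun t : ℝ => t * Real.exp t)
        (1 * Real.exp x + x * Real.exp x) x :=
      (hasDerivAt_id x).mul (Real.hasDerivAt_exp x)
    have h2 : HasDerivAt (fun t : ℝ => t ^ 2 / 2 * Real.exp t)
        ((2 * x ^ 1) / 2 * Real.exp x + x ^ 2 / 2 * Real.exp x) x :=
      ((hasDerivAt_pow 2 x).div_const 2).mul (Real.hasDerivAt_exp x)
    have := (((hasDerivAt_const x (1:ℝ)).add h1).add h2).sub (Real.hasDerivAt_exp x)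
    exact this.congr_deriv (by ring)
  have hmono : MonotoneOn (fun t : ℝ => 1 + t * Real.exp t + t ^ 2 / 2 * Real.exp t - Real.exp t)
      (Set.Ici 0) := by
    apply monotoneOn_of_deriv_nonneg (convex_Ici 0)
    · fun_prop
    · intro x hx; exact ((hd' x).differentiableAt).differentiableWithinAt
    · intro x hx
      rw [(hd' x).deriv]
      have hx0 : 0 < x := by simpa using hx
      positivity
  have hge : ∀ x : ℝ, 0 ≤ x → 0 ≤ 1 + x * Real.exp x + x ^ 2 / 2 * Real.exp x - Real.exp x := by
    intro x hx
    have := hmono (Set.mem_Ici.mpr le_rfl) (Set.mem_Ici.mpr hx) hx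
    simpa using this
  have hmono2 : MonotoneOn (fun t : ℝ => 1 + t + t ^ 2 / 2 * Real.exp t - Real.exp t)
      (Set.Ici 0) := by
    apply monotoneOn_of_deriv_nonneg (convex_Ici 0)
    · fun_prop
    · intro x hx
      exact (Differentiable.differentiableAt (by fun_prop)).differentiableWithinAt
    · intro x hx
      have hx0 : 0 < x := by simpa using hx
      have hd : HasDerivAt (fun t : ℝ => 1 + t + t ^ 2 / 2 * Real.exp t - Real.exp t)
          (1 + x * Real.exp x + x ^ 2 / 2 * Real.exp x - Real.exp x) x := by
        have h2 : HasDerivAt (fun t : ℝ => t ^ 2 / 2 * Real.exp t)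
            ((2 * x ^ 1) / 2 * Real.exp x + x ^ 2 / 2 * Real.exp x) x :=
          ((hasDerivAt_pow 2 x).div_const 2).mul (Real.hasDerivAt_exp x)
        have := (((hasDerivAt_const x (1:ℝ)).add (hasDerivAt_id x)).add h2).sub
          (Real.hasDerivAt_exp x)
        exact this.congr_deriv (by ring)
      rw [hd.deriv]
      exact hge x hx0.le
  have := hmono2 (Set.mem_Ici.mpr le_rfl) (Set.mem_Ici.mpr ht) ht
  simp only [zero_mul, pow_two, mul_zero, zero_pow] at this
  norm_num at this
  linarith

lemma rpow_le_one_add {x θ : ℝ} (hx : 0 < x) (h0 : 0 ≤ θ) (h1 : θ ≤ 1) :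
    x ^ θ ≤ 1 + x := by
  rcases le_or_gt 1 x with h | h
  · have : x ^ θ ≤ x ^ (1:ℝ) := Real.rpow_le_rpow_of_exponent_le h h1
    rw [Real.rpow_one] at this; linarith
  · have : x ^ θ ≤ 1 := Real.rpow_le_one hx.le h.le h0
    linarith

lemma rpow_lower {x α : ℝ} (hx : 0 < x) : 1 + α * Real.log x ≤ x ^ α := by
  rw [Real.rpow_def_of_pos hx, mul_comm (Real.log x) α]
  have := Real.add_one_le_exp (α * Real.log x)
  linarith [this]

lemma rpow_upper {x α : ℝ} (hx : 0 < x) (h0 : 0 ≤ α) (h1 : α ≤ 1) :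
    x ^ α ≤ 1 + α * Real.log x + α ^ 2 / 2 * ((1 + x) * Real.log x ^ 2) := by
  rw [Real.rpow_def_of_pos hx, mul_comm (Real.log x) α]
  set t := α * Real.log x with ht
  rcases le_or_gt (Real.log x) 0 with h | h
  · have := exp_quad_neg (t := t) (by nlinarith)
    have hx1 : (0:ℝ) ≤ x := hx.le
    have ht2 : t ^ 2 = α ^ 2 * Real.log x ^ 2 := by rw [ht]; ring
    have hpos2 : 0 ≤ α ^ 2 * Real.log x ^ 2 * x := by positivity
    nlinarith
  · have htn : 0 ≤ t := by positivity
    have := exp_quad_pos htn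
    have hx1 : 1 ≤ x := by
      by_contra hc
      push_neg at hc
      have := Real.log_neg hx hc
      linarith
    have hex : Real.exp t ≤ x := by
      rw [ht, mul_comm, Real.exp_mul, Real.exp_log hx]
      calc x ^ α ≤ x ^ (1:ℝ) := Real.rpow_le_rpow_of_exponent_le hx1 h1
        _ = x := Real.rpow_one x
    have ht2 : t ^ 2 = α ^ 2 * Real.log x ^ 2 := by rw [ht]; ring
    have h2 : t ^ 2 / 2 * Real.exp t ≤ t ^ 2 / 2 * (1 + x) :=
      mul_le_mul_of_nonneg_left (by linarith) (by positivity)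
    nlinarith

open MeasureTheory

theorem uniform_bound_rpow_moment
    {Ω : Type*} [MeasurableSpace Ω] (μ : Measure Ω) [IsProbabilityMeasure μ]
    (ξ : Ω → ℝ) (hmeas : Measurable ξ)
    (hpos : ∀ᵐ ω ∂μ, 0 < 1 + ξ ω)
    (hint_log : Integrable (fun ω => Real.log (1 + ξ ω)) μ)
    (hint_log2 : Integrable (fun ω => (2 + ξ ω) * Real.log (1 + ξ ω) ^ 2) μ) :
    (∀ θ : ℝ, 0 ≤ θ → θ ≤ 1 → ∀ᵐ ω ∂μ, (1 + ξ ω) ^ θ ≤ 2 + ξ ω) ∧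
      ∀ K : ℝ, 0 < K →
        (∫ ω, (2 + ξ ω) * Real.log (1 + ξ ω) ^ 2 ∂μ ≤
          K * |∫ ω, Real.log (1 + ξ ω) ∂μ|) →
        ∀ α : ℝ, 0 < α → α < min (1 / K) 1 →
          (Integrable (fun ω => (1 + ξ ω) ^ α) μ) →
          α * ∫ ω, Real.log (1 + ξ ω) ∂μ ≤ (∫ ω, (1 + ξ ω) ^ α ∂μ) - 1 ∧
          (∫ ω, (1 + ξ ω) ^ α ∂μ) - 1 ≤
            α * ((∫ ω, Real.log (1 + ξ ω) ∂μ) +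
              |∫ ω, Real.log (1 + ξ ω) ∂μ| / 2) := by
  constructor
  · intro θ h0 h1
    filter_upwards [hpos] with ω hω
    have := rpow_le_one_add hω h0 h1
    linarith
  · intro K hK hQ α hα hαmin hint_rpow
    have hα1 : α < 1 := lt_of_lt_of_le hαmin (min_le_right _ _)
    have hαK : α * K < 1 := by
      have h := lt_of_lt_of_le hαmin (min_le_left _ _)
      rw [lt_div_iff₀ hK] at h
      exact h
    set L := ∫ ω, Real.log (1 + ξ ω) ∂μ with hL
    set Q := ∫ ω, (2 + ξ ω) * Real.log (1 + ξ ω) ^ 2 ∂μ with hQdef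
    -- integrability facts
    have hint1 : Integrable (fun ω => 1 + α * Real.log (1 + ξ ω)) μ :=
      (integrable_const 1).add (hint_log.const_mul α)
    have hint2 : Integrable
        (fun ω => 1 + α * Real.log (1 + ξ ω) +
          α ^ 2 / 2 * ((2 + ξ ω) * Real.log (1 + ξ ω) ^ 2)) μ :=
      hint1.add (hint_log2.const_mul (α ^ 2 / 2))
    have hI1 : ∫ ω, (1 + α * Real.log (1 + ξ ω)) ∂μ = 1 + α * L := by
      rw [integral_add (integrable_const 1) (hint_log.const_mul α),
        integral_const, integral_const_mul]
      simp [hL]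
    have hI2 : ∫ ω, (1 + α * Real.log (1 + ξ ω) +
        α ^ 2 / 2 * ((2 + ξ ω) * Real.log (1 + ξ ω) ^ 2)) ∂μ
        = 1 + α * L + α ^ 2 / 2 * Q := by
      rw [integral_add hint1 (hint_log2.const_mul (α ^ 2 / 2)), hI1, integral_const_mul]
    constructor
    · have hmono : ∫ ω, (1 + α * Real.log (1 + ξ ω)) ∂μ ≤ ∫ ω, (1 + ξ ω) ^ α ∂μ := by
        apply integral_mono_ae hint1 hint_rpow
        filter_upwards [hpos] with ω hω
        exact rpow_lower hω
      rw [hI1] at hmono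
      linarith
    · have hmono : ∫ ω, (1 + ξ ω) ^ α ∂μ ≤
          ∫ ω, (1 + α * Real.log (1 + ξ ω) +
            α ^ 2 / 2 * ((2 + ξ ω) * Real.log (1 + ξ ω) ^ 2)) ∂μ := by
        apply integral_mono_ae hint_rpow hint2
        filter_upwards [hpos] with ω hω
        have := rpow_upper hω hα.le hα1.le
        have harit : (1 + (1 + ξ ω)) = 2 + ξ ω := by ring
        rw [harit] at this
        linarith
      rw [hI2] at hmono
      have habs : 0 ≤ |L| := abs_nonneg L
      have hQle : α ^ 2 / 2 * Q ≤ α ^ 2 / 2 * (K * |L|) :=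
        mul_le_mul_of_nonneg_left hQ (by positivity)
      have hKle : α ^ 2 / 2 * (K * |L|) ≤ α / 2 * |L| := by
        have : α * (α * K) ≤ α * 1 := mul_le_mul_of_nonneg_left hαK.le hα.le
        nlinarith
      nlinarith
end

section
/- Let x₀ > 0 and x_{n+1} = x_n(1 + f(x_n) a_n) + S_n, where S_n ≥ 0, f: ℝ → [0,1] is continuous with f(0) = 0 and inf_{u > c} u f(u) > 0 for every c > 0, the coefficients satisfy −1 < a_n < 0 with Σ a_n = −∞, and S_n / a_n → 0. Then x_n → 0. -/
open Filter

theorem deterministic_stability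
    (f : ℝ → ℝ) (hf_cont : Continuous f) (hf_range : ∀ u, f u ∈ Set.Icc (0 : ℝ) 1)
    (hf0 : f 0 = 0)
    (hf_inf : ∀ c : ℝ, 0 < c → 0 < sInf ((fun u => u * f u) '' Set.Ioi c))
    (a S x : ℕ → ℝ)
    (ha_lb : ∀ n, -1 < a n) (ha_ub : ∀ n, a n < 0)
    (ha_sum : Tendsto (fun N => ∑ n ∈ Finset.range N, a n) atTop atBot)
    (hS : ∀ n, 0 ≤ S n)
    (hratio : Tendsto (fun n => S n / a n) atTop (nhds 0))
    (hx0 : 0 < x 0)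
    (hrec : ∀ n, x (n + 1) = x n * (1 + f (x n) * a n) + S n) :
    Tendsto x atTop (nhds 0) := by
  -- positivity of x
  have hxpos : ∀ n, 0 < x n := by
    intro n
    induction n with
    | zero => exact hx0
    | succ k ih =>
      rw [hrec k]
      have h1 := (hf_range (x k)).1
      have h2 := (hf_range (x k)).2
      have h3 := ha_lb k
      have h4 := ha_ub k
      nlinarith [hS k, mul_nonneg (sub_nonneg.2 h2) (neg_nonneg.2 h4.le)]
  -- key eventual bound
  have key : ∀ ε : ℝ, 0 < ε → ∀ᶠ n in atTop, x n ≤ 2 * ε := by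
    intro ε hε
    set m := sInf ((fun u => u * f u) '' Set.Ioi ε) with hmdef
    have hm : 0 < m := hf_inf ε hε
    have hbdd : BddBelow ((fun u => u * f u) '' Set.Ioi ε) := by
      refine ⟨0, ?_⟩
      rintro y ⟨u, hu, rfl⟩
      exact mul_nonneg (le_of_lt (lt_trans hε hu)) (hf_range u).1
    have hmem : ∀ k, ε < x k → m ≤ x k * f (x k) :=
      fun k hk => csInf_le hbdd ⟨x k, hk, rfl⟩
    have hminpos : (0:ℝ) < min (m / 2) ε := lt_min (by linarith) hε
    have hev : ∀ᶠ n in atTop, |S n / a n| < min (m / 2) ε := by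
      have habs : Tendsto (fun n => |S n / a n|) atTop (nhds 0) := by
        simpa using hratio.abs
      exact habs.eventually_lt_const hminpos
    obtain ⟨N, hN⟩ := eventually_atTop.mp hev
    -- rewrite S n
    have hSrep : ∀ n, S n = |S n / a n| * (-a n) := by
      intro n
      rw [abs_div, abs_of_nonneg (hS n), abs_of_neg (ha_ub n)]
      rw [div_mul_cancel₀]
      exact ne_of_gt (neg_pos.2 (ha_ub n))
    have hSa : ∀ n, N ≤ n → S n ≤ m / 2 * (-a n) := by
      intro n hn
      rw [hSrep n]
      have h := (hN n hn).le.trans (min_le_left _ _)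
      exact mul_le_mul_of_nonneg_right h (neg_nonneg.2 (ha_ub n).le)
    have hSe : ∀ n, N ≤ n → S n ≤ ε := by
      intro n hn
      have h := (hN n hn).le.trans (min_le_right _ _)
      have h1 : -a n ≤ 1 := by linarith [ha_lb n]
      calc S n = |S n / a n| * (-a n) := hSrep n
        _ ≤ ε * 1 := mul_le_mul h h1 (neg_nonneg.2 (ha_ub n).le) hε.le
        _ = ε := mul_one ε
    -- decrease step when above ε
    have hdec : ∀ n, N ≤ n → ε < x n → x (n + 1) ≤ x n + m / 2 * a n := by
      intro n hn hxn
      rw [hrec n]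
      have h1 := hmem n hxn
      have h2 := hSa n hn
      nlinarith [mul_nonneg (sub_nonneg.2 h1) (neg_nonneg.2 (ha_ub n).le)]
    -- Step A : some n ≥ N with x n ≤ ε
    have hA : ∃ n, N ≤ n ∧ x n ≤ ε := by
      by_contra hcon
      push_neg at hcon
      have hbig : ∀ n, N ≤ n → ε < x n := fun n hn => hcon n hn
      have hstep : ∀ k : ℕ,
          x (N + k) ≤ x N + m / 2 * ∑ i ∈ Finset.range k, a (N + i) := by
        intro k
        induction k with
        | zero => simp
        | succ j ih =>
          have h1 := hdec (N + j) (Nat.le_add_right _ _) (hbig (N + j) (Nat.le_add_right _ _))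
          rw [Finset.sum_range_succ]
          have : N + (j + 1) = (N + j) + 1 := by ring
          rw [this]
          linarith
      -- choose N' with small partial sum
      have hC : ∀ᶠ K in atTop,
          (∑ n ∈ Finset.range K, a n) ≤ (∑ n ∈ Finset.range N, a n) - 2 * x N / m := by
        exact ha_sum.eventually (eventually_le_atBot _)
      obtain ⟨K, hKN, hKsum⟩ := ((eventually_ge_atTop N).and hC).exists
      have hKeq : N + (K - N) = K := by omega
      have hsplit := Finset.sum_range_add a N (K - N)
      rw [hKeq] at hsplit
      have hT : ∑ i ∈ Finset.range (K - N), a (N + i) ≤ -(2 * x N / m) := by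
        rw [hsplit] at hKsum
        linarith
      have hx : x (N + (K - N)) ≤ x N + m / 2 * (-(2 * x N / m)) :=
        le_trans (hstep (K - N)) (by
          have := mul_le_mul_of_nonneg_left hT (by linarith : (0:ℝ) ≤ m / 2)
          linarith)
      have : x (N + (K - N)) ≤ 0 := by
        have hmne : m ≠ 0 := ne_of_gt hm
        have : m / 2 * (-(2 * x N / m)) = -x N := by field_simp
        linarith [hx, this ▸ hx]
      linarith [hxpos (N + (K - N))]
    -- Step B : trap below 2ε
    obtain ⟨n0, hn0N, hn0⟩ := hA
    have hB : ∀ k : ℕ, x (n0 + k) ≤ 2 * ε := by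
      intro k
      induction k with
      | zero => simpa using hn0.trans (by linarith)
      | succ j ih =>
        have hge : N ≤ n0 + j := le_trans hn0N (Nat.le_add_right _ _)
        have hrw : n0 + (j + 1) = (n0 + j) + 1 := by ring
        rw [hrw]
        by_cases hcase : x (n0 + j) ≤ ε
        · rw [hrec (n0 + j)]
          have hSb := hSe (n0 + j) hge
          have hprod : 0 ≤ x (n0 + j) * (f (x (n0 + j)) * (-a (n0 + j))) :=
            mul_nonneg (hxpos _).le
              (mul_nonneg (hf_range _).1 (neg_nonneg.2 (ha_ub _).le))
          nlinarith
        · push_neg at hcase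
          have := hdec (n0 + j) hge hcase
          nlinarith [ha_ub (n0 + j)]
    filter_upwards [eventually_ge_atTop n0] with k hk
    have : k = n0 + (k - n0) := by omega
    rw [this]
    exact hB (k - n0)
  -- conclude
  rw [tendsto_order]
  constructor
  · intro b hb
    filter_upwards with n
    exact lt_trans hb (hxpos n)
  · intro b hb
    filter_upwards [key (b / 4) (by linarith)] with n hn
    linarith
end

section
/- Let (Ω, F, (F_n), P) be a filtered probability space and Z_n a nonnegative F_n-adapted integrable process satisfying Z_{n+1} ≤ Z_n + u_n − v_n + ν_{n+1}, where (ν_n) is an F_n-martingale difference and (u_n), (v_n) are nonnegative F_n-adapted integrable processes. Then, almost surely on the event {Σ_n u_n < ∞}, one has Σ_n v_n < ∞ and Z_n converges to a finite limit. -/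
open MeasureTheory Filter

theorem robbins_siegmund
    {Ω : Type*} {m0 : MeasurableSpace Ω} (μ : Measure Ω) [IsProbabilityMeasure μ]
    (ℱ : Filtration ℕ m0)
    (Z u v : ℕ → Ω → ℝ) (ν : ℕ → Ω → ℝ)
    (hZ_adapted : Adapted ℱ Z) (hZ_nonneg : ∀ n ω, 0 ≤ Z n ω)
    (hZ_int : ∀ n, Integrable (Z n) μ)
    (hu_adapted : Adapted ℱ u) (hu_nonneg : ∀ n ω, 0 ≤ u n ω)
    (hu_int : ∀ n, Integrable (u n) μ)
    (hv_adapted : Adapted ℱ v) (hv_nonneg : ∀ n ω, 0 ≤ v n ω)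
    (hv_int : ∀ n, Integrable (v n) μ)
    (hν_meas : ∀ n, StronglyMeasurable[ℱ (n + 1)] (ν (n + 1)))
    (hν_int : ∀ n, Integrable (ν n) μ)
    (hν_cond : ∀ n, μ[ν (n + 1)|ℱ n] =ᵐ[μ] 0)
    (hrec : ∀ n, ∀ᵐ ω ∂μ, Z (n + 1) ω ≤ Z n ω + u n ω - v n ω + ν (n + 1) ω) :
    ∀ᵐ ω ∂μ, (Summable fun n => u n ω) →
      (Summable fun n => v n ω) ∧ ∃ l : ℝ, Tendsto (fun n => Z n ω) atTop (nhds l) := by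
  classical
  -- the compensated process
  set X : ℕ → Ω → ℝ := fun n ω =>
    Z n ω + (∑ k ∈ Finset.range n, v k ω) - ∑ k ∈ Finset.range n, u k ω with hXdef
  have hXint : ∀ n, Integrable (X n) μ := fun n =>
    ((hZ_int n).add (integrable_finset_sum _ fun k _ => hv_int k)).sub
      (integrable_finset_sum _ fun k _ => hu_int k)
  have hXadapted : ∀ n, StronglyMeasurable[ℱ n] (X n) := by
    intro n
    refine (((hZ_adapted n).stronglyMeasurable.add ?_).sub ?_)
    · exact Finset.stronglyMeasurable_fun_sum _ fun k hk =>
        (hv_adapted k).stronglyMeasurable.mono (ℱ.mono (le_of_lt (Finset.mem_range.1 hk)))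
    · exact Finset.stronglyMeasurable_fun_sum _ fun k hk =>
        (hu_adapted k).stronglyMeasurable.mono (ℱ.mono (le_of_lt (Finset.mem_range.1 hk)))
  have hΔint : ∀ n, Integrable (fun ω => X (n + 1) ω - X n ω) μ := fun n =>
    (hXint (n + 1)).sub (hXint n)
  -- conditional expectation of the increments is nonpositive
  have hΔcond : ∀ n, μ[fun ω => X (n + 1) ω - X n ω|ℱ n] ≤ᵐ[μ] 0 := by
    intro n
    have hle : (fun ω => X (n + 1) ω - X n ω) ≤ᵐ[μ] ν (n + 1) := by
      filter_upwards [hrec n] with ω hω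
      simp only [hXdef, Finset.sum_range_succ]
      linarith
    calc μ[fun ω => X (n + 1) ω - X n ω|ℱ n]
        ≤ᵐ[μ] μ[ν (n + 1)|ℱ n] := condExp_mono (hΔint n) (hν_int (n + 1)) hle
      _ =ᵐ[μ] 0 := hν_cond n
  -- the key localized convergence statement
  have key : ∀ a : ℝ, 0 ≤ a → ∀ᵐ ω ∂μ,
      (∀ k, ∑ j ∈ Finset.range (k + 1), u j ω ≤ a) →
      ∃ c, Tendsto (fun n => X n ω) atTop (nhds c) := by
    intro a ha
    set A : ℕ → Set Ω := fun n => {ω | ∑ j ∈ Finset.range (n + 1), u j ω ≤ a} with hAdef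
    have hAmeas : ∀ n, MeasurableSet[ℱ n] (A n) := by
      intro n
      have hsm : StronglyMeasurable[ℱ n] fun ω => ∑ j ∈ Finset.range (n + 1), u j ω :=
        Finset.stronglyMeasurable_fun_sum _ fun k hk =>
          (hu_adapted k).stronglyMeasurable.mono (ℱ.mono (Nat.lt_succ_iff.1 (Finset.mem_range.1 hk)))
      exact measurableSet_le hsm.measurable measurable_const
    have hAanti : ∀ m n, m ≤ n → A n ⊆ A m := by
      intro m n hmn ω hω
      simp only [hAdef, Set.mem_setOf_eq] at hω ⊢
      exact le_trans (Finset.sum_le_sum_of_subset_of_nonneg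
        (Finset.range_subset_range.2 (by omega)) (fun i _ _ => hu_nonneg i ω)) hω
    set Y : ℕ → Ω → ℝ := fun n ω =>
      X 0 ω + ∑ k ∈ Finset.range n, (A k).indicator (fun ω => X (k + 1) ω - X k ω) ω with hYdef
    have hIint : ∀ k, Integrable ((A k).indicator (fun ω => X (k + 1) ω - X k ω)) μ :=
      fun k => (hΔint k).indicator (ℱ.le k _ (hAmeas k))
    have hYint : ∀ n, Integrable (Y n) μ := fun n =>
      (hXint 0).add (integrable_finset_sum _ fun k _ => hIint k)
    have hYadapted : Adapted ℱ Y := by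
      intro n
      refine StronglyMeasurable.measurable ?_
      refine ((hXadapted 0).mono (ℱ.mono (Nat.zero_le n))).add ?_
      refine Finset.stronglyMeasurable_fun_sum _ fun k hk => ?_
      have hk' : k + 1 ≤ n := Finset.mem_range.1 hk
      exact StronglyMeasurable.indicator
        (((hXadapted (k + 1)).sub ((hXadapted k).mono (ℱ.mono k.le_succ))).mono (ℱ.mono hk'))
        (ℱ.mono (le_trans k.le_succ hk') _ (hAmeas k))
    have hYsucc : ∀ n, Y (n + 1) =
        Y n + (A n).indicator (fun ω => X (n + 1) ω - X n ω) := by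
      intro n
      funext ω
      simp only [hYdef, Finset.sum_range_succ, Pi.add_apply]
      ring
    have hYsuper : Supermartingale Y ℱ μ := by
      refine supermartingale_nat (fun n => (hYadapted n).stronglyMeasurable) hYint fun n => ?_
      rw [hYsucc n]
      calc μ[Y n + (A n).indicator (fun ω => X (n + 1) ω - X n ω)|ℱ n]
          =ᵐ[μ] μ[Y n|ℱ n] + μ[(A n).indicator (fun ω => X (n + 1) ω - X n ω)|ℱ n] :=
            condExp_add (hYint n) (hIint n) _
        _ =ᵐ[μ] Y n + (A n).indicator (μ[fun ω => X (n + 1) ω - X n ω|ℱ n]) := by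
            have h1 : μ[Y n|ℱ n] =ᵐ[μ] Y n := by
              rw [condExp_of_stronglyMeasurable (ℱ.le n) (hYadapted n).stronglyMeasurable (hYint n)]
            exact EventuallyEq.add h1 (condExp_indicator (hΔint n) (hAmeas n))
        _ ≤ᵐ[μ] Y n := by
            filter_upwards [hΔcond n] with ω hω
            simp only [Pi.add_apply]
            have : (A n).indicator (μ[fun ω => X (n + 1) ω - X n ω|ℱ n]) ω ≤ 0 := by
              by_cases h : ω ∈ A n
              · rw [Set.indicator_of_mem h]; exact hω
              · rw [Set.indicator_of_notMem h]
            linarith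
    have hYeq : ∀ n ω, (∀ k, k < n → ω ∈ A k) → Y n ω = X n ω := by
      intro n
      induction n with
      | zero => intro ω _; simp [hYdef]
      | succ n ih =>
        intro ω hω
        have h1 : Y (n + 1) ω = Y n ω + X (n + 1) ω - X n ω := by
          rw [hYsucc n]
          simp [Set.indicator_of_mem (hω n n.lt_succ_self)]
          ring
        rw [h1, ih ω fun k hk => hω k (hk.trans n.lt_succ_self)]
        ring
    have hX0 : ∀ ω, X 0 ω = Z 0 ω := by intro ω; simp [hXdef]
    have hYlb : ∀ n ω, -a ≤ Y n ω := by
      intro n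
      induction n with
      | zero =>
        intro ω
        have : Y 0 ω = Z 0 ω := by simp [hYdef, hX0 ω]
        rw [this]; linarith [hZ_nonneg 0 ω]
      | succ n ih =>
        intro ω
        by_cases h : ω ∈ A n
        · have hall : ∀ k, k < n + 1 → ω ∈ A k := fun k hk =>
            hAanti k n (Nat.lt_succ_iff.1 hk) h
          rw [hYeq (n + 1) ω hall]
          have hsum : ∑ j ∈ Finset.range (n + 1), u j ω ≤ a := h
          have hvs : 0 ≤ ∑ k ∈ Finset.range (n + 1), v k ω :=
            Finset.sum_nonneg fun k _ => hv_nonneg k ω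
          have := hZ_nonneg (n + 1) ω
          simp only [hXdef]
          linarith
        · have : Y (n + 1) ω = Y n ω := by
            rw [hYsucc n]
            simp [Set.indicator_of_notMem h]
          rw [this]; exact ih ω
    -- L¹ bound
    have hEbound : ∀ n, ∫ ω, |Y n ω| ∂μ ≤ (∫ ω, Z 0 ω ∂μ) + 2 * a := by
      intro n
      have h1 : ∫ ω, |Y n ω| ∂μ ≤ ∫ ω, (Y n ω + 2 * a) ∂μ := by
        refine integral_mono (hYint n).abs ((hYint n).add (integrable_const _)) fun ω => ?_
        have := hYlb n ω
        exact abs_le.2 ⟨by linarith, by linarith⟩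
      have h2 : ∫ ω, (Y n ω + 2 * a) ∂μ = (∫ ω, Y n ω ∂μ) + 2 * a := by
        rw [integral_add (hYint n) (integrable_const _), integral_const]
        simp
      have h3 : ∫ ω, Y n ω ∂μ ≤ ∫ ω, Y 0 ω ∂μ := by
        have := hYsuper.setIntegral_le (Nat.zero_le n) (MeasurableSet.univ (α := Ω))
        simpa [setIntegral_univ] using this
      have h4 : ∫ ω, Y 0 ω ∂μ = ∫ ω, Z 0 ω ∂μ := by
        refine integral_congr_ae (Eventually.of_forall fun ω => ?_)
        simp [hYdef, hX0 ω]
      linarith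
    have hbdd : ∀ n, eLpNorm ((-Y) n) 1 μ ≤ ((∫ ω, Z 0 ω ∂μ) + 2 * a).toNNReal := by
      intro n
      have h1 : eLpNorm ((-Y) n) 1 μ = eLpNorm (Y n) 1 μ := by
        simp only [Pi.neg_apply]
        exact eLpNorm_neg (Y n) 1 μ
      rw [h1, eLpNorm_one_eq_lintegral_enorm,
        ← ofReal_integral_norm_eq_lintegral_enorm (hYint n)]
      calc ENNReal.ofReal (∫ ω, ‖Y n ω‖ ∂μ)
          ≤ ENNReal.ofReal ((∫ ω, Z 0 ω ∂μ) + 2 * a) := by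
            refine ENNReal.ofReal_le_ofReal ?_
            simpa [Real.norm_eq_abs] using hEbound n
        _ = (((∫ ω, Z 0 ω ∂μ) + 2 * a).toNNReal : ENNReal) := rfl
    have hconv := hYsuper.neg.exists_ae_tendsto_of_bdd hbdd
    filter_upwards [hconv] with ω hω hall
    obtain ⟨c, hc⟩ := hω
    refine ⟨-c, ?_⟩
    have hYX : ∀ n, Y n ω = X n ω := fun n => hYeq n ω fun k _ => hall k
    have : Tendsto (fun n => Y n ω) atTop (nhds (-c)) := by
      have := hc.neg
      simp only [Pi.neg_apply, neg_neg] at this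
      exact this
    exact this.congr fun n => hYX n
  have key' : ∀ᵐ ω ∂μ, ∀ a : ℕ,
      (∀ k, ∑ j ∈ Finset.range (k + 1), u j ω ≤ (a : ℝ)) →
      ∃ c, Tendsto (fun n => X n ω) atTop (nhds c) :=
    ae_all_iff.2 fun a => key a (Nat.cast_nonneg a)
  filter_upwards [key'] with ω hω hsum
  set S : ℝ := ∑' n, u n ω with hSdef
  have hpart : ∀ k, ∑ j ∈ Finset.range (k + 1), u j ω ≤ (⌈S⌉₊ : ℝ) := by
    intro k
    refine le_trans (Summable.sum_le_tsum _ (fun i _ => hu_nonneg i ω) hsum) (Nat.le_ceil S)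
  obtain ⟨c, hc⟩ := hω ⌈S⌉₊ hpart
  have hU : Tendsto (fun n => ∑ k ∈ Finset.range n, u k ω) atTop (nhds S) :=
    hsum.hasSum.tendsto_sum_nat
  have hZV : Tendsto (fun n => Z n ω + ∑ k ∈ Finset.range n, v k ω) atTop (nhds (c + S)) := by
    have := hc.add hU
    refine this.congr fun n => ?_
    simp only [hXdef]
    ring
  obtain ⟨C, hC⟩ := hZV.bddAbove_range
  have hvsum : Summable fun n => v n ω := by
    refine summable_of_sum_range_le (c := C) (fun n => hv_nonneg n ω) fun n => ?_
    have h1 : Z n ω + ∑ k ∈ Finset.range n, v k ω ≤ C := hC ⟨n, rfl⟩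
    linarith [hZ_nonneg n ω]
  refine ⟨hvsum, ⟨c + S - ∑' n, v n ω, ?_⟩⟩
  have hV : Tendsto (fun n => ∑ k ∈ Finset.range n, v k ω) atTop (nhds (∑' n, v n ω)) :=
    hvsum.hasSum.tendsto_sum_nat
  have := hZV.sub hV
  refine this.congr fun n => ?_
  ring
end

section
/- Let ξ_n (n ≥ 1) be independent random variables with 1 + ξ_n > 0 a.s., let S_n > 0 be non-random, X_0 > 0, and X_{n+1} = X_n(1 + ξ_{n+1}) + S_n. Suppose there exists α ∈ (0, 1] such that Σ_n [E(1+ξ_{n+1})^α − 1]^+ < ∞ and Σ_n S_n^α < ∞. Then X_n converges a.s. to a finite limit. If moreover Σ_n [E(1+ξ_{n+1})^α − 1]^− = −∞, then X_n → 0 a.s. -/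
set_option maxHeartbeats 1000000

open MeasureTheory ProbabilityTheory Filter
open scoped Topology ENNReal

/-- Subadditivity of `rpow` for exponent in `[0,1]`. -/
lemma aux_rpow_add_le {x y p : ℝ} (hx : 0 ≤ x) (hy : 0 ≤ y) (hp : 0 ≤ p) (hp1 : p ≤ 1) :
    (x + y) ^ p ≤ x ^ p + y ^ p := by
  have h := NNReal.rpow_add_le_add_rpow x.toNNReal y.toNNReal hp hp1
  have h' := NNReal.coe_le_coe.2 h
  rw [NNReal.coe_add, NNReal.coe_rpow, NNReal.coe_rpow, NNReal.coe_rpow, NNReal.coe_add,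
    Real.coe_toNNReal x hx, Real.coe_toNNReal y hy] at h'
  exact h'

theorem linear_nonhomogeneous_alpha_le_one
    {Ω : Type*} [MeasurableSpace Ω] (μ : Measure Ω) [IsProbabilityMeasure μ]
    (ξ : ℕ → Ω → ℝ) (hξ_meas : ∀ n, Measurable (ξ n))
    (hξ_indep : iIndepFun ξ μ)
    (hξ_pos : ∀ n, ∀ᵐ ω ∂μ, 0 < 1 + ξ n ω)
    (S : ℕ → ℝ) (hS : ∀ n, 0 < S n)
    (X : ℕ → Ω → ℝ) (X₀ : ℝ) (hX₀ : 0 < X₀) (hX0 : ∀ ω, X 0 ω = X₀)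
    (hrec : ∀ n ω, X (n + 1) ω = X n ω * (1 + ξ (n + 1) ω) + S n)
    (α : ℝ) (hα0 : 0 < α) (hα1 : α ≤ 1)
    (hint : ∀ n, Integrable (fun ω => (1 + ξ n ω) ^ α) μ)
    (hpos_sum : Summable fun n => max ((∫ ω, (1 + ξ (n + 1) ω) ^ α ∂μ) - 1) 0)
    (hS_sum : Summable fun n => S n ^ α) :
    (∀ᵐ ω ∂μ, ∃ l : ℝ, Tendsto (fun n => X n ω) atTop (nhds l)) ∧
      ((Tendsto (fun N => ∑ n ∈ Finset.range N,
          min ((∫ ω, (1 + ξ (n + 1) ω) ^ α ∂μ) - 1) 0) atTop atBot) →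
        ∀ᵐ ω ∂μ, Tendsto (fun n => X n ω) atTop (nhds 0)) := by
  classical
  -- notation
  set a : ℕ → ℝ := fun n => ∫ ω, (1 + ξ (n + 1) ω) ^ α ∂μ with ha_def
  set c : ℕ → ℝ := fun n => max (a n) 1 with hc_def
  set b : ℕ → ℝ := fun n => ∏ k ∈ Finset.range n, c k with hb_def
  set Y : ℕ → Ω → ℝ := fun n ω => X n ω ^ α with hY_def
  set g : ℕ → ℝ := fun j => S j ^ α / b (j + 1) with hg_def
  set t : ℕ → ℝ := fun n => ∑' k, g (k + n) with ht_def
  set T : ℝ := ∑' n, max (a n - 1) 0 with hT_def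
  set M : ℕ → Ω → ℝ := fun n ω => Y n ω / b n + t n with hM_def
  have sm : ∀ i, StronglyMeasurable (ξ i) := fun i => (hξ_meas i).stronglyMeasurable
  set ℱ : Filtration ℕ (inferInstance : MeasurableSpace Ω) := Filtration.natural ξ sm with hF_def
  -- basic positivity facts
  have hc1 : ∀ n, (1 : ℝ) ≤ c n := fun n => le_max_right _ _
  have hbsucc : ∀ n, b (n + 1) = b n * c n := fun n => Finset.prod_range_succ c n
  have hb1 : ∀ n, (1 : ℝ) ≤ b n := by
    intro n
    induction n with
    | zero => simp [hb_def]
    | succ n ih =>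
        rw [hbsucc n]
        nlinarith [hc1 n]
  have hbpos : ∀ n, (0 : ℝ) < b n := fun n => lt_of_lt_of_le one_pos (hb1 n)
  have hSα : ∀ k, (0 : ℝ) ≤ S k ^ α := fun k => Real.rpow_nonneg (hS k).le α
  have hanonneg : ∀ n, 0 ≤ a n := by
    intro n
    exact integral_nonneg_of_ae <| (hξ_pos (n + 1)).mono fun ω hω => Real.rpow_nonneg hω.le α
  -- X is positive on the good event
  have hXpos : ∀ ω, (∀ n, 0 < 1 + ξ n ω) → ∀ n, 0 < X n ω := by
    intro ω hω n
    induction n with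
    | zero => rw [hX0]; exact hX₀
    | succ n ih =>
        rw [hrec]
        exact add_pos (mul_pos ih (hω (n + 1))) (hS n)
  have hE : ∀ᵐ ω ∂μ, ∀ n, 0 < 1 + ξ n ω := ae_all_iff.2 hξ_pos
  -- measurability
  have hXsm : ∀ n, StronglyMeasurable[ℱ n] (X n) := by
    intro n
    induction n with
    | zero =>
        have : X 0 = fun _ => X₀ := funext hX0
        rw [this]; exact stronglyMeasurable_const
    | succ n ih =>
        have : X (n + 1) = fun ω => X n ω * (1 + ξ (n + 1) ω) + S n := funext (hrec n)
        rw [this]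
        exact ((ih.mono (ℱ.mono n.le_succ)).mul
          (stronglyMeasurable_const.add ((Filtration.stronglyAdapted_natural sm) (n + 1)))).add
          stronglyMeasurable_const
  have hYsm : ∀ n, StronglyMeasurable[ℱ n] (Y n) := by
    intro n
    exact ((Real.continuous_rpow_const hα0.le).measurable.comp
      (hXsm n).measurable).stronglyMeasurable
  have hYmeas : ∀ n, StronglyMeasurable (Y n) := fun n => (hYsm n).mono (ℱ.le n)
  have hgm : Measurable fun x : ℝ => (1 + x) ^ α :=
    (Real.continuous_rpow_const hα0.le).measurable.comp (measurable_const.add measurable_id)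
  -- independence of Y n and the (n+1)-st noise
  have hindep : ∀ n, Indep (MeasurableSpace.comap (ξ (n + 1)) inferInstance) (ℱ n) μ :=
    fun n => hξ_indep.indep_comap_natural_of_lt sm (Nat.lt_succ_self n)
  have hWsm : ∀ n, StronglyMeasurable[MeasurableSpace.comap (ξ (n + 1)) inferInstance]
      (fun ω => (1 + ξ (n + 1) ω) ^ α) := by
    intro n
    exact (hgm.comp (comap_measurable (ξ (n + 1)))).stronglyMeasurable
  have hYW : ∀ n, IndepFun (Y n) (fun ω => (1 + ξ (n + 1) ω) ^ α) μ := by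
    intro n
    refine (IndepFun_iff_Indep _ _ _).2 ?_
    exact indep_of_indep_of_le_right
      (indep_of_indep_of_le_left (hindep n).symm (hYsm n).measurable.comap_le)
      (hWsm n).measurable.comap_le
  -- a.e. nonnegativity of Y and the key pathwise inequality
  have hY0 : ∀ᵐ ω ∂μ, ∀ n, 0 ≤ Y n ω := by
    filter_upwards [hE] with ω hω n
    exact Real.rpow_nonneg (hXpos ω hω n).le α
  have hYle : ∀ n, ∀ᵐ ω ∂μ,
      Y (n + 1) ω ≤ Y n ω * (1 + ξ (n + 1) ω) ^ α + S n ^ α := by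
    intro n
    filter_upwards [hE] with ω hω
    have hx : 0 < X n ω := hXpos ω hω n
    have hx' : 0 ≤ X n ω * (1 + ξ (n + 1) ω) := mul_nonneg hx.le (hω (n + 1)).le
    calc Y (n + 1) ω = (X n ω * (1 + ξ (n + 1) ω) + S n) ^ α := by
          simp only [hY_def]; rw [hrec n ω]
      _ ≤ (X n ω * (1 + ξ (n + 1) ω)) ^ α + S n ^ α :=
          aux_rpow_add_le hx' (hS n).le hα0.le hα1
      _ = Y n ω * (1 + ξ (n + 1) ω) ^ α + S n ^ α := by
          rw [Real.mul_rpow hx.le (hω (n + 1)).le]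
  -- integrability of Y
  have hYint : ∀ n, Integrable (Y n) μ := by
    intro n
    induction n with
    | zero =>
        have : Y 0 = fun _ => X₀ ^ α := by
          funext ω; simp only [hY_def]; rw [hX0 ω]
        rw [this]; exact integrable_const _
    | succ n ih =>
        have hprod : Integrable (fun ω => Y n ω * (1 + ξ (n + 1) ω) ^ α) μ :=
          (hYW n).integrable_mul ih (hint (n + 1))
        refine Integrable.mono' (hprod.add (integrable_const (S n ^ α)))
          (hYmeas (n + 1)).aestronglyMeasurable ?_
        filter_upwards [hYle n, hY0] with ω h1 h2
        rw [Real.norm_eq_abs, abs_of_nonneg (h2 (n + 1))]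
        exact h1
  have hprodint : ∀ n, Integrable (fun ω => Y n ω * (1 + ξ (n + 1) ω) ^ α) μ :=
    fun n => (hYW n).integrable_mul (hYint n) (hint (n + 1))
  -- conditional expectation inequality
  have hkey : ∀ n, μ[Y (n + 1)|ℱ n] ≤ᵐ[μ] fun ω => c n * Y n ω + S n ^ α := by
    intro n
    have hsum_int : Integrable (fun ω => Y n ω * (1 + ξ (n + 1) ω) ^ α + S n ^ α) μ :=
      (hprodint n).add (integrable_const _)
    have h1 : μ[Y (n + 1)|ℱ n] ≤ᵐ[μ]
        μ[fun ω => Y n ω * (1 + ξ (n + 1) ω) ^ α + S n ^ α|ℱ n] :=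
      condExp_mono (hYint (n + 1)) hsum_int (hYle n)
    have h2 : μ[fun ω => Y n ω * (1 + ξ (n + 1) ω) ^ α + S n ^ α|ℱ n] =ᵐ[μ]
        μ[fun ω => Y n ω * (1 + ξ (n + 1) ω) ^ α|ℱ n]
          + μ[(fun _ => S n ^ α : Ω → ℝ)|ℱ n] :=
      condExp_add (hprodint n) (integrable_const _) _
    have h3 : μ[fun ω => Y n ω * (1 + ξ (n + 1) ω) ^ α|ℱ n] =ᵐ[μ]
        Y n * μ[fun ω => (1 + ξ (n + 1) ω) ^ α|ℱ n] :=
      condExp_mul_of_stronglyMeasurable_left (hYsm n) (hprodint n) (hint (n + 1))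
    have h4 : μ[fun ω => (1 + ξ (n + 1) ω) ^ α|ℱ n] =ᵐ[μ] fun _ => a n :=
      condExp_indep_eq (hξ_meas (n + 1)).comap_le (ℱ.le n) (hWsm n) (hindep n)
    have h5 : μ[(fun _ => S n ^ α : Ω → ℝ)|ℱ n] = fun _ => S n ^ α :=
      condExp_const (ℱ.le n) _
    refine h1.trans (EventuallyLE.trans h2.le ?_)
    rw [h5]
    filter_upwards [h3, h4, hY0] with ω e3 e4 h0
    simp only [Pi.add_apply, Pi.mul_apply] at *
    rw [e3, e4]
    have ha_le : a n ≤ c n := le_max_left _ _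
    nlinarith [h0 n]
  -- the supermartingale
  have hMint : ∀ n, Integrable (M n) μ := by
    intro n
    exact ((hYint n).div_const (b n)).add (integrable_const (t n))
  -- facts about t
  have hgnonneg : ∀ j, 0 ≤ g j := fun j => div_nonneg (hSα j) (hbpos (j + 1)).le
  have hgsum : Summable g := by
    refine Summable.of_nonneg_of_le hgnonneg (fun j => ?_) hS_sum
    exact div_le_self (hSα j) (hb1 (j + 1))
  have htsum : ∀ n, Summable fun k => g (k + n) := fun n => (summable_nat_add_iff n).2 hgsum
  have ht0 : ∀ n, 0 ≤ t n := fun n => tsum_nonneg fun k => hgnonneg _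
  have htrec : ∀ n, t n = g n + t (n + 1) := by
    intro n
    have h1 : ∑' k, g (k + n) = g (0 + n) + ∑' k, g ((k + 1) + n) := Summable.tsum_eq_zero_add (htsum n)
    simp only [ht_def]
    rw [h1, zero_add]
    congr 1
    exact tsum_congr fun k => congrArg g (by omega)
  have httends : Tendsto t atTop (𝓝 0) := by
    have h1 : Tendsto (fun n => ∑' k, S (k + n) ^ α) atTop (𝓝 0) :=
      tendsto_sum_nat_add fun j => S j ^ α
    refine tendsto_of_tendsto_of_tendsto_of_le_of_le tendsto_const_nhds h1 ht0 fun n => ?_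
    exact Summable.tsum_le_tsum (fun k => div_le_self (hSα _) (hb1 _)) (htsum n)
      ((summable_nat_add_iff n).2 hS_sum)
  have hMadp : StronglyAdapted ℱ M := fun n =>
    ((hYsm n).mul stronglyMeasurable_const).add stronglyMeasurable_const
  have hMsuper : Supermartingale M ℱ μ := by
    refine supermartingale_nat hMadp hMint fun n => ?_
    have e1 : M (n + 1) = (b (n + 1))⁻¹ • Y (n + 1) + fun _ => t (n + 1) := by
      funext ω
      simp only [hM_def, Pi.add_apply, Pi.smul_apply, smul_eq_mul]
      rw [div_eq_inv_mul]
    have h2 : μ[M (n + 1)|ℱ n] =ᵐ[μ]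
        (b (n + 1))⁻¹ • μ[Y (n + 1)|ℱ n] + fun _ => t (n + 1) := by
      rw [e1]
      refine (condExp_add ((hYint (n + 1)).smul _) (integrable_const _) _).trans ?_
      rw [condExp_const (μ := μ) (ℱ.le n) (t (n + 1))]
      filter_upwards [condExp_smul (μ := μ) (m := ℱ n) ((b (n + 1))⁻¹ : ℝ) (Y (n + 1))]
        with ω hs
      simp only [Pi.add_apply, Pi.smul_apply, smul_eq_mul] at *
      rw [hs]
    refine h2.le.trans ?_
    filter_upwards [hkey n, hY0] with ω hkω h0ω
    have hcn : (0:ℝ) < c n := lt_of_lt_of_le one_pos (hc1 n)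
    have hbn := hbpos n
    have hb1n := hbpos (n + 1)
    simp only [Pi.add_apply, Pi.smul_apply, smul_eq_mul]
    have e2 : (b (n + 1))⁻¹ * (c n * Y n ω + S n ^ α) = Y n ω / b n + g n := by
      simp only [hg_def]
      rw [hbsucc n]
      field_simp
    have hstep : (b (n + 1))⁻¹ * (μ[Y (n + 1)|ℱ n]) ω + t (n + 1)
        ≤ (b (n + 1))⁻¹ * (c n * Y n ω + S n ^ α) + t (n + 1) := by
      have hk' : (μ[Y (n + 1)|ℱ n]) ω ≤ c n * Y n ω + S n ^ α := hkω
      nlinarith [inv_nonneg.2 hb1n.le]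
    show (b (n + 1))⁻¹ * (μ[Y (n + 1)|ℱ n]) ω + t (n + 1) ≤ Y n ω / b n + t n
    rw [htrec n]
    calc (b (n + 1))⁻¹ * (μ[Y (n + 1)|ℱ n]) ω + t (n + 1)
        ≤ (b (n + 1))⁻¹ * (c n * Y n ω + S n ^ α) + t (n + 1) := hstep
      _ = Y n ω / b n + (g n + t (n + 1)) := by rw [e2]; ring
  -- a.s. convergence of Y
  have hbmono : Monotone b := monotone_nat_of_le_succ fun n => by
    rw [hbsucc n]; nlinarith [hc1 n, hb1 n]
  have hcle : ∀ k, c k ≤ Real.exp (max (a k - 1) 0) := by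
    intro k
    have h1 : c k - 1 + 1 ≤ Real.exp (c k - 1) := Real.add_one_le_exp _
    have h2 : c k - 1 = max (a k - 1) 0 := by
      simp only [hc_def]
      rcases le_total (a k) 1 with h | h
      · rw [max_eq_right h, max_eq_right (by linarith)]; ring
      · rw [max_eq_left h, max_eq_left (by linarith)]
    rw [← h2]; linarith
  have hbB : ∀ n, b n ≤ Real.exp T := by
    intro n
    have h1 : b n ≤ ∏ k ∈ Finset.range n, Real.exp (max (a k - 1) 0) :=
      Finset.prod_le_prod (fun k _ => le_trans zero_le_one (hc1 k)) fun k _ => hcle k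
    rw [← Real.exp_sum] at h1
    refine h1.trans (Real.exp_le_exp.2 ?_)
    exact Summable.sum_le_tsum _ (fun k _ => le_max_right _ _) hpos_sum
  have hmain : ∀ᵐ ω ∂μ, (∀ n, 0 < X n ω) ∧ ∃ L, Tendsto (fun n => Y n ω) atTop (𝓝 L) := by
    have hMneg : Submartingale (-M) ℱ μ := hMsuper.neg
    have hbd : ∀ n, eLpNorm ((-M) n) 1 μ ≤ ENNReal.ofReal (∫ ω, M 0 ω ∂μ) := by
      intro n
      rw [show (-M) n = -(M n) from rfl, eLpNorm_neg]
      have hM0n : 0 ≤ᵐ[μ] M n := by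
        filter_upwards [hY0] with ω h0
        exact add_nonneg (div_nonneg (h0 n) (hbpos n).le) (ht0 n)
      have heq : eLpNorm (M n) 1 μ = ENNReal.ofReal (∫ ω, M n ω ∂μ) := by
        rw [eLpNorm_one_eq_lintegral_enorm, ofReal_integral_eq_lintegral_ofReal (hMint n) hM0n]
        refine lintegral_congr_ae ?_
        filter_upwards [hM0n] with ω h
        exact Real.enorm_eq_ofReal h
      rw [heq]
      refine ENNReal.ofReal_le_ofReal ?_
      calc ∫ ω, M n ω ∂μ = ∫ ω, (μ[M n|ℱ 0]) ω ∂μ := (integral_condExp (ℱ.le 0)).symm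
        _ ≤ ∫ ω, M 0 ω ∂μ :=
            integral_mono_ae integrable_condExp (hMint 0) (hMsuper.2.1 0 n (Nat.zero_le n))
    have hconv := hMneg.exists_ae_tendsto_of_bdd hbd
    obtain ⟨bl, hbl⟩ : ∃ bl, Tendsto b atTop (𝓝 bl) := by
      rcases tendsto_of_monotone hbmono with h | h
      · exfalso
        obtain ⟨n, hn⟩ := (h.eventually_gt_atTop (Real.exp T)).exists
        exact absurd (hbB n) (not_le.2 hn)
      · exact h
    filter_upwards [hE, hconv] with ω hω hc
    obtain ⟨L0, hL0⟩ := hc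
    refine ⟨fun n => hXpos ω hω n, bl * (-L0 - 0), ?_⟩
    have hMt : Tendsto (fun n => M n ω) atTop (𝓝 (-L0)) := by
      have h' := hL0.neg
      simp only [Pi.neg_apply, neg_neg] at h'
      exact h'
    have hprod : Tendsto (fun n => b n * (M n ω - t n)) atTop (𝓝 (bl * (-L0 - 0))) :=
      hbl.mul (hMt.sub httends)
    refine hprod.congr fun n => ?_
    simp only [hM_def]
    rw [add_sub_cancel_right, mul_div_cancel₀ _ (hbpos n).ne']
  constructor
  · -- part 1
    filter_upwards [hmain] with ω hω
    obtain ⟨hp, L, hL⟩ := hω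
    refine ⟨L ^ α⁻¹, ?_⟩
    have hcont := (Real.continuousAt_rpow_const L α⁻¹
      (Or.inr (inv_pos.2 hα0).le)).tendsto.comp hL
    refine hcont.congr fun n => ?_
    simp only [Function.comp_apply, hY_def]
    exact Real.rpow_rpow_inv (hp n).le hα0.ne'
  · -- part 2
    intro htend
    have hInonneg : ∀ n, (0:ℝ) ≤ ∫ ω, Y n ω ∂μ := fun n =>
      integral_nonneg_of_ae (hY0.mono fun ω h => h n)
    have hI : ∀ n, ∫ ω, Y (n + 1) ω ∂μ ≤ a n * ∫ ω, Y n ω ∂μ + S n ^ α := by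
      intro n
      have h1 : ∫ ω, Y (n + 1) ω ∂μ ≤ ∫ ω, (Y n ω * (1 + ξ (n + 1) ω) ^ α + S n ^ α) ∂μ :=
        integral_mono_ae (hYint (n + 1)) ((hprodint n).add (integrable_const _)) (hYle n)
      rw [integral_add (hprodint n) (integrable_const _), integral_const] at h1
      have h2 : ∫ ω, Y n ω * (1 + ξ (n + 1) ω) ^ α ∂μ
          = (∫ ω, Y n ω ∂μ) * ∫ ω, (1 + ξ (n + 1) ω) ^ α ∂μ :=
        (hYW n).integral_mul_eq_mul_integral (hYint n).1 (hint (n + 1)).1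
      rw [h2] at h1
      simp only [probReal_univ, one_smul] at h1
      calc ∫ ω, Y (n + 1) ω ∂μ ≤ (∫ ω, Y n ω ∂μ) * a n + S n ^ α := h1
        _ = a n * ∫ ω, Y n ω ∂μ + S n ^ α := by ring
    have hIbound : ∀ m n, m ≤ n → ∫ ω, Y n ω ∂μ ≤
        (∏ k ∈ Finset.Ico m n, a k) * ∫ ω, Y m ω ∂μ +
        ∑ k ∈ Finset.Ico m n, (∏ j ∈ Finset.Ico (k + 1) n, a j) * S k ^ α := by
      intro m n hmn
      induction n, hmn using Nat.le_induction with
      | base => simp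
      | succ n hmn ih =>
          have hsum_eq : ∑ k ∈ Finset.Ico m (n + 1),
                (∏ j ∈ Finset.Ico (k + 1) (n + 1), a j) * S k ^ α
              = a n * ∑ k ∈ Finset.Ico m n, (∏ j ∈ Finset.Ico (k + 1) n, a j) * S k ^ α
                + S n ^ α := by
            rw [Finset.sum_Ico_succ_top hmn, Finset.mul_sum]
            congr 1
            · refine Finset.sum_congr rfl fun k hk => ?_
              have hk' : k + 1 ≤ n := (Finset.mem_Ico.1 hk).2
              rw [Finset.prod_Ico_succ_top hk']
              ring
            · simp
          calc ∫ ω, Y (n + 1) ω ∂μ ≤ a n * ∫ ω, Y n ω ∂μ + S n ^ α := hI n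
            _ ≤ a n * ((∏ k ∈ Finset.Ico m n, a k) * ∫ ω, Y m ω ∂μ +
                ∑ k ∈ Finset.Ico m n, (∏ j ∈ Finset.Ico (k + 1) n, a j) * S k ^ α) + S n ^ α := by
                nlinarith [hanonneg n, ih]
            _ = (∏ k ∈ Finset.Ico m (n + 1), a k) * ∫ ω, Y m ω ∂μ +
                ∑ k ∈ Finset.Ico m (n + 1),
                  (∏ j ∈ Finset.Ico (k + 1) (n + 1), a j) * S k ^ α := by
                rw [Finset.prod_Ico_succ_top hmn, hsum_eq]
                ring
    have hprod_le_exp : ∀ p q : ℕ, (∏ k ∈ Finset.Ico p q, a k)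
        ≤ Real.exp (∑ k ∈ Finset.Ico p q, (a k - 1)) := by
      intro p q
      rw [Real.exp_sum]
      refine Finset.prod_le_prod (fun k _ => hanonneg k) fun k _ => ?_
      have := Real.add_one_le_exp (a k - 1)
      linarith
    have hprod_le_T : ∀ p q : ℕ, (∏ k ∈ Finset.Ico p q, a k) ≤ Real.exp T := by
      intro p q
      refine (hprod_le_exp p q).trans (Real.exp_le_exp.2 ?_)
      calc ∑ k ∈ Finset.Ico p q, (a k - 1) ≤ ∑ k ∈ Finset.Ico p q, max (a k - 1) 0 :=
            Finset.sum_le_sum fun k _ => le_max_left _ _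
        _ ≤ T := Summable.sum_le_tsum _ (fun k _ => le_max_right _ _) hpos_sum
    have hIbound2 : ∀ m n, m ≤ n → ∫ ω, Y n ω ∂μ ≤
        (∏ k ∈ Finset.Ico m n, a k) * ∫ ω, Y m ω ∂μ
          + Real.exp T * ∑' k, S (k + m) ^ α := by
      intro m n hmn
      have h1 : ∑ k ∈ Finset.Ico m n, (∏ j ∈ Finset.Ico (k + 1) n, a j) * S k ^ α
          ≤ Real.exp T * ∑ k ∈ Finset.Ico m n, S k ^ α := by
        rw [Finset.mul_sum]
        exact Finset.sum_le_sum fun k _ =>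
          mul_le_mul_of_nonneg_right (hprod_le_T _ _) (hSα k)
      have hsmm : Summable fun k => S (k + m) ^ α := (summable_nat_add_iff m).2 hS_sum
      have h2 : ∑ k ∈ Finset.Ico m n, S k ^ α ≤ ∑' k, S (k + m) ^ α := by
        rw [Finset.sum_Ico_eq_sum_range]
        calc ∑ k ∈ Finset.range (n - m), S (m + k) ^ α
            = ∑ k ∈ Finset.range (n - m), S (k + m) ^ α :=
              Finset.sum_congr rfl fun k _ => by rw [add_comm]
          _ ≤ ∑' k, S (k + m) ^ α := Summable.sum_le_tsum _ (fun k _ => hSα _) hsmm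
      have h3 := mul_le_mul_of_nonneg_left h2 (Real.exp_nonneg T)
      have h4 := hIbound m n hmn
      linarith
    have hItends : Tendsto (fun n => ∫ ω, Y n ω ∂μ) atTop (𝓝 0) := by
      refine Metric.tendsto_atTop.2 fun ε hε => ?_
      have htail : Tendsto (fun m => Real.exp T * ∑' k, S (k + m) ^ α) atTop (𝓝 0) := by
        have h := (tendsto_sum_nat_add fun j => S j ^ α).const_mul (Real.exp T)
        simpa using h
      obtain ⟨m, hm⟩ := (htail.eventually (gt_mem_nhds (half_pos hε))).exists
      have hsum_atBot : Tendsto (fun n => ∑ k ∈ Finset.Ico m n, (a k - 1)) atTop atBot := by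
        have hC : Tendsto (fun n => (∑ k ∈ Finset.range n, min (a k - 1) 0) +
            (T - ∑ k ∈ Finset.range m, (a k - 1))) atTop atBot :=
          tendsto_atBot_add_const_right _ _ htend
        refine tendsto_atBot_mono' atTop ?_ hC
        filter_upwards [eventually_ge_atTop m] with n hn
        rw [Finset.sum_Ico_eq_sub _ hn]
        have h1 : ∑ k ∈ Finset.range n, (a k - 1)
            ≤ T + ∑ k ∈ Finset.range n, min (a k - 1) 0 := by
          calc ∑ k ∈ Finset.range n, (a k - 1)
              = ∑ k ∈ Finset.range n, (max (a k - 1) 0 + min (a k - 1) 0) := by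
                refine Finset.sum_congr rfl fun k _ => ?_
                rcases le_total (a k - 1) 0 with h | h
                · rw [max_eq_right h, min_eq_left h]; ring
                · rw [max_eq_left h, min_eq_right h]; ring
            _ = (∑ k ∈ Finset.range n, max (a k - 1) 0)
                + ∑ k ∈ Finset.range n, min (a k - 1) 0 := Finset.sum_add_distrib
            _ ≤ T + ∑ k ∈ Finset.range n, min (a k - 1) 0 := by
                have := Summable.sum_le_tsum (Finset.range n) (fun k _ => le_max_right _ _) hpos_sum
                linarith
        linarith
      have hEtends : Tendsto (fun n => Real.exp (∑ k ∈ Finset.Ico m n, (a k - 1)))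
          atTop (𝓝 0) := Real.tendsto_exp_atBot.comp hsum_atBot
      have hfin : ∀ᶠ n in atTop,
          Real.exp (∑ k ∈ Finset.Ico m n, (a k - 1)) * ∫ ω, Y m ω ∂μ < ε / 2 := by
        have h := hEtends.mul_const (∫ ω, Y m ω ∂μ)
        rw [zero_mul] at h
        exact h.eventually (gt_mem_nhds (half_pos hε))
      have hev : ∀ᶠ n in atTop, dist (∫ ω, Y n ω ∂μ) 0 < ε := by
        filter_upwards [hfin, eventually_ge_atTop m] with n h1 h2
        have hb2 := hIbound2 m n h2
        have hprodle : (∏ k ∈ Finset.Ico m n, a k) * ∫ ω, Y m ω ∂μ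
            ≤ Real.exp (∑ k ∈ Finset.Ico m n, (a k - 1)) * ∫ ω, Y m ω ∂μ :=
          mul_le_mul_of_nonneg_right (hprod_le_exp m n) (hInonneg m)
        rw [Real.dist_eq, sub_zero, abs_of_nonneg (hInonneg n)]
        linarith
      exact eventually_atTop.1 hev
    have hliminf : ∀ᵐ ω ∂μ, liminf (fun n => ENNReal.ofReal (Y n ω)) atTop = 0 := by
      have hmeas : ∀ n, Measurable fun ω => ENNReal.ofReal (Y n ω) := fun n =>
        ENNReal.measurable_ofReal.comp (hYmeas n).measurable
      have hle : ∫⁻ ω, liminf (fun n => ENNReal.ofReal (Y n ω)) atTop ∂μ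
          ≤ liminf (fun n => ∫⁻ ω, ENNReal.ofReal (Y n ω) ∂μ) atTop :=
        lintegral_liminf_le hmeas
      have heq : ∀ n, ∫⁻ ω, ENNReal.ofReal (Y n ω) ∂μ = ENNReal.ofReal (∫ ω, Y n ω ∂μ) :=
        fun n => (ofReal_integral_eq_lintegral_ofReal (hYint n)
          (hY0.mono fun ω h => h n)).symm
      have htend0 : Tendsto (fun n => ∫⁻ ω, ENNReal.ofReal (Y n ω) ∂μ) atTop (𝓝 0) := by
        simp_rw [heq]
        have h := (ENNReal.continuous_ofReal.tendsto 0).comp hItends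
        simpa [Function.comp_def] using h
      rw [htend0.liminf_eq] at hle
      have hzero : ∫⁻ ω, liminf (fun n => ENNReal.ofReal (Y n ω)) atTop ∂μ = 0 :=
        le_antisymm hle zero_le
      have := (lintegral_eq_zero_iff (Measurable.liminf hmeas)).1 hzero
      filter_upwards [this] with ω h
      exact h
    filter_upwards [hmain, hliminf] with ω hω hl0
    obtain ⟨hp, L, hL⟩ := hω
    have hofL : Tendsto (fun n => ENNReal.ofReal (Y n ω)) atTop (𝓝 (ENNReal.ofReal L)) :=
      (ENNReal.continuous_ofReal.tendsto L).comp hL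
    have hLle : ENNReal.ofReal L = 0 := by rw [← hofL.liminf_eq]; exact hl0
    have hL0 : L = 0 := by
      have h1 : L ≤ 0 := ENNReal.ofReal_eq_zero.1 hLle
      have h2 : 0 ≤ L := ge_of_tendsto' hL fun n => Real.rpow_nonneg (hp n).le α
      linarith
    rw [hL0] at hL
    have hcont := (Real.continuousAt_rpow_const 0 α⁻¹
      (Or.inr (inv_pos.2 hα0).le)).tendsto.comp hL
    rw [Real.zero_rpow (inv_ne_zero hα0.ne')] at hcont
    refine hcont.congr fun n => ?_
    simp only [Function.comp_apply, hY_def]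
    exact Real.rpow_rpow_inv (hp n).le hα0.ne'
end

section
/- Let ξ_n (n ≥ 1) be independent random variables with 1 + ξ_n > 0 a.s., let S_n > 0 be non-random, X_0 > 0, and X_{n+1} = X_n(1 + ξ_{n+1}) + S_n. Suppose there exists α > 1 such that Σ_n [E(1+ξ_{n+1})^α − 1]^+ < ∞, Σ_n S_n^α / |1 − E(1+ξ_{n+1})^α|^{α−1} < ∞, and Σ_n [E(1+ξ_{n+1})^α − 1]^− = −∞. Then X_n → 0 a.s. -/
open MeasureTheory ProbabilityTheory Filter
open scoped ENNReal NNReal Topology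


lemma aux_rpow_add_le_s11 {α : ℝ} (hα : 1 < α) {θ a b : ℝ} (hθ0 : 0 < θ) (hθ1 : θ < 1)
    (ha : 0 ≤ a) (hb : 0 ≤ b) :
    (a + b) ^ α ≤ θ ^ (1 - α) * a ^ α + (1 - θ) ^ (1 - α) * b ^ α := by
  have h1θ : 0 < 1 - θ := by linarith
  have hcx := convexOn_rpow hα.le
  have hx : a / θ ∈ Set.Ici (0:ℝ) := Set.mem_Ici.2 (div_nonneg ha hθ0.le)
  have hy : b / (1 - θ) ∈ Set.Ici (0:ℝ) := Set.mem_Ici.2 (div_nonneg hb h1θ.le)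
  have key := hcx.2 hx hy hθ0.le h1θ.le (by ring)
  simp only [smul_eq_mul] at key
  have hxa : θ * (a / θ) + (1 - θ) * (b / (1 - θ)) = a + b := by
    field_simp
  rw [hxa] at key
  refine key.trans (le_of_eq ?_)
  have e1 : θ * (a / θ) ^ α = θ ^ (1 - α) * a ^ α := by
    rw [Real.div_rpow ha hθ0.le, Real.rpow_sub hθ0, Real.rpow_one]
    field_simp
  have e2 : (1 - θ) * (b / (1 - θ)) ^ α = (1 - θ) ^ (1 - α) * b ^ α := by
    rw [Real.div_rpow hb h1θ.le, Real.rpow_sub h1θ, Real.rpow_one]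
    field_simp
  rw [e1, e2]

lemma aux_one_sub_rpow {α M δ : ℝ} (hα : 1 < α) (hM : M = max (α - 1) 1)
    (hδ0 : 0 ≤ δ) (hδ : δ ≤ 1 / (2 * M)) :
    (1 - δ) ^ (1 - α) ≤ 1 + 2 * M * δ := by
  have hM1 : 1 ≤ M := hM ▸ le_max_right _ _
  have hMp : (0:ℝ) < M := by linarith
  have hMα : α - 1 ≤ M := hM ▸ le_max_left _ _
  have hMδ : M * δ ≤ 1 / 2 := by
    calc M * δ ≤ M * (1 / (2 * M)) := by nlinarith
    _ = 1 / 2 := by field_simp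
  have hδhalf : δ ≤ 1 / 2 := by nlinarith
  have h1δ : 0 < 1 - δ := by linarith
  -- Step 1 : (1-δ)^(α-1) ≥ 1 - M δ
  have step1 : 1 - M * δ ≤ (1 - δ) ^ (α - 1) := by
    rcases le_or_gt 1 (α - 1) with hp | hp
    · have hber := one_add_mul_self_le_rpow_one_add (s := -δ) (by linarith : (-1:ℝ) ≤ -δ) hp
      have he : (1 : ℝ) + -δ = 1 - δ := by ring
      rw [he] at hber
      nlinarith [hber, mul_nonneg hδ0 (by linarith : (0:ℝ) ≤ M - (α - 1))]
    · have h1 : (1 - δ) ^ (1:ℝ) ≤ (1 - δ) ^ (α - 1) :=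
        Real.rpow_le_rpow_of_exponent_ge h1δ (by linarith) hp.le
      rw [Real.rpow_one] at h1
      have : 1 - M * δ ≤ 1 - δ := by nlinarith
      linarith
  have hpow_pos : 0 < (1 - δ) ^ (α - 1) := Real.rpow_pos_of_pos h1δ _
  have h1Mδ : 0 < 1 - M * δ ∨ 1 - M * δ ≤ 0 := by rcases lt_or_ge 0 (1 - M*δ) with h|h
                                                  exacts [Or.inl h, Or.inr h]
  have key : ((1 - δ) ^ (α - 1))⁻¹ ≤ 1 + 2 * M * δ := by
    rcases lt_or_ge (1 - M * δ) ((1-δ)^(α-1)) with _ | _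
    all_goals {
      have hlow : 1 - M * δ ≤ (1 - δ) ^ (α - 1) := step1
      have h1Mδpos : 0 < 1 - M * δ := by nlinarith
      have hinv : ((1 - δ) ^ (α - 1))⁻¹ ≤ (1 - M * δ)⁻¹ := by
        exact inv_anti₀ h1Mδpos hlow
      refine hinv.trans ?_
      rw [inv_eq_one_div, div_le_iff₀ h1Mδpos]
      nlinarith [mul_nonneg hMp.le hδ0]
    }
  have heq : (1 - δ) ^ (1 - α) = ((1 - δ) ^ (α - 1))⁻¹ := by
    rw [show (1 - α) = -(α - 1) by ring, Real.rpow_neg h1δ.le]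
  rw [heq]
  exact key

lemma aux_integral_pos {Ω : Type*} [MeasurableSpace Ω] (μ : Measure Ω) [IsProbabilityMeasure μ]
    {f : Ω → ℝ} (hf : Integrable f μ) (h : ∀ᵐ ω ∂μ, 0 < f ω) : 0 < ∫ ω, f ω ∂μ := by
  rw [integral_pos_iff_support_of_nonneg_ae (h.mono fun ω hω => hω.le) hf]
  have hmem : ∀ᵐ ω ∂μ, ω ∈ Function.support f := h.mono fun ω hω => ne_of_gt hω
  have h0 : μ (Function.support f)ᶜ = 0 := by
    rw [Set.compl_def]
    exact ae_iff.mp hmem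
  by_contra hc
  push_neg at hc
  have hc0 : μ (Function.support f) = 0 := le_antisymm hc zero_le
  have : (1:ℝ≥0∞) = μ Set.univ := (measure_univ).symm
  rw [← Set.union_compl_self (Function.support f)] at this
  have := this.trans_le (measure_union_le _ _)
  rw [hc0, h0] at this
  simp at this


set_option maxHeartbeats 2000000 in
theorem linear_nonhomogeneous_alpha_gt_one
    {Ω : Type*} [MeasurableSpace Ω] (μ : Measure Ω) [IsProbabilityMeasure μ]
    (ξ : ℕ → Ω → ℝ) (hξ_meas : ∀ n, Measurable (ξ n))
    (hξ_indep : iIndepFun ξ μ)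
    (hξ_pos : ∀ n, ∀ᵐ ω ∂μ, 0 < 1 + ξ n ω)
    (S : ℕ → ℝ) (hS : ∀ n, 0 < S n)
    (X : ℕ → Ω → ℝ) (X₀ : ℝ) (hX₀ : 0 < X₀) (hX0 : ∀ ω, X 0 ω = X₀)
    (hrec : ∀ n ω, X (n + 1) ω = X n ω * (1 + ξ (n + 1) ω) + S n)
    (α : ℝ) (hα : 1 < α)
    (hint : ∀ n, Integrable (fun ω => (1 + ξ n ω) ^ α) μ)
    (hne : ∀ n, (∫ ω, (1 + ξ (n + 1) ω) ^ α ∂μ) ≠ 1)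
    (hpos_sum : Summable fun n => max ((∫ ω, (1 + ξ (n + 1) ω) ^ α ∂μ) - 1) 0)
    (hS_sum : Summable fun n =>
      S n ^ α / |1 - ∫ ω, (1 + ξ (n + 1) ω) ^ α ∂μ| ^ (α - 1))
    (hneg_div : Tendsto (fun N => ∑ n ∈ Finset.range N,
        min ((∫ ω, (1 + ξ (n + 1) ω) ^ α ∂μ) - 1) 0) atTop atBot) :
    ∀ᵐ ω ∂μ, Tendsto (fun n => X n ω) atTop (nhds 0) := by
  classical
  have hα0 : (0:ℝ) < α := by linarith
  -- notation
  set G : ℕ → Ω → ℝ := fun n ω => (1 + ξ n ω) ^ α with hGdef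
  set em : ℕ → ℝ := fun n => ∫ ω, (1 + ξ (n + 1) ω) ^ α ∂μ with hemdef
  have hGpos : ∀ n, ∀ᵐ ω ∂μ, 0 < G n ω := fun n =>
    (hξ_pos n).mono fun ω h => Real.rpow_pos_of_pos h α
  have hem_pos : ∀ n, 0 < em n := fun n => aux_integral_pos μ (hint (n + 1)) (hGpos (n + 1))
  set B : ℝ := 1 + ∑' n, max (em n - 1) 0 with hBdef
  have hB1 : 1 ≤ B := le_add_of_nonneg_right (tsum_nonneg fun n => le_max_right _ _)
  have hem_le_B : ∀ n, em n ≤ B := by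
    intro n
    have h1 : max (em n - 1) 0 ≤ ∑' k, max (em k - 1) 0 :=
      Summable.le_tsum hpos_sum n fun j _ => le_max_right _ _
    have h2 : em n - 1 ≤ max (em n - 1) 0 := le_max_left _ _
    simp only [hBdef]; linarith
  set M : ℝ := max (α - 1) 1 with hMdef
  have hM1 : 1 ≤ M := le_max_right _ _
  have hMp : (0:ℝ) < M := by linarith
  have habs_pos : ∀ n, 0 < |1 - em n| := fun n => abs_pos.2 (sub_ne_zero.2 (hne n).symm)
  set dd : ℕ → ℝ := fun n => min (|1 - em n| / (4 * M * em n)) (1 / (2 * M)) with hdddef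
  have h4Mem : ∀ n, (0:ℝ) < 4 * M * em n := fun n =>
    mul_pos (by linarith : (0:ℝ) < 4 * M) (hem_pos n)
  have h4MB : (0:ℝ) < 4 * M * B :=
    mul_pos (by linarith : (0:ℝ) < 4 * M) (by linarith)
  have h2M : (0:ℝ) < 2 * M := by linarith
  have hdd_pos : ∀ n, 0 < dd n := fun n =>
    lt_min (div_pos (habs_pos n) (h4Mem n)) (by positivity)
  have hdd_le : ∀ n, dd n ≤ 1 / (2 * M) := fun n => min_le_right _ _
  have hdd_half : ∀ n, dd n ≤ 1 / 2 := by
    intro n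
    refine (hdd_le n).trans ?_
    rw [div_le_div_iff₀ (by positivity) (by norm_num)]
    nlinarith
  set tt : ℕ → ℝ := fun n => (1 - dd n) ^ (1 - α) with httdef
  set KK : ℕ → ℝ := fun n => (dd n) ^ (1 - α) with hKKdef
  set cc : ℕ → ℝ := fun n => KK n * S n ^ α with hccdef
  have htt_pos : ∀ n, 0 < tt n := fun n =>
    Real.rpow_pos_of_pos (by linarith [hdd_half n]) _
  have htt_le : ∀ n, tt n ≤ 1 + 2 * M * dd n := fun n =>
    aux_one_sub_rpow hα hMdef (hdd_pos n).le (hdd_le n)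
  set qq : ℕ → ℝ := fun n => tt n * em n with hqqdef
  have hqq_pos : ∀ n, 0 < qq n := fun n => mul_pos (htt_pos n) (hem_pos n)
  have hqq_le : ∀ n, qq n ≤ em n + |1 - em n| / 2 := by
    intro n
    have h1 : dd n * (4 * M * em n) ≤ |1 - em n| :=
      (le_div_iff₀ (h4Mem n)).1 (min_le_left _ _)
    have h2 : tt n * em n ≤ (1 + 2 * M * dd n) * em n :=
      mul_le_mul_of_nonneg_right (htt_le n) (hem_pos n).le
    have := hem_pos n
    simp only [hqqdef]
    nlinarith
  set u' : ℕ → ℝ := fun n => max (qq n - 1) 0 with hu'def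
  have hu'_nonneg : ∀ n, 0 ≤ u' n := fun n => le_max_right _ _
  have hu'_le : ∀ n, u' n ≤ (3/2) * max (em n - 1) 0 := by
    intro n
    rcases le_or_gt (em n) 1 with h | h
    · have habs : |1 - em n| = 1 - em n := abs_of_nonneg (by linarith)
      have : qq n ≤ 1 := by
        have := hqq_le n; rw [habs] at this; linarith
      simp only [hu'def]
      exact max_le (by linarith [le_max_right (em n - 1) (0:ℝ)])
        (by positivity)
    · have habs : |1 - em n| = em n - 1 := by
        rw [abs_of_nonpos (by linarith)]; ring
      have hq : qq n - 1 ≤ (3/2) * (em n - 1) := by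
        have := hqq_le n; rw [habs] at this; linarith
      have hmax : max (em n - 1) 0 = em n - 1 := max_eq_left (by linarith)
      simp only [hu'def, hmax]
      exact max_le hq (by nlinarith)
  have hu'_sum : Summable u' :=
    Summable.of_nonneg_of_le hu'_nonneg hu'_le (hpos_sum.mul_left _)
  set vv : ℕ → ℝ := fun n => max (1 - qq n) 0 with hvvdef
  have hvv_nonneg : ∀ n, 0 ≤ vv n := fun n => le_max_right _ _
  have hvv_ge : ∀ n, -(1/2) * min (em n - 1) 0 ≤ vv n := by
    intro n
    rcases le_or_gt (em n) 1 with h | h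
    · have habs : |1 - em n| = 1 - em n := abs_of_nonneg (by linarith)
      have hmin : min (em n - 1) 0 = em n - 1 := min_eq_left (by linarith)
      have hq : qq n ≤ em n + (1 - em n) / 2 := by
        have := hqq_le n; rw [habs] at this; linarith
      rw [hmin]
      refine le_trans (by linarith : -(1/2) * (em n - 1) ≤ 1 - qq n) (le_max_left _ _)
    · have hmin : min (em n - 1) 0 = 0 := min_eq_right (by linarith)
      rw [hmin]
      simpa using hvv_nonneg n
  have hvv_top : Tendsto (fun N => ∑ n ∈ Finset.range N, vv n) atTop atTop := by
    have h2 : Tendsto (fun N => -∑ n ∈ Finset.range N, min (em n - 1) 0) atTop atTop :=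
      tendsto_neg_atBot_atTop.comp hneg_div
    have h3 : Tendsto (fun N => (1/2) * -∑ n ∈ Finset.range N, min (em n - 1) 0)
        atTop atTop := h2.const_mul_atTop (by norm_num)
    refine tendsto_atTop_mono (fun N => ?_) h3
    rw [← Finset.sum_neg_distrib, Finset.mul_sum]
    exact Finset.sum_le_sum fun n _ => by
      have := hvv_ge n; linarith
  -- summability of cc
  have hS_nonneg : ∀ n, (0:ℝ) ≤ S n ^ α := fun n => Real.rpow_nonneg (hS n).le _
  have hcc_nonneg : ∀ n, 0 ≤ cc n := fun n =>
    mul_nonneg (Real.rpow_nonneg (hdd_pos n).le _) (hS_nonneg n)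
  have hcc_sum : Summable cc := by
    set Cst : ℝ := (4 * M * B) ^ (α - 1) with hCstdef
    have hbound : ∀ n, cc n ≤ Cst * (S n ^ α / |1 - em n| ^ (α - 1)) := by
      intro n
      have hdd_ge : |1 - em n| / (4 * M * B) ≤ dd n := by
        refine le_min ?_ ?_
        · exact div_le_div_of_nonneg_left (abs_nonneg _) (h4Mem n)
            (by nlinarith [hem_le_B n, hem_pos n])
        · rw [div_le_div_iff₀ h4MB h2M]
          have habs_le : |1 - em n| ≤ 2 * B := by
            rw [abs_le]
            constructor <;> nlinarith [hem_pos n, hem_le_B n]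
          nlinarith
      have h1 : (|1 - em n| / (4 * M * B)) ^ (α - 1) ≤ (dd n) ^ (α - 1) :=
        Real.rpow_le_rpow (div_nonneg (abs_nonneg _) h4MB.le) hdd_ge (by linarith)
      have hKKeq : KK n = ((dd n) ^ (α - 1))⁻¹ := by
        simp only [hKKdef]
        rw [show (1 - α) = -(α - 1) by ring, Real.rpow_neg (hdd_pos n).le]
      have h2 : KK n ≤ ((|1 - em n| / (4 * M * B)) ^ (α - 1))⁻¹ := by
        rw [hKKeq]
        exact inv_anti₀ (Real.rpow_pos_of_pos (div_pos (habs_pos n) h4MB) _) h1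
      have h3 : ((|1 - em n| / (4 * M * B)) ^ (α - 1))⁻¹
          = Cst / |1 - em n| ^ (α - 1) := by
        rw [Real.div_rpow (abs_nonneg _) h4MB.le, inv_div]
      rw [h3] at h2
      calc cc n = KK n * S n ^ α := rfl
        _ ≤ (Cst / |1 - em n| ^ (α - 1)) * S n ^ α :=
            mul_le_mul_of_nonneg_right h2 (hS_nonneg n)
        _ = Cst * (S n ^ α / |1 - em n| ^ (α - 1)) := by ring
    exact Summable.of_nonneg_of_le hcc_nonneg hbound (hS_sum.mul_left Cst)
  -- Part B: filtration and measurability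
  have hsm : ∀ i, StronglyMeasurable (ξ i) := fun i => (hξ_meas i).stronglyMeasurable
  set ℱ := MeasureTheory.Filtration.natural ξ hsm with hFdef
  have hXm : ∀ n, StronglyMeasurable[ℱ n] (X n) := by
    intro n
    induction n with
    | zero =>
      have hX0' : X 0 = fun _ => X₀ := funext hX0
      rw [hX0']; exact stronglyMeasurable_const
    | succ n ih =>
      have hXrec : X (n + 1) = fun ω => X n ω * (1 + ξ (n + 1) ω) + S n :=
        funext (hrec n)
      rw [hXrec]
      have hξm : StronglyMeasurable[ℱ (n + 1)] (ξ (n + 1)) :=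
        Filtration.stronglyAdapted_natural hsm (n + 1)
      exact ((ih.mono (ℱ.mono (Nat.le_succ n))).mul
        (stronglyMeasurable_const.add hξm)).add stronglyMeasurable_const
  set Z : ℕ → Ω → ℝ := fun n ω => X n ω ^ α with hZdef
  have hrpow_cont : Continuous (fun x : ℝ => x ^ α) := Real.continuous_rpow_const hα0.le
  have hZm : ∀ n, StronglyMeasurable[ℱ n] (Z n) := fun n =>
    hrpow_cont.comp_stronglyMeasurable (hXm n)
  have hZmeas : ∀ n, Measurable (Z n) := fun n => ((hZm n).mono (ℱ.le n)).measurable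
  have hZaesm : ∀ n, AEStronglyMeasurable (Z n) μ := fun n => (hZmeas n).aestronglyMeasurable
  have hGsm : ∀ n, StronglyMeasurable[MeasurableSpace.comap (ξ n) inferInstance] (G n) :=
    fun n => hrpow_cont.comp_stronglyMeasurable
      (stronglyMeasurable_const.add (comap_measurable (ξ n)).stronglyMeasurable)
  have hIndep : ∀ n, Indep (MeasurableSpace.comap (ξ (n + 1)) inferInstance) (ℱ n) μ :=
    fun n => hξ_indep.indep_comap_natural_of_lt hsm (Nat.lt_succ_self n)
  have hIndepF : ∀ n, IndepFun (Z n) (G (n + 1)) μ := by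
    intro n
    have h1 := (hIndep n).symm
    have h2 := indep_of_indep_of_le_left h1 ((hZm n).measurable.comap_le)
    exact indep_of_indep_of_le_right h2 ((hGsm (n + 1)).measurable.comap_le)
  -- a.e. positivity
  have hξall : ∀ᵐ ω ∂μ, ∀ k, 0 < 1 + ξ k ω := ae_all_iff.2 hξ_pos
  have hXpos : ∀ᵐ ω ∂μ, ∀ k, 0 < X k ω := by
    filter_upwards [hξall] with ω hω
    intro k
    induction k with
    | zero => rw [hX0]; exact hX₀
    | succ k ih =>
      rw [hrec]
      exact add_pos (mul_pos ih (hω (k + 1))) (hS k)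
  -- pointwise recursion inequality
  have hθ0 : ∀ n, (0:ℝ) < 1 - dd n := fun n => by linarith [hdd_half n]
  have hθ1 : ∀ n, 1 - dd n < 1 := fun n => by linarith [hdd_pos n]
  have hZrec : ∀ n, ∀ᵐ ω ∂μ, Z (n + 1) ω ≤ tt n * (Z n ω * G (n + 1) ω) + cc n := by
    intro n
    filter_upwards [hξall, hXpos] with ω h1 h2
    have hXn : 0 ≤ X n ω := (h2 n).le
    have hxi : 0 ≤ 1 + ξ (n + 1) ω := (h1 (n + 1)).le
    have key := aux_rpow_add_le_s11 hα (hθ0 n) (hθ1 n) (mul_nonneg hXn hxi) (hS n).le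
    rw [show (1:ℝ) - (1 - dd n) = dd n by ring] at key
    calc Z (n + 1) ω = (X n ω * (1 + ξ (n + 1) ω) + S n) ^ α := by
            show X (n + 1) ω ^ α = _
            rw [hrec]
      _ ≤ (1 - dd n) ^ (1 - α) * (X n ω * (1 + ξ (n + 1) ω)) ^ α
            + (dd n) ^ (1 - α) * S n ^ α := key
      _ = tt n * (Z n ω * G (n + 1) ω) + cc n := by
            rw [Real.mul_rpow hXn hxi]
  -- integrability of Z n
  have hZint : ∀ n, Integrable (Z n) μ := by
    intro n
    induction n with
    | zero =>
      have : Z 0 = fun _ => X₀ ^ α := funext fun ω => by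
        show X 0 ω ^ α = _
        rw [hX0]
      rw [this]; exact integrable_const _
    | succ n ih =>
      have hZG : Integrable (fun ω => Z n ω * G (n + 1) ω) μ :=
        (hIndepF n).integrable_mul ih (hint (n + 1))
      refine Integrable.mono' ((hZG.const_mul (tt n)).add (integrable_const (cc n)))
        (hZaesm (n + 1)) ?_
      filter_upwards [hZrec n, hXpos] with ω hb hp
      rw [Real.norm_of_nonneg (Real.rpow_nonneg (hp (n + 1)).le α)]
      exact hb
  have hZGint : ∀ n, Integrable (fun ω => Z n ω * G (n + 1) ω) μ := fun n =>
    (hIndepF n).integrable_mul (hZint n) (hint (n + 1))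
  -- conditional expectation inequality
  have hRHSint : ∀ n, Integrable (fun ω => tt n * (Z n ω * G (n + 1) ω) + cc n) μ :=
    fun n => ((hZGint n).const_mul (tt n)).add (integrable_const _)
  have hcond : ∀ n, μ[Z (n + 1)|ℱ n] ≤ᵐ[μ] fun ω => qq n * Z n ω + cc n := by
    intro n
    have h1 : μ[Z (n + 1)|ℱ n]
        ≤ᵐ[μ] μ[fun ω => tt n * (Z n ω * G (n + 1) ω) + cc n|ℱ n] :=
      condExp_mono (hZint (n + 1)) (hRHSint n) (hZrec n)
    have hdecomp : (fun ω => tt n * (Z n ω * G (n + 1) ω) + cc n)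
        = (tt n • (Z n * G (n + 1))) + (fun _ => cc n) := rfl
    have h2 : μ[fun ω => tt n * (Z n ω * G (n + 1) ω) + cc n|ℱ n]
        =ᵐ[μ] μ[tt n • (Z n * G (n + 1))|ℱ n] + μ[(fun _ => cc n : Ω → ℝ)|ℱ n] := by
      rw [hdecomp]
      exact condExp_add ((hZGint n).smul (tt n)) (integrable_const _) _
    have h3 : μ[tt n • (Z n * G (n + 1))|ℱ n] =ᵐ[μ] tt n • μ[Z n * G (n + 1)|ℱ n] :=
      condExp_smul (tt n) (Z n * G (n + 1)) _
    have h4 : μ[Z n * G (n + 1)|ℱ n] =ᵐ[μ] Z n * μ[G (n + 1)|ℱ n] :=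
      condExp_mul_of_stronglyMeasurable_left (hZm n) (hZGint n) (hint (n + 1))
    have h5 : μ[G (n + 1)|ℱ n] =ᵐ[μ] fun _ => em n :=
      condExp_indep_eq ((hξ_meas (n + 1)).comap_le) (ℱ.le n) (hGsm (n + 1)) (hIndep n)
    have hconst : μ[(fun _ => cc n : Ω → ℝ)|ℱ n] = fun _ => cc n :=
      condExp_const (ℱ.le n) (cc n)
    refine h1.trans (EventuallyEq.le ?_)
    calc μ[fun ω => tt n * (Z n ω * G (n + 1) ω) + cc n|ℱ n]
        =ᵐ[μ] μ[tt n • (Z n * G (n + 1))|ℱ n] + μ[(fun _ => cc n : Ω → ℝ)|ℱ n] := h2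
      _ =ᵐ[μ] fun ω => qq n * Z n ω + cc n := by
          rw [hconst]
          filter_upwards [h3, h4.mono fun ω h => h, h5] with ω e3 e4 e5
          rw [Pi.add_apply, e3, Pi.smul_apply, smul_eq_mul, e4, Pi.mul_apply, e5]
          simp only [hqqdef]
          ring
  -- Part C: expectation recursion and bounds
  set an : ℕ → ℝ := fun n => ∫ ω, Z n ω ∂μ with handef
  have hZnn : ∀ n, ∀ᵐ ω ∂μ, 0 ≤ Z n ω := fun n =>
    hXpos.mono fun ω h => Real.rpow_nonneg (h n).le α
  have han_nonneg : ∀ n, 0 ≤ an n := fun n => integral_nonneg_of_ae (hZnn n)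
  have hRHS'int : ∀ n, Integrable (fun ω => qq n * Z n ω + cc n) μ :=
    fun n => ((hZint n).const_mul _).add (integrable_const _)
  have han_rec : ∀ n, an (n + 1) ≤ qq n * an n + cc n := by
    intro n
    calc an (n + 1) = ∫ ω, (μ[Z (n + 1)|ℱ n]) ω ∂μ :=
          (integral_condExp (ℱ.le n)).symm
      _ ≤ ∫ ω, (qq n * Z n ω + cc n) ∂μ :=
          integral_mono_ae integrable_condExp (hRHS'int n) (hcond n)
      _ = qq n * an n + cc n := by
          rw [integral_add ((hZint n).const_mul _) (integrable_const _),
            integral_const_mul, integral_const]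
          simp [handef]
  set AA : ℕ → ℝ := fun n => ∏ k ∈ Finset.range n, max (qq k) 1 with hAAdef
  have hAA0 : AA 0 = 1 := by simp [hAAdef]
  have hAA_succ : ∀ n, AA (n + 1) = AA n * max (qq n) 1 := by
    intro n; simp only [hAAdef]; exact Finset.prod_range_succ _ n
  have hAA_ge1 : ∀ n, 1 ≤ AA n := by
    intro n
    induction n with
    | zero => rw [hAA0]
    | succ n ih =>
      rw [hAA_succ]
      nlinarith [le_max_right (qq n) (1:ℝ)]
  have hAA_pos : ∀ n, 0 < AA n := fun n => lt_of_lt_of_le zero_lt_one (hAA_ge1 n)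
  have hAA_mono : Monotone AA := by
    apply monotone_nat_of_le_succ
    intro n
    rw [hAA_succ]
    nlinarith [hAA_pos n, le_max_right (qq n) (1:ℝ)]
  set Tu : ℝ := ∑' k, u' k with hTudef
  have hTu_nonneg : 0 ≤ Tu := tsum_nonneg hu'_nonneg
  set Abd : ℝ := Real.exp Tu with hAbddef
  have hAbd_pos : 0 < Abd := Real.exp_pos _
  have hAA_bd : ∀ n, AA n ≤ Abd := by
    intro n
    have h1 : AA n ≤ ∏ k ∈ Finset.range n, Real.exp (u' k) := by
      simp only [hAAdef]
      refine Finset.prod_le_prod (fun k _ => le_trans zero_le_one (le_max_right _ _)) ?_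
      intro k _
      refine max_le ?_ (Real.one_le_exp (hu'_nonneg k))
      have h2 : qq k ≤ 1 + u' k := by
        have := le_max_left (qq k - 1) (0:ℝ); simp only [hu'def]; linarith
      calc qq k ≤ 1 + u' k := h2
        _ ≤ Real.exp (u' k) := by linarith [Real.add_one_le_exp (u' k)]
    rw [← Real.exp_sum] at h1
    refine h1.trans (Real.exp_le_exp.2 ?_)
    exact Summable.sum_le_tsum _ (fun k _ => hu'_nonneg k) hu'_sum
  set Ct : ℝ := ∑' k, cc k with hCtdef
  have hCt_nonneg : 0 ≤ Ct := tsum_nonneg hcc_nonneg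
  have han_bd : ∀ n, an n ≤ AA n * (an 0 + ∑ k ∈ Finset.range n, cc k) := by
    intro n
    induction n with
    | zero => simp [hAA0]
    | succ n ih =>
      have h1 : an (n + 1) ≤ qq n * an n + cc n := han_rec n
      have h2 : qq n * an n ≤ max (qq n) 1 * an n :=
        mul_le_mul_of_nonneg_right (le_max_left _ _) (han_nonneg n)
      have h3 : max (qq n) 1 * an n
          ≤ max (qq n) 1 * (AA n * (an 0 + ∑ k ∈ Finset.range n, cc k)) :=
        mul_le_mul_of_nonneg_left ih (le_trans zero_le_one (le_max_right _ _))
      rw [Finset.sum_range_succ]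
      have h4 : AA (n+1) = AA n * max (qq n) 1 := hAA_succ n
      have h5 : 1 ≤ AA (n+1) := hAA_ge1 (n+1)
      have h6 : max (qq n) 1 * (AA n * (an 0 + ∑ k ∈ Finset.range n, cc k))
          = AA (n+1) * (an 0 + ∑ k ∈ Finset.range n, cc k) := by rw [h4]; ring
      have h7 : cc n ≤ AA (n+1) * cc n := le_mul_of_one_le_left (hcc_nonneg n) h5
      have h8 : AA (n+1) * (an 0 + (∑ k ∈ Finset.range n, cc k + cc n))
          = AA (n+1) * (an 0 + ∑ k ∈ Finset.range n, cc k) + AA (n+1) * cc n := by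
        ring
      linarith
  set aBd : ℝ := Abd * (an 0 + Ct) with haBddef
  have haBd_nonneg : 0 ≤ aBd := by
    have := han_nonneg 0; positivity
  have han_le_aBd : ∀ n, an n ≤ aBd := by
    intro n
    refine (han_bd n).trans ?_
    have hsum_le : ∑ k ∈ Finset.range n, cc k ≤ Ct :=
      Summable.sum_le_tsum _ (fun k _ => hcc_nonneg k) hcc_sum
    have h0 : 0 ≤ an 0 + ∑ k ∈ Finset.range n, cc k := by
      have := han_nonneg 0
      have : 0 ≤ ∑ k ∈ Finset.range n, cc k :=
        Finset.sum_nonneg fun k _ => hcc_nonneg k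
      linarith [han_nonneg 0]
    calc AA n * (an 0 + ∑ k ∈ Finset.range n, cc k)
        ≤ Abd * (an 0 + ∑ k ∈ Finset.range n, cc k) :=
          mul_le_mul_of_nonneg_right (hAA_bd n) h0
      _ ≤ Abd * (an 0 + Ct) := by
          refine mul_le_mul_of_nonneg_left ?_ hAbd_pos.le
          linarith
  set SB : ℝ := an 0 + Ct + aBd * Tu with hSBdef
  have hva_bd : ∀ N, ∑ n ∈ Finset.range N, vv n * an n ≤ SB := by
    intro N
    have hterm : ∀ n, vv n * an n ≤ (an n - an (n + 1)) + cc n + u' n * aBd := by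
      intro n
      have hvu : vv n = 1 - qq n + u' n := by
        rcases le_total (qq n) 1 with h | h
        · simp only [hvvdef, hu'def]
          rw [max_eq_left (by linarith), max_eq_right (by linarith)]
          ring
        · simp only [hvvdef, hu'def]
          rw [max_eq_right (by linarith), max_eq_left (by linarith)]
          ring
      have h1 := han_rec n
      have h2 : u' n * an n ≤ u' n * aBd :=
        mul_le_mul_of_nonneg_left (han_le_aBd n) (hu'_nonneg n)
      rw [hvu]
      nlinarith [han_nonneg n]
    calc ∑ n ∈ Finset.range N, vv n * an n
        ≤ ∑ n ∈ Finset.range N, ((an n - an (n + 1)) + cc n + u' n * aBd) :=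
          Finset.sum_le_sum fun n _ => hterm n
      _ = (an 0 - an N) + (∑ n ∈ Finset.range N, cc n)
            + (∑ n ∈ Finset.range N, u' n) * aBd := by
          rw [Finset.sum_add_distrib, Finset.sum_add_distrib,
            Finset.sum_range_sub', Finset.sum_mul]
      _ ≤ SB := by
          have h1 : ∑ n ∈ Finset.range N, cc n ≤ Ct :=
            Summable.sum_le_tsum _ (fun k _ => hcc_nonneg k) hcc_sum
          have h2 : (∑ n ∈ Finset.range N, u' n) * aBd ≤ Tu * aBd :=
            mul_le_mul_of_nonneg_right
              (Summable.sum_le_tsum _ (fun k _ => hu'_nonneg k) hu'_sum) haBd_nonneg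
          have := han_nonneg N
          simp only [hSBdef]
          nlinarith
  -- Part D: a.e. boundedness of partial sums of vv * Z
  have hvZ_int : ∀ n, Integrable (fun ω => vv n * Z n ω) μ := fun n => (hZint n).const_mul _
  have hvZ_nn : ∀ n, 0 ≤ᵐ[μ] fun ω => vv n * Z n ω := fun n =>
    (hZnn n).mono fun ω h => mul_nonneg (hvv_nonneg n) h
  have hofReal : ∀ n, ∫⁻ ω, ENNReal.ofReal (vv n * Z n ω) ∂μ = ENNReal.ofReal (vv n * an n) := by
    intro n
    rw [← ofReal_integral_eq_lintegral_ofReal (hvZ_int n) (hvZ_nn n)]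
    congr 1
    exact integral_const_mul _ _
  have hva_summable : Summable (fun n => vv n * an n) :=
    summable_of_sum_range_le (fun n => mul_nonneg (hvv_nonneg n) (han_nonneg n)) hva_bd
  have hvZmeas : ∀ n, Measurable fun ω => ENNReal.ofReal (vv n * Z n ω) := fun n =>
    ((hZmeas n).const_mul _).ennreal_ofReal
  have hlint : ∫⁻ ω, ∑' n, ENNReal.ofReal (vv n * Z n ω) ∂μ ≠ ⊤ := by
    rw [lintegral_tsum fun n => (hvZmeas n).aemeasurable]
    simp_rw [hofReal]
    rw [← ENNReal.ofReal_tsum_of_nonneg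
      (fun n => mul_nonneg (hvv_nonneg n) (han_nonneg n)) hva_summable]
    exact ENNReal.ofReal_ne_top
  have hae_sum : ∀ᵐ ω ∂μ, ∑' n, ENNReal.ofReal (vv n * Z n ω) < ⊤ :=
    ae_lt_top (Measurable.ennreal_tsum hvZmeas) hlint
  -- Part E: supermartingale
  set cA : ℕ → ℝ := fun n => cc n / AA (n + 1) with hcAdef
  have hcA_nonneg : ∀ n, 0 ≤ cA n := fun n => div_nonneg (hcc_nonneg n) (hAA_pos _).le
  have hcA_le : ∀ n, cA n ≤ cc n := fun n => div_le_self (hcc_nonneg n) (hAA_ge1 _)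
  have hcA_sum : Summable cA := Summable.of_nonneg_of_le hcA_nonneg hcA_le hcc_sum
  set rr : ℕ → ℝ := fun n => ∑' k, cA (k + n) with hrrdef
  have hrr_nonneg : ∀ n, 0 ≤ rr n := fun n => tsum_nonneg fun k => hcA_nonneg _
  have hrr0 : Tendsto rr atTop (𝓝 0) := tendsto_sum_nat_add cA
  have hrr_rec : ∀ n, rr n = cA n + rr (n + 1) := by
    intro n
    have hs : Summable (fun k => cA (k + n)) := (summable_nat_add_iff n).2 hcA_sum
    have h1 := Summable.tsum_eq_zero_add hs
    rw [Nat.zero_add] at h1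
    have h2 : ∑' b, cA (b + 1 + n) = rr (n + 1) :=
      tsum_congr fun b => by rw [show b + 1 + n = b + (n + 1) from by omega]
    show (∑' k, cA (k + n)) = cA n + rr (n + 1)
    rw [h1, h2]
  set U : ℕ → Ω → ℝ := fun n ω => (AA n)⁻¹ * Z n ω + rr n with hUdef
  have hUint : ∀ n, Integrable (U n) μ := fun n =>
    ((hZint n).const_mul _).add (integrable_const _)
  have hUadp : StronglyAdapted ℱ U := fun n => ((hZm n).const_mul _).add stronglyMeasurable_const
  have hUsup : ∀ n, μ[U (n + 1)|ℱ n] ≤ᵐ[μ] U n := by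
    intro n
    have hdecU : U (n + 1) = ((AA (n + 1))⁻¹ • Z (n + 1)) + (fun _ => rr (n + 1)) := rfl
    have e1 : μ[U (n + 1)|ℱ n]
        =ᵐ[μ] μ[(AA (n + 1))⁻¹ • Z (n + 1)|ℱ n] + μ[(fun _ => rr (n + 1) : Ω → ℝ)|ℱ n] := by
      rw [hdecU]
      exact condExp_add ((hZint (n + 1)).smul _) (integrable_const _) _
    have e2 : μ[(AA (n + 1))⁻¹ • Z (n + 1)|ℱ n] =ᵐ[μ] (AA (n + 1))⁻¹ • μ[Z (n + 1)|ℱ n] :=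
      condExp_smul _ _ _
    have e3 : μ[(fun _ => rr (n + 1) : Ω → ℝ)|ℱ n] = fun _ => rr (n + 1) :=
      condExp_const (ℱ.le n) _
    have hinv_nn : (0:ℝ) ≤ (AA (n + 1))⁻¹ := inv_nonneg.2 (hAA_pos _).le
    have hkey : (AA (n + 1))⁻¹ * qq n ≤ (AA n)⁻¹ := by
      rw [hAA_succ n, mul_inv, mul_comm ((AA n)⁻¹), mul_assoc]
      have hmaxpos : (0:ℝ) < max (qq n) 1 := lt_of_lt_of_le zero_lt_one (le_max_right _ _)
      have h6 : (max (qq n) 1)⁻¹ * qq n ≤ 1 := by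
        rw [inv_mul_le_iff₀ hmaxpos, mul_one]
        exact le_max_left _ _
      calc (max (qq n) 1)⁻¹ * ((AA n)⁻¹ * qq n)
          = ((max (qq n) 1)⁻¹ * qq n) * (AA n)⁻¹ := by ring
        _ ≤ 1 * (AA n)⁻¹ :=
            mul_le_mul_of_nonneg_right (by linarith) (inv_nonneg.2 (hAA_pos n).le)
        _ = (AA n)⁻¹ := one_mul _
    have hcAeq : (AA (n + 1))⁻¹ * cc n = cA n := by
      rw [hcAdef]; simp only []; rw [div_eq_mul_inv, mul_comm]
    filter_upwards [e1, e2, hcond n, hXpos] with ω he1 he2 hq hp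
    have hZnnω : 0 ≤ Z n ω := Real.rpow_nonneg (hp n).le α
    have he2' : (μ[(AA (n + 1))⁻¹ • Z (n + 1)|ℱ n]) ω
        = (AA (n + 1))⁻¹ * (μ[Z (n + 1)|ℱ n]) ω := he2
    have hstep : (μ[U (n + 1)|ℱ n]) ω
        = (AA (n + 1))⁻¹ * (μ[Z (n + 1)|ℱ n]) ω + rr (n + 1) := by
      rw [he1, Pi.add_apply, he2', e3]
    rw [hstep]
    have h5 : (AA (n + 1))⁻¹ * (μ[Z (n + 1)|ℱ n]) ω
        ≤ (AA (n + 1))⁻¹ * (qq n * Z n ω + cc n) :=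
      mul_le_mul_of_nonneg_left hq hinv_nn
    have hexp : (AA (n + 1))⁻¹ * (qq n * Z n ω + cc n)
        = ((AA (n + 1))⁻¹ * qq n) * Z n ω + (AA (n + 1))⁻¹ * cc n := by ring
    have h7 : ((AA (n + 1))⁻¹ * qq n) * Z n ω ≤ (AA n)⁻¹ * Z n ω :=
      mul_le_mul_of_nonneg_right hkey hZnnω
    have hUn : U n ω = (AA n)⁻¹ * Z n ω + rr n := rfl
    rw [hUn, hrr_rec n]
    linarith [hcAeq ▸ le_refl ((AA (n + 1))⁻¹ * cc n), hexp ▸ h5, h7, hcAeq]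
  have hUsuper : Supermartingale U ℱ μ := supermartingale_nat hUadp hUint hUsup
  have hUnn : ∀ n, 0 ≤ᵐ[μ] U n := fun n => (hZnn n).mono fun ω h =>
    add_nonneg (mul_nonneg (inv_nonneg.2 (hAA_pos n).le) h) (hrr_nonneg n)
  have hEU : ∀ n, ∫ ω, U n ω ∂μ ≤ ∫ ω, U 0 ω ∂μ := by
    intro n
    calc ∫ ω, U n ω ∂μ = ∫ ω, (μ[U n|ℱ 0]) ω ∂μ := (integral_condExp (ℱ.le 0)).symm
      _ ≤ ∫ ω, U 0 ω ∂μ := integral_mono_ae integrable_condExp (hUint 0)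
          (hUsuper.condExp_ae_le (Nat.zero_le n))
  have hbdd : ∀ n, eLpNorm ((-U) n) 1 μ ≤ ((∫ ω, U 0 ω ∂μ).toNNReal : ℝ≥0∞) := by
    intro n
    have h1 : (-U) n = -(U n) := rfl
    rw [h1, eLpNorm_neg, eLpNorm_one_eq_lintegral_enorm,
      ← ofReal_integral_norm_eq_lintegral_enorm (hUint n)]
    have : ENNReal.ofReal (∫ ω, U 0 ω ∂μ) = ((∫ ω, U 0 ω ∂μ).toNNReal : ℝ≥0∞) := rfl
    rw [← this]
    apply ENNReal.ofReal_le_ofReal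
    calc ∫ ω, ‖U n ω‖ ∂μ = ∫ ω, U n ω ∂μ :=
          integral_congr_ae ((hUnn n).mono fun ω h => Real.norm_of_nonneg h)
      _ ≤ _ := hEU n
  have hUconv : ∀ᵐ ω ∂μ, ∃ c, Tendsto (fun n => U n ω) atTop (𝓝 c) := by
    have h1 := hUsuper.neg.exists_ae_tendsto_of_bdd hbdd
    refine h1.mono fun ω hc => ?_
    obtain ⟨c, hc⟩ := hc
    refine ⟨-c, ?_⟩
    have : (fun n => U n ω) = fun n => -((-U) n ω) := by
      funext n; simp [Pi.neg_apply]
    rw [this]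
    exact hc.neg
  -- Part F: conclusion
  have hbddAbove : BddAbove (Set.range AA) := by
    refine ⟨Abd, ?_⟩
    rintro x ⟨n, rfl⟩
    exact hAA_bd n
  have hAAtend : Tendsto AA atTop (𝓝 (⨆ n, AA n)) := tendsto_atTop_ciSup hAA_mono hbddAbove
  set Ainf : ℝ := ⨆ n, AA n with hAinfdef
  filter_upwards [hUconv, hae_sum, hXpos] with ω hU hsum hp
  obtain ⟨c, hc⟩ := hU
  have hZeq : ∀ n, Z n ω = AA n * (U n ω - rr n) := by
    intro n
    have h0 : U n ω = (AA n)⁻¹ * Z n ω + rr n := rfl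
    rw [h0]
    rw [add_sub_cancel_right, ← mul_assoc, mul_inv_cancel₀ (hAA_pos n).ne', one_mul]
  have hZt : Tendsto (fun n => Z n ω) atTop (𝓝 (Ainf * (c - 0))) := by
    rw [show (fun n => Z n ω) = fun n => AA n * (U n ω - rr n) from funext hZeq]
    exact hAAtend.mul (hc.sub hrr0)
  rw [sub_zero] at hZt
  set L : ℝ := Ainf * c with hLdef
  have hZnnω : ∀ n, 0 ≤ Z n ω := fun n => Real.rpow_nonneg (hp n).le α
  have hLnn : 0 ≤ L := ge_of_tendsto hZt (Filter.Eventually.of_forall hZnnω)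
  set T : ℝ≥0∞ := ∑' n, ENNReal.ofReal (vv n * Z n ω) with hTdef
  have hTne : T ≠ ⊤ := hsum.ne
  have hps : ∀ N, ∑ n ∈ Finset.range N, vv n * Z n ω ≤ T.toReal := by
    intro N
    have h1 : ENNReal.ofReal (∑ n ∈ Finset.range N, vv n * Z n ω)
        = ∑ n ∈ Finset.range N, ENNReal.ofReal (vv n * Z n ω) :=
      ENNReal.ofReal_sum_of_nonneg fun n _ => mul_nonneg (hvv_nonneg n) (hZnnω n)
    have h2 : (∑ n ∈ Finset.range N, ENNReal.ofReal (vv n * Z n ω)) ≤ T :=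
      ENNReal.sum_le_tsum _
    exact (ENNReal.ofReal_le_iff_le_toReal hTne).1 (h1 ▸ h2)
  have hL0 : L = 0 := by
    by_contra hne0
    have hLpos : 0 < L := lt_of_le_of_ne hLnn (Ne.symm hne0)
    have hev : ∀ᶠ n in atTop, L / 2 < Z n ω :=
      hZt.eventually (eventually_gt_nhds (by linarith))
    obtain ⟨N₀, hN₀⟩ := eventually_atTop.1 hev
    have hbig : ∀ᶠ N in atTop,
        (∑ n ∈ Finset.range N₀, vv n) + (2 / L * T.toReal + 1)
          ≤ ∑ n ∈ Finset.range N, vv n := tendsto_atTop.1 hvv_top _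
    obtain ⟨N, hN1, hN2⟩ := (hbig.and (eventually_ge_atTop N₀)).exists
    have hsub : ∑ n ∈ Finset.Ico N₀ N, vv n
        = ∑ n ∈ Finset.range N, vv n - ∑ n ∈ Finset.range N₀, vv n :=
      Finset.sum_Ico_eq_sub _ hN2
    have hge : 2 / L * T.toReal + 1 ≤ ∑ n ∈ Finset.Ico N₀ N, vv n := by
      rw [hsub]; linarith
    have h3 : ∑ n ∈ Finset.Ico N₀ N, vv n * (L / 2)
        ≤ ∑ n ∈ Finset.Ico N₀ N, vv n * Z n ω :=
      Finset.sum_le_sum fun n hn =>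
        mul_le_mul_of_nonneg_left (hN₀ n (Finset.mem_Ico.1 hn).1).le (hvv_nonneg n)
    have h4 : ∑ n ∈ Finset.Ico N₀ N, vv n * Z n ω
        ≤ ∑ n ∈ Finset.range N, vv n * Z n ω := by
      refine Finset.sum_le_sum_of_subset_of_nonneg ?_ ?_
      · rw [Finset.range_eq_Ico]
        exact Finset.Ico_subset_Ico (Nat.zero_le _) le_rfl
      · intro i _ _
        exact mul_nonneg (hvv_nonneg i) (hZnnω i)
    have h5 : (∑ n ∈ Finset.Ico N₀ N, vv n) * (L / 2)
        = ∑ n ∈ Finset.Ico N₀ N, vv n * (L / 2) := by rw [Finset.sum_mul]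
    have h6 : (2 / L * T.toReal + 1) * (L / 2)
        ≤ (∑ n ∈ Finset.Ico N₀ N, vv n) * (L / 2) :=
      mul_le_mul_of_nonneg_right hge (by positivity)
    have h7 : (2 / L * T.toReal + 1) * (L / 2) = T.toReal + L / 2 := by
      field_simp
    have h8 := hps N
    linarith
  rw [hL0] at hZt
  have hXeq : ∀ n, X n ω = (Z n ω) ^ (α⁻¹) := fun n =>
    (Real.rpow_rpow_inv (hp n).le (ne_of_gt hα0)).symm
  have hcont : ContinuousAt (fun x : ℝ => x ^ α⁻¹) 0 :=
    Real.continuousAt_rpow_const 0 α⁻¹ (Or.inr (by positivity))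
  have h9 : Tendsto (fun n => (Z n ω) ^ α⁻¹) atTop (𝓝 ((0:ℝ) ^ α⁻¹)) :=
    hcont.tendsto.comp hZt
  rw [Real.zero_rpow (inv_ne_zero (ne_of_gt hα0))] at h9
  exact (tendsto_congr hXeq).2 h9
end

section
/- Let ξ_n be i.i.d. random variables with 1 + ξ_n > 0 a.s. and E[ln(1+ξ_n)] < 0, and let S_n > 0 be non-random with Σ_n S_n^α < ∞ for some α > 0. Then the solution of X_{n+1} = X_n(1 + ξ_{n+1}) + S_n with X_0 > 0 satisfies liminf_n X_n = 0 almost surely. -/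
open MeasureTheory ProbabilityTheory Filter
open scoped Topology

/-- log(u+v) ≤ log u + v/u -/
lemma log_add_le_aux {u v : ℝ} (hu : 0 < u) (hv : 0 ≤ v) :
    Real.log (u + v) ≤ Real.log u + v / u := by
  have h1 : Real.log ((u + v) / u) ≤ (u + v) / u - 1 :=
    Real.log_le_sub_one_of_pos (by positivity)
  rw [Real.log_div (by positivity) hu.ne'] at h1
  have : (u + v) / u - 1 = v / u := by field_simp; ring
  linarith [this ▸ h1]

/-- (a+b)^α ≤ (1+ε) a^α + K b^α -/
lemma key_ineq {α ε : ℝ} (hα : 0 < α) (hε : 0 < ε) {a b : ℝ} (ha : 0 ≤ a) (hb : 0 ≤ b) :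
    (a + b) ^ α ≤ (1 + ε) * a ^ α + (1 + ((1 + ε) ^ α⁻¹ - 1)⁻¹) ^ α * b ^ α := by
  set δ : ℝ := (1 + ε) ^ α⁻¹ - 1 with hδdef
  have hδ : 0 < δ := by
    have : (1:ℝ) < (1 + ε) ^ α⁻¹ :=
      (Real.one_lt_rpow_iff_of_pos (by linarith)).2 (Or.inl ⟨by linarith, by positivity⟩)
    simpa [hδdef] using sub_pos.2 this
  have hKnn : (0:ℝ) ≤ (1 + δ⁻¹) ^ α * b ^ α := by positivity
  rcases le_or_gt b (δ * a) with hcase | hcase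
  · have h1 : a + b ≤ (1 + δ) * a := by nlinarith
    have h2 : (a + b) ^ α ≤ ((1 + δ) * a) ^ α :=
      Real.rpow_le_rpow (by linarith) h1 hα.le
    have h3 : ((1 + δ) * a) ^ α = (1 + δ) ^ α * a ^ α :=
      Real.mul_rpow (by positivity) ha
    have h4 : (1 + δ) ^ α = 1 + ε := by
      have : (1:ℝ) + δ = (1 + ε) ^ α⁻¹ := by simp [hδdef]
      rw [this, ← Real.rpow_mul (by linarith), inv_mul_cancel₀ hα.ne', Real.rpow_one]
    calc (a + b) ^ α ≤ (1 + δ) ^ α * a ^ α := h2.trans_eq h3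
      _ = (1 + ε) * a ^ α := by rw [h4]
      _ ≤ (1 + ε) * a ^ α + (1 + δ⁻¹) ^ α * b ^ α := le_add_of_nonneg_right hKnn
  · have h1 : a + b ≤ (1 + δ⁻¹) * b := by
      have haa : a ≤ δ⁻¹ * b := by
        rw [inv_mul_eq_div, le_div_iff₀ hδ]
        nlinarith
      nlinarith
    have h2 : (a + b) ^ α ≤ ((1 + δ⁻¹) * b) ^ α :=
      Real.rpow_le_rpow (by linarith) h1 hα.le
    have h3 : ((1 + δ⁻¹) * b) ^ α = (1 + δ⁻¹) ^ α * b ^ α :=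
      Real.mul_rpow (by positivity) hb
    have h5 : (0:ℝ) ≤ (1 + ε) * a ^ α := by positivity
    calc (a + b) ^ α ≤ (1 + δ⁻¹) ^ α * b ^ α := h2.trans_eq h3
      _ ≤ (1 + ε) * a ^ α + (1 + δ⁻¹) ^ α * b ^ α := le_add_of_nonneg_left h5

theorem liminf_zero
    {Ω : Type*} [MeasurableSpace Ω] (μ : Measure Ω) [IsProbabilityMeasure μ]
    (ξ : ℕ → Ω → ℝ) (hξ_meas : ∀ n, Measurable (ξ n))
    (hξ_indep : iIndepFun ξ μ)
    (hξ_ident : ∀ n m, Measure.map (ξ n) μ = Measure.map (ξ m) μ)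
    (hξ_pos : ∀ n, ∀ᵐ ω ∂μ, 0 < 1 + ξ n ω)
    (hint_log : ∀ n, Integrable (fun ω => Real.log (1 + ξ n ω)) μ)
    (hlog_neg : ∀ n, ∫ ω, Real.log (1 + ξ n ω) ∂μ < 0)
    (S : ℕ → ℝ) (hS : ∀ n, 0 < S n)
    (α : ℝ) (hα : 0 < α) (hS_sum : Summable fun n => S n ^ α)
    (X : ℕ → Ω → ℝ) (X₀ : ℝ) (hX₀ : 0 < X₀) (hX0 : ∀ ω, X 0 ω = X₀)
    (hrec : ∀ n ω, X (n + 1) ω = X n ω * (1 + ξ (n + 1) ω) + S n) :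
    ∀ᵐ ω ∂μ, liminf (fun n => X n ω) atTop = 0 := by
  set m : ℝ := ∫ ω, Real.log (1 + ξ 0 ω) ∂μ with hmdef
  have hm : m < 0 := hlog_neg 0
  set ε : ℝ := Real.exp (-(α * m) / 2) - 1 with hεdef
  have h1ε : 1 + ε = Real.exp (-(α * m) / 2) := by rw [hεdef]; ring
  have hε : 0 < ε := by
    have h2 : (0:ℝ) < -(α * m) / 2 := by nlinarith
    have := Real.one_lt_exp_iff.2 h2
    rw [hεdef]; linarith
  have hlog1ε : Real.log (1 + ε) = -(α * m) / 2 := by rw [h1ε, Real.log_exp]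
  -- strong law of large numbers for log (1 + ξ i)
  have gmeas : Measurable (fun x : ℝ => Real.log (1 + x)) :=
    Real.measurable_log.comp (measurable_const.add measurable_id)
  have hslln : ∀ᵐ ω ∂μ, Tendsto
      (fun n : ℕ => (∑ i ∈ Finset.range n, Real.log (1 + ξ i ω)) / n) atTop (𝓝 m) := by
    exact strong_law_ae_real (fun i ω => Real.log (1 + ξ i ω)) (hint_log 0)
      (fun i j hij => ((hξ_indep.indepFun hij).comp gmeas gmeas))
      (fun i => (IdentDistrib.mk (hξ_meas i).aemeasurable (hξ_meas 0).aemeasurable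
        (hξ_ident i 0)).comp gmeas)
  clear_value m ε
  filter_upwards [ae_all_iff.2 hξ_pos, hslln] with ω hpos hT
  obtain ⟨T, hTsucc, hT2⟩ : ∃ T : ℕ → ℝ,
      (∀ n : ℕ, T (n + 1) = T n + Real.log (1 + ξ n ω)) ∧
        Tendsto (fun n : ℕ => T n / ↑n) atTop (𝓝 m) :=
    ⟨fun n => ∑ i ∈ Finset.range n, Real.log (1 + ξ i ω),
      fun n => Finset.sum_range_succ _ _, hT⟩
  clear hT
  have hXpos : ∀ n, 0 < X n ω := by
    intro n
    induction n with
    | zero => rw [hX0]; exact hX₀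
    | succ k ih =>
      rw [hrec]
      have h1 := hpos (k + 1)
      have h2 := hS k
      nlinarith
  -- main claim: no positive constant is an eventual lower bound
  have key : ∀ c : ℝ, 0 < c → ¬ (∀ᶠ n in atTop, c ≤ X n ω) := by
    intro c hc hev
    obtain ⟨N₀, hN₀⟩ := eventually_atTop.1 hev
    have hSα0 : Tendsto (fun n => S n ^ α) atTop (𝓝 0) := hS_sum.tendsto_atTop_zero
    have hS0 : Tendsto S atTop (𝓝 0) := by
      have hc2 : Tendsto (fun n => (S n ^ α) ^ α⁻¹) atTop (𝓝 ((0:ℝ) ^ α⁻¹)) :=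
        ((Real.continuousAt_rpow_const 0 α⁻¹ (Or.inr (by positivity))).tendsto).comp hSα0
      have he : (fun n => (S n ^ α) ^ α⁻¹) = S := by
        funext n; exact Real.rpow_rpow_inv (hS n).le hα.ne'
      have hz : ((0:ℝ) ^ α⁻¹) = 0 := Real.zero_rpow (by positivity)
      rwa [he, hz] at hc2
    obtain ⟨N₁, hN₁⟩ := eventually_atTop.1
      (hS0.eventually_le_const (show (0:ℝ) < c / 2 by linarith))
    set N := max N₀ N₁ with hNdef
    set K : ℝ := (1 + ((1 + ε) ^ α⁻¹ - 1)⁻¹) ^ α with hKdef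
    have hδ : 0 < (1 + ε) ^ α⁻¹ - 1 := by
      have : (1:ℝ) < (1 + ε) ^ α⁻¹ :=
        (Real.one_lt_rpow_iff_of_pos (by linarith)).2 (Or.inl ⟨by linarith, by positivity⟩)
      linarith
    have hKpos : 0 < K := by
      rw [hKdef]; positivity
    have hc2 : (0:ℝ) < c / 2 := by linarith
    set C₁ : ℝ := K / (c / 2) ^ α with hC₁def
    have hC₁ : 0 < C₁ := by rw [hC₁def]; positivity
    -- one-step inequality
    have hstep : ∀ n, N ≤ n → α * Real.log (X (n + 1) ω) ≤ α * Real.log (X n ω) +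
        (α * Real.log (1 + ξ (n + 1) ω) + Real.log (1 + ε) + C₁ * S n ^ α) := by
      intro n hn
      set a : ℝ := X n ω * (1 + ξ (n + 1) ω) with hadef
      have hapos : 0 < a := mul_pos (hXpos n) (hpos (n + 1))
      have ha2 : c / 2 ≤ a := by
        have h1 : c ≤ X (n + 1) ω := hN₀ (n + 1)
          (Nat.le_trans (Nat.le_trans (le_max_left N₀ N₁) hn) (Nat.le_succ n))
        have h2 : S n ≤ c / 2 := hN₁ n (le_trans (le_max_right _ _) hn)
        have h3 := hrec n ω
        rw [hadef]; linarith
      have hXn1 : X (n + 1) ω = a + S n := hrec n ω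
      have hkey : (a + S n) ^ α ≤ (1 + ε) * a ^ α + K * S n ^ α :=
        key_ineq hα hε hapos.le (hS n).le
      set u : ℝ := (1 + ε) * a ^ α with hudef
      set v : ℝ := K * S n ^ α with hvdef
      have haS : 0 < a + S n := add_pos hapos (hS n)
      have hupos : 0 < u := by
        rw [hudef]; exact mul_pos (by linarith) (Real.rpow_pos_of_pos hapos α)
      have hvnn : 0 ≤ v := by
        rw [hvdef]; exact mul_nonneg hKpos.le (Real.rpow_nonneg (hS n).le α)
      have h1 : α * Real.log (X (n + 1) ω) = Real.log ((a + S n) ^ α) := by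
        rw [hXn1, Real.log_rpow haS]
      have h2 : Real.log ((a + S n) ^ α) ≤ Real.log (u + v) :=
        Real.log_le_log (Real.rpow_pos_of_pos haS α) hkey
      have h3 : Real.log (u + v) ≤ Real.log u + v / u := log_add_le_aux hupos hvnn
      have h4 : v / u ≤ C₁ * S n ^ α := by
        have hua : (c / 2) ^ α ≤ u := by
          have h6 := Real.rpow_le_rpow hc2.le ha2 hα.le
          have h7 : a ^ α ≤ (1 + ε) * a ^ α :=
            le_mul_of_one_le_left (Real.rpow_nonneg hapos.le α) (by linarith)
          rw [hudef]; linarith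
        have hcp : (0:ℝ) < (c / 2) ^ α := by positivity
        have hvu : v / u ≤ v / (c / 2) ^ α := by gcongr
        have : v / (c / 2) ^ α = C₁ * S n ^ α := by
          rw [hvdef, hC₁def]; field_simp
        linarith
      have hla : Real.log a = Real.log (X n ω) + Real.log (1 + ξ (n + 1) ω) := by
        rw [hadef, Real.log_mul (hXpos n).ne' (hpos (n + 1)).ne']
      have h5 : Real.log u = Real.log (1 + ε) + α * Real.log a := by
        rw [hudef, Real.log_mul (by linarith) (Real.rpow_pos_of_pos hapos α).ne',
          Real.log_rpow hapos]
      rw [hla] at h5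
      linarith
    -- telescoping
    have htel : ∀ d : ℕ, α * Real.log (X (N + d) ω) ≤ α * Real.log (X N ω) +
        ∑ k ∈ Finset.range d,
          (α * Real.log (1 + ξ (N + k + 1) ω) + Real.log (1 + ε) + C₁ * S (N + k) ^ α) := by
      intro d
      induction d with
      | zero => simp
      | succ e ih =>
        have hs := hstep (N + e) (Nat.le_add_right N e)
        rw [Finset.sum_range_succ, show N + (e + 1) = (N + e) + 1 from rfl]
        linarith
    -- rewrite the ξ-sum via T
    have hTs : ∀ d : ℕ, ∑ k ∈ Finset.range d, Real.log (1 + ξ (N + k + 1) ω)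
        = T (N + 1 + d) - T (N + 1) := by
      intro d
      induction d with
      | zero => simp
      | succ e ih =>
        rw [Finset.sum_range_succ, ih, show N + 1 + (e + 1) = (N + 1 + e) + 1 from rfl]
        rw [hTsucc (N + 1 + e), show N + e + 1 = N + 1 + e by omega]
        ring
    have hsum_split : ∀ d : ℕ, ∑ k ∈ Finset.range d,
        (α * Real.log (1 + ξ (N + k + 1) ω) + Real.log (1 + ε) + C₁ * S (N + k) ^ α)
        = α * (T (N + 1 + d) - T (N + 1)) + d * Real.log (1 + ε)
          + C₁ * ∑ k ∈ Finset.range d, S (N + k) ^ α := by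
      intro d
      rw [Finset.sum_add_distrib, Finset.sum_add_distrib, ← Finset.mul_sum, ← Finset.mul_sum,
        hTs d, Finset.sum_const, Finset.card_range, nsmul_eq_mul]
    -- bound the S-sum by a constant
    have hSsum' : Summable (fun k => S (N + k) ^ α) := by
      have h := (summable_nat_add_iff (f := fun n => S n ^ α) N).2 hS_sum
      exact h.congr (fun k => by rw [Nat.add_comm])
    set B : ℝ := ∑' k, S (N + k) ^ α with hBdef
    have hsumB : ∀ d : ℕ, ∑ k ∈ Finset.range d, S (N + k) ^ α ≤ B :=
      fun d => Summable.sum_le_tsum (Finset.range d) (fun i _ => Real.rpow_nonneg (hS _).le α) hSsum'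
    -- main inequality for all d
    have hmain : ∀ d : ℕ, α * Real.log c ≤ α * Real.log (X N ω)
        + α * (T (N + 1 + d) - T (N + 1)) + d * Real.log (1 + ε) + C₁ * B := by
      intro d
      have h0 : c ≤ X (N + d) ω := hN₀ _ (le_trans (le_max_left _ _) (Nat.le_add_right N d))
      have h1 : α * Real.log c ≤ α * Real.log (X (N + d) ω) :=
        mul_le_mul_of_nonneg_left (Real.log_le_log hc h0) hα.le
      have h2 := htel d
      rw [hsum_split d] at h2
      have h3 : C₁ * ∑ k ∈ Finset.range d, S (N + k) ^ α ≤ C₁ * B :=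
        mul_le_mul_of_nonneg_left (hsumB d) hC₁.le
      linarith
    -- eventual bound on T from SLLN
    obtain ⟨M, hM⟩ := eventually_atTop.1
      (hT2.eventually_le_const (show m < 7 * m / 8 by linarith))
    have hclaim : ∀ d : ℕ, M ≤ d → α * Real.log c ≤
        (α * Real.log (X N ω) - α * T (N + 1) + C₁ * B + α * (7 * m / 8) * (N + 1))
        + d * (3 * α * m / 8) := by
      intro d hd
      have hmd := hmain d
      rw [hlog1ε] at hmd
      have hTb : T (N + 1 + d) ≤ 7 * m / 8 * (N + 1 + d : ℕ) := by
        have h := hM (N + 1 + d) (by omega)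
        have hpos' : (0:ℝ) < (N + 1 + d : ℕ) := by positivity
        exact (div_le_iff₀ hpos').1 h
      have hmul : α * T (N + 1 + d) ≤ α * (7 * m / 8 * (N + 1 + d : ℕ)) :=
        mul_le_mul_of_nonneg_left hTb hα.le
      push_cast at hmul
      nlinarith [hmul, hmd]
    have hbot : Tendsto (fun d : ℕ =>
        (α * Real.log (X N ω) - α * T (N + 1) + C₁ * B + α * (7 * m / 8) * (N + 1))
        + (d:ℝ) * (3 * α * m / 8)) atTop atBot := by
      have hslope : 3 * α * m / 8 < 0 := by nlinarith
      exact tendsto_atBot_add_const_left _ _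
        ((tendsto_natCast_atTop_atTop (R := ℝ)).atTop_mul_const_of_neg hslope)
    obtain ⟨d, hd1, hd2⟩ :=
      ((hbot.eventually_lt_atBot (α * Real.log c)).and (eventually_ge_atTop M)).exists
    exact absurd (hclaim d hd2) (not_le.2 hd1)
  -- conclude: liminf = 0
  have hsetEq : {a : ℝ | ∀ᶠ n in atTop, a ≤ X n ω} = Set.Iic 0 := by
    ext a
    simp only [Set.mem_setOf_eq, Set.mem_Iic]
    constructor
    · intro h
      by_contra h'
      push_neg at h'
      exact key a h' h
    · intro ha
      exact Eventually.of_forall (fun n => ha.trans (hXpos n).le)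
  rw [liminf_eq, hsetEq, csSup_Iic]
end

section
/- Let f: ℝ → [0,1] be continuous with f(u) = 0 iff u = 0, let ξ_n be independent integrable random variables with 1 + ξ_n > 0 a.s., let S_n > 0 with Σ_n S_n < ∞, X_0 > 0, and X_{n+1} = X_n(1 + f(X_n) ξ_{n+1}) + S_n (so X_n > 0 for all n). If Σ_n [E ξ_n]^+ < ∞, then X_n converges a.s. to a finite limit; if in addition Σ_n [E ξ_n]^− = −∞, then X_n → 0 a.s. -/
open MeasureTheory ProbabilityTheory Filter

set_option maxHeartbeats 1000000 in

theorem nonlinear_summable_convergence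
    {Ω : Type*} [MeasurableSpace Ω] (μ : Measure Ω) [IsProbabilityMeasure μ]
    (f : ℝ → ℝ) (hf_cont : Continuous f) (hf_range : ∀ u, f u ∈ Set.Icc (0 : ℝ) 1)
    (hf_zero : ∀ u, f u = 0 ↔ u = 0)
    (ξ : ℕ → Ω → ℝ) (hξ_meas : ∀ n, Measurable (ξ n))
    (hξ_indep : iIndepFun ξ μ)
    (hξ_pos : ∀ n, ∀ᵐ ω ∂μ, 0 < 1 + ξ n ω)
    (hξ_int : ∀ n, Integrable (ξ n) μ)
    (S : ℕ → ℝ) (hS : ∀ n, 0 < S n) (hS_sum : Summable S)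
    (X : ℕ → Ω → ℝ) (X₀ : ℝ) (hX₀ : 0 < X₀) (hX0 : ∀ ω, X 0 ω = X₀)
    (hrec : ∀ n ω, X (n + 1) ω = X n ω * (1 + f (X n ω) * ξ (n + 1) ω) + S n)
    (hpos_sum : Summable fun n => max (∫ ω, ξ n ω ∂μ) 0) :
    (∀ᵐ ω ∂μ, ∃ l : ℝ, Tendsto (fun n => X n ω) atTop (nhds l)) ∧
      ((Tendsto (fun N => ∑ n ∈ Finset.range N, min (∫ ω, ξ n ω ∂μ) 0)
          atTop atBot) →
        ∀ᵐ ω ∂μ, Tendsto (fun n => X n ω) atTop (nhds 0)) := by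
  classical
  have hf0 : ∀ u, 0 ≤ f u := fun u => (hf_range u).1
  have hf1 : ∀ u, f u ≤ 1 := fun u => (hf_range u).2
  set e : ℕ → ℝ := fun n => ∫ ω, ξ n ω ∂μ with he
  set a : ℕ → ℝ := fun n => max (e n) 0 with ha
  set b : ℕ → ℝ := fun n => min (e n) 0 with hb
  have ha_sum : Summable a := hpos_sum
  have ha0 : ∀ n, 0 ≤ a n := fun n => le_max_right _ _
  have hb0 : ∀ n, b n ≤ 0 := fun n => min_le_right _ _
  have hab : ∀ n, a n + b n = e n := fun n => by
    have h := max_add_min (e n) 0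
    rw [add_zero] at h; exact h
  -- the deterministic normalizing product
  set A : ℕ → ℝ := fun n => ∏ k ∈ Finset.range n, (1 + a (k + 1)) with hA
  have hA1 : ∀ n, 1 ≤ A n := by
    intro n
    have := Finset.prod_le_prod (s := Finset.range n) (f := fun _ => (1:ℝ))
      (g := fun k => 1 + a (k + 1)) (fun k _ => zero_le_one)
      (fun k _ => le_add_of_nonneg_right (ha0 (k + 1)))
    simpa using this
  have hA0 : ∀ n, (0:ℝ) < A n := fun n => lt_of_lt_of_le one_pos (hA1 n)
  have hAsucc : ∀ n, A (n + 1) = A n * (1 + a (n + 1)) := fun n =>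
    Finset.prod_range_succ _ _
  set Ab : ℝ := Real.exp (∑' n, a n) with hAb
  have hAle : ∀ n, A n ≤ Ab := by
    intro n
    have h1 : A n ≤ ∏ k ∈ Finset.range n, Real.exp (a (k + 1)) := by
      refine Finset.prod_le_prod ?_ ?_ <;> intro k _
      · exact le_trans zero_le_one (le_add_of_nonneg_right (ha0 (k + 1)))
      · show 1 + a (k + 1) ≤ Real.exp (a (k + 1))
        have := Real.add_one_le_exp (a (k + 1)); linarith
    have h2 : ∏ k ∈ Finset.range n, Real.exp (a (k + 1)) =
        Real.exp (∑ k ∈ Finset.range n, a (k + 1)) := by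
      rw [Real.exp_sum]
    have h3 : ∑ k ∈ Finset.range n, a (k + 1) ≤ ∑' k, a k := by
      have h4 : ∑ k ∈ Finset.range (n + 1), a k ≤ ∑' k, a k :=
        Summable.sum_le_tsum _ (fun k _ => ha0 k) ha_sum
      have h5 : ∑ k ∈ Finset.range (n + 1), a k
          = (∑ k ∈ Finset.range n, a (k + 1)) + a 0 := Finset.sum_range_succ' _ _
      nlinarith [ha0 0]
    calc A n ≤ Real.exp (∑ k ∈ Finset.range n, a (k + 1)) := by rw [← h2]; exact h1
    _ ≤ Ab := Real.exp_le_exp.2 h3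
  have hAb0 : 0 < Ab := Real.exp_pos _
  have hAmono : Monotone A := by
    refine monotone_nat_of_le_succ fun n => ?_
    rw [hAsucc n]
    nlinarith [hA0 n, ha0 (n + 1)]
  obtain ⟨Al, hAl⟩ : ∃ Al, Tendsto A atTop (nhds Al) := by
    refine ⟨_, tendsto_atTop_ciSup hAmono ⟨Ab, ?_⟩⟩
    rintro x ⟨n, rfl⟩; exact hAle n
  have hAl1 : (1:ℝ) ≤ Al := ge_of_tendsto' hAl hA1
  -- remainders of the perturbation series
  set R : ℕ → ℝ := fun n => (∑' k, S k) - ∑ k ∈ Finset.range n, S k with hR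
  have hR0 : ∀ n, 0 ≤ R n := by
    intro n
    have := Summable.sum_le_tsum (Finset.range n) (fun k _ => (hS k).le) hS_sum
    simp only [hR]; linarith
  have hRrec : ∀ n, R n = S n + R (n + 1) := by
    intro n
    simp only [hR, Finset.sum_range_succ]; ring
  have hRlim : Tendsto R atTop (nhds 0) := by
    have := hS_sum.hasSum.tendsto_sum_nat
    have h := this.const_sub (∑' k, S k)
    simpa using h
  -- pathwise positivity
  have hXpos : ∀ ω, (∀ k, 0 < 1 + ξ k ω) → ∀ n, 0 < X n ω := by
    intro ω hω n
    induction n with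
    | zero => rw [hX0]; exact hX₀
    | succ n ih =>
      rw [hrec]
      have h1 : 0 < 1 + f (X n ω) * ξ (n + 1) ω := by
        rcases le_or_gt 0 (ξ (n + 1) ω) with h | h
        · nlinarith [hf0 (X n ω)]
        · nlinarith [hf1 (X n ω), hω (n + 1), hf0 (X n ω)]
      nlinarith [hS n]
  have hξpos_ae : ∀ᵐ ω ∂μ, ∀ k, 0 < 1 + ξ k ω := ae_all_iff.2 hξ_pos
  -- dominating product
  set η : ℕ → Ω → ℝ := fun k ω => 1 + max (ξ k ω) 0 with hη
  have hη_meas : ∀ k, Measurable (η k) := fun k =>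
    (measurable_const.add ((hξ_meas k).max measurable_const))
  have hη_int : ∀ k, Integrable (η k) μ := fun k =>
    (integrable_const 1).add ((hξ_int k).pos_part)
  have hη1 : ∀ k ω, 1 ≤ η k ω := by
    intro k ω; simp only [hη]; nlinarith [le_max_right (ξ k ω) (0:ℝ)]
  have hη_indep : iIndepFun η μ := by
    have := hξ_indep.comp (fun _ => fun x : ℝ => 1 + max x 0)
      (fun _ => measurable_const.add (measurable_id.max measurable_const))
    exact this
  set P : ℕ → Ω → ℝ := fun n => ∏ k ∈ Finset.Icc 1 n, η k with hP
  have hPsucc : ∀ n, P (n + 1) = P n * η (n + 1) := by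
    intro n
    simp only [hP]
    rw [Finset.prod_Icc_succ_top (Nat.le_add_left 1 n)]
  have hPapp : ∀ n ω, P n ω = ∏ k ∈ Finset.Icc 1 n, η k ω := by
    intro n ω; simp only [hP, Finset.prod_apply]
  have hP1 : ∀ n ω, 1 ≤ P n ω := by
    intro n ω; rw [hPapp]
    have := Finset.prod_le_prod (s := Finset.Icc 1 n) (f := fun _ => (1:ℝ))
      (g := fun k => η k ω) (fun k _ => zero_le_one) (fun k _ => hη1 k ω)
    simpa using this
  set C : ℝ := X₀ + ∑' k, S k with hC
  have hC0 : 0 < C := by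
    have : 0 ≤ ∑' k, S k := tsum_nonneg fun k => (hS k).le
    simp only [hC]; linarith
  have hXleP : ∀ ω, (∀ k, 0 < 1 + ξ k ω) → ∀ n, X n ω ≤ C * P n ω := by
    intro ω hω n
    have key : ∀ n, X n ω ≤ (X₀ + ∑ k ∈ Finset.range n, S k) * P n ω := by
      intro n
      induction n with
      | zero =>
        have : P 0 ω = 1 := by rw [hPapp]; simp
        simp [hX0, this]
      | succ n ih =>
        have hXp := hXpos ω hω n
        have hstep : X (n + 1) ω ≤ X n ω * η (n + 1) ω + S n := by
          rw [hrec]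
          have : f (X n ω) * ξ (n + 1) ω ≤ max (ξ (n + 1) ω) 0 := by
            rcases le_or_gt 0 (ξ (n + 1) ω) with h | h
            · have := le_max_left (ξ (n + 1) ω) (0:ℝ)
              nlinarith [hf1 (X n ω), hf0 (X n ω)]
            · have := le_max_right (ξ (n + 1) ω) (0:ℝ)
              nlinarith [hf0 (X n ω)]
          simp only [hη]
          nlinarith
        have hPn1 : P (n + 1) ω = P n ω * η (n + 1) ω := by
          rw [hPsucc]; rfl
        have hSn : ∑ k ∈ Finset.range (n + 1), S k
            = ∑ k ∈ Finset.range n, S k + S n := Finset.sum_range_succ _ _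
        have hs0 : 0 ≤ ∑ k ∈ Finset.range n, S k :=
          Finset.sum_nonneg fun k _ => (hS k).le
        have hη1' := hη1 (n + 1) ω
        have hP1' := hP1 n ω
        calc X (n + 1) ω ≤ X n ω * η (n + 1) ω + S n := hstep
          _ ≤ (X₀ + ∑ k ∈ Finset.range n, S k) * P n ω * η (n + 1) ω + S n := by
              nlinarith
          _ ≤ (X₀ + ∑ k ∈ Finset.range (n + 1), S k) * P (n + 1) ω := by
              rw [hPn1, hSn]
              nlinarith [mul_le_mul_of_nonneg_left hη1'
                (le_of_lt (lt_of_lt_of_le one_pos hP1')), hS n,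
                mul_pos (lt_of_lt_of_le one_pos hP1') (lt_of_lt_of_le one_pos hη1')]
    refine (key n).trans ?_
    have : X₀ + ∑ k ∈ Finset.range n, S k ≤ C := by
      have := Summable.sum_le_tsum (Finset.range n) (fun k _ => (hS k).le) hS_sum
      simp only [hC]; linarith
    nlinarith [hP1 n ω, this, hC0]
  -- the natural filtration
  set ℱ : Filtration ℕ ‹MeasurableSpace Ω› :=
    Filtration.natural ξ (fun n => (hξ_meas n).stronglyMeasurable) with hℱ
  have hξadp : StronglyAdapted ℱ ξ :=
    Filtration.stronglyAdapted_natural (fun n => (hξ_meas n).stronglyMeasurable)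
  have hXadp : ∀ n, StronglyMeasurable[ℱ n] (X n) := by
    intro n
    induction n with
    | zero =>
      have : X 0 = fun _ => X₀ := funext hX0
      rw [this]; exact stronglyMeasurable_const
    | succ n ih =>
      have hξsm : StronglyMeasurable[ℱ (n + 1)] (ξ (n + 1)) := hξadp (n + 1)
      have hXsm : StronglyMeasurable[ℱ (n + 1)] (X n) := ih.mono (ℱ.mono (Nat.le_succ n))
      have hXe : X (n + 1) = fun ω => X n ω * (1 + f (X n ω) * ξ (n + 1) ω) + S n :=
        funext (hrec n)
      rw [hXe]
      exact ((hXsm.mul ((stronglyMeasurable_const.add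
        ((hf_cont.comp_stronglyMeasurable hXsm).mul hξsm)))).add_const (S n))
  -- independence of ξ (n+1) from the past
  have hIndep : ∀ n,
      Indep (MeasurableSpace.comap (ξ (n + 1)) inferInstance) (ℱ n) μ := by
    intro n
    have h := indep_iSup_of_disjoint
      (m := fun i => MeasurableSpace.comap (ξ i) inferInstance)
      (fun i => (hξ_meas i).comap_le) hξ_indep.iIndep
      (S := {n + 1}) (T := Set.Iic n)
      (by simp only [Set.disjoint_left, Set.mem_singleton_iff, Set.mem_Iic]
          rintro x rfl; omega)
    have h1 : (⨆ i ∈ ({n + 1} : Set ℕ), MeasurableSpace.comap (ξ i) inferInstance)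
        = MeasurableSpace.comap (ξ (n + 1)) inferInstance := by simp
    have h2 : (⨆ i ∈ Set.Iic n, MeasurableSpace.comap (ξ i) inferInstance) = ℱ n := by
      rfl
    rwa [h1, h2] at h
  -- integrability of the dominating product
  have hP_int : ∀ n, Integrable (P n) μ := by
    intro n
    induction n with
    | zero =>
      have : P 0 = fun _ => (1:ℝ) := by
        funext ω; rw [hPapp]; simp
      rw [this]; exact integrable_const 1
    | succ n ih =>
      have hind : IndepFun (P n) (η (n + 1)) μ :=
        hη_indep.indepFun_finsetProd_of_notMem hη_meas (by simp)
      have := hind.integrable_mul ih (hη_int (n + 1))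
      rw [hPsucc n]; exact this
  have hPadp : ∀ n, StronglyMeasurable[ℱ n] (P n) := by
    intro n
    induction n with
    | zero =>
      have h0 : P 0 = fun _ => (1:ℝ) := by funext ω; rw [hPapp]; simp
      rw [h0]; exact stronglyMeasurable_const
    | succ n ih =>
      rw [hPsucc n]
      have hηsm : StronglyMeasurable[ℱ (n + 1)] (η (n + 1)) :=
        (continuous_const.add (continuous_id.max continuous_const)).comp_stronglyMeasurable
          (hξadp (n + 1))
      exact (ih.mono (ℱ.mono (Nat.le_succ n))).mul hηsm
  have hX_int : ∀ n, Integrable (X n) μ := by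
    intro n
    have hCP : Integrable (fun ω => C * P n ω) μ := (hP_int n).const_mul C
    refine hCP.mono' ((hXadp n).mono (ℱ.le n)).aestronglyMeasurable ?_
    filter_upwards [hξpos_ae] with ω hω
    rw [Real.norm_eq_abs, abs_of_pos (hXpos ω hω n)]
    exact hXleP ω hω n
  set W : ℕ → Ω → ℝ := fun n ω => X n ω * f (X n ω) with hW
  have hWadp : ∀ n, StronglyMeasurable[ℱ n] (W n) :=
    fun n => (hXadp n).mul (hf_cont.comp_stronglyMeasurable (hXadp n))
  have hWle : ∀ ω, (∀ k, 0 < 1 + ξ k ω) → ∀ n, 0 ≤ W n ω ∧ W n ω ≤ X n ω := by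
    intro ω hω n
    have hXp := hXpos ω hω n
    simp only [hW]
    constructor
    · exact mul_nonneg hXp.le (hf0 _)
    · nlinarith [hf1 (X n ω), hXp]
  have hW_int : ∀ n, Integrable (W n) μ := by
    intro n
    refine (hX_int n).mono' ((hWadp n).mono (ℱ.le n)).aestronglyMeasurable ?_
    filter_upwards [hξpos_ae] with ω hω
    obtain ⟨h1, h2⟩ := hWle ω hω n
    rw [Real.norm_eq_abs, abs_of_nonneg h1]; exact h2
  have hWξ_int : ∀ n, Integrable (fun ω => W n ω * ξ (n + 1) ω) μ := by
    intro n
    have hPξind : IndepFun (P n) (ξ (n + 1)) μ := by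
      rw [IndepFun_iff_Indep]
      exact indep_of_indep_of_le_left ((hIndep n).symm)
        (Measurable.comap_le (hPadp n).measurable)
    have hPξint : Integrable (fun ω => P n ω * ξ (n + 1) ω) μ :=
      hPξind.integrable_mul (hP_int n) (hξ_int (n + 1))
    refine (hPξint.norm.const_mul C).mono'
      ((((hWadp n).mono (ℱ.le n)).aestronglyMeasurable).mul
        (hξ_meas (n + 1)).aestronglyMeasurable) ?_
    filter_upwards [hξpos_ae] with ω hω
    have h1 := hWle ω hω n
    have h2 := hXleP ω hω n
    have hP0 : (0:ℝ) < P n ω := lt_of_lt_of_le one_pos (hP1 n ω)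
    rw [Real.norm_eq_abs, abs_mul]
    calc |W n ω| * |ξ (n + 1) ω| ≤ C * P n ω * |ξ (n + 1) ω| := by
          refine mul_le_mul_of_nonneg_right ?_ (abs_nonneg _)
          rw [abs_of_nonneg h1.1]; linarith [h1.2]
      _ = C * ‖P n ω * ξ (n + 1) ω‖ := by
          rw [Real.norm_eq_abs, abs_mul, abs_of_pos hP0]; ring
  -- conditional expectations
  have hcondξ : ∀ n, μ[ξ (n + 1)|ℱ n] =ᵐ[μ] fun _ => e (n + 1) := by
    intro n
    have hsm : StronglyMeasurable[MeasurableSpace.comap (ξ (n + 1)) inferInstance]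
        (ξ (n + 1)) := (Measurable.of_comap_le le_rfl).stronglyMeasurable
    exact condExp_indep_eq (hξ_meas (n + 1)).comap_le (ℱ.le n) hsm (hIndep n)
  have hcondW : ∀ n, μ[fun ω => W n ω * ξ (n + 1) ω|ℱ n]
      =ᵐ[μ] fun ω => W n ω * e (n + 1) := by
    intro n
    have h := condExp_mul_of_stronglyMeasurable_left (hWadp n) (hWξ_int n) (hξ_int (n + 1))
    refine h.trans ?_
    filter_upwards [hcondξ n] with ω hω
    simp only [Pi.mul_apply]
    rw [hω]
  have hcondX : ∀ n, μ[X (n + 1)|ℱ n] =ᵐ[μ]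
      fun ω => X n ω + W n ω * e (n + 1) + S n := by
    intro n
    have hXe : X (n + 1) = X n + ((fun ω => W n ω * ξ (n + 1) ω) + fun _ => S n) := by
      funext ω
      simp only [hW, Pi.add_apply]
      rw [hrec]; ring
    rw [hXe]
    have h1 := condExp_add (μ := μ) (m := ℱ n) (hX_int n)
      ((hWξ_int n).add (integrable_const (S n)))
    refine h1.trans ?_
    have h2 := condExp_add (μ := μ) (m := ℱ n) (hWξ_int n) (integrable_const (S n))
    have h3 := condExp_of_stronglyMeasurable (ℱ.le n) (hXadp n) (hX_int n)
    have h6 : μ[(fun ω => W n ω * ξ (n + 1) ω) + (fun _ => S n)|ℱ n]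
        =ᵐ[μ] fun ω => W n ω * e (n + 1) + S n := by
      refine h2.trans ?_
      rw [condExp_const (ℱ.le n)]
      filter_upwards [hcondW n] with ω hω
      simp only [Pi.add_apply]
      rw [hω]
    rw [h3]
    filter_upwards [h6] with ω hω
    simp only [Pi.add_apply, hω]
    ring
  -- the supermartingale
  set G : ℕ → Ω → ℝ := fun n ω => ∑ k ∈ Finset.range n, W k ω * (-b (k + 1) / A (k + 1))
    with hG
  set V : ℕ → Ω → ℝ := fun n ω => X n ω / A n + R n + G n ω with hV
  have hGsucc : ∀ n ω, G (n + 1) ω = G n ω + W n ω * (-b (n + 1) / A (n + 1)) := by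
    intro n ω; simp only [hG, Finset.sum_range_succ]
  have hGadp : ∀ n m, m ≤ n + 1 → StronglyMeasurable[ℱ n] (G m) := by
    intro n m
    induction m with
    | zero =>
      intro _
      have h0 : G 0 = fun _ => (0:ℝ) := by funext ω; simp [hG]
      rw [h0]; exact stronglyMeasurable_const
    | succ m ih =>
      intro hm
      have hGe : G (m + 1) = fun ω => G m ω + W m ω * (-b (m + 1) / A (m + 1)) :=
        funext fun ω => hGsucc m ω
      rw [hGe]
      exact (ih (by omega)).add (((hWadp m).mono (ℱ.mono (by omega))).mul_const _)
  have hG_int : ∀ n, Integrable (G n) μ := by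
    intro n
    induction n with
    | zero =>
      have h0 : G 0 = fun _ => (0:ℝ) := by funext ω; simp [hG]
      rw [h0]; exact integrable_const 0
    | succ n ih =>
      have hGe : G (n + 1) = fun ω => G n ω + W n ω * (-b (n + 1) / A (n + 1)) :=
        funext fun ω => hGsucc n ω
      rw [hGe]
      exact ih.add ((hW_int n).mul_const _)
  have hVadp : StronglyAdapted ℱ V := by
    intro n
    have hVe : V n = fun ω => (X n ω * (A n)⁻¹ + R n) + G n ω := by
      funext ω; simp only [hV]; rw [div_eq_mul_inv]
    rw [hVe]
    exact (((hXadp n).mul_const (A n)⁻¹).add stronglyMeasurable_const).add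
      (hGadp n n (by omega))
  have hV_int : ∀ n, Integrable (V n) μ := by
    intro n
    have : V n = fun ω => (X n ω / A n + R n) + G n ω := rfl
    rw [this]
    exact (((hX_int n).div_const (A n)).add (integrable_const (R n))).add (hG_int n)
  have hstep : ∀ n, μ[V (n + 1)|ℱ n] ≤ᵐ[μ] V n := by
    intro n
    have hdec : V (n + 1) = (fun ω => (A (n + 1))⁻¹ • X (n + 1) ω)
        + fun ω => R (n + 1) + G (n + 1) ω := by
      funext ω
      simp only [hV, Pi.add_apply, smul_eq_mul]
      rw [div_eq_inv_mul]
      ring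
    have h1 : μ[V (n + 1)|ℱ n] =ᵐ[μ]
        μ[fun ω => (A (n + 1))⁻¹ • X (n + 1) ω|ℱ n]
          + μ[fun ω => R (n + 1) + G (n + 1) ω|ℱ n] := by
      rw [hdec]
      exact condExp_add ((hX_int (n + 1)).smul ((A (n + 1))⁻¹))
        ((integrable_const (R (n + 1))).add (hG_int (n + 1))) _
    have h2 : μ[fun ω => R (n + 1) + G (n + 1) ω|ℱ n]
        = fun ω => R (n + 1) + G (n + 1) ω :=
      condExp_of_stronglyMeasurable (ℱ.le n)
        (stronglyMeasurable_const.add (hGadp n (n + 1) le_rfl))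
        ((integrable_const (R (n + 1))).add (hG_int (n + 1)))
    have h3 : μ[fun ω => (A (n + 1))⁻¹ • X (n + 1) ω|ℱ n]
        =ᵐ[μ] fun ω => (A (n + 1))⁻¹ * (X n ω + W n ω * e (n + 1) + S n) := by
      refine (condExp_smul ((A (n + 1))⁻¹) (X (n + 1)) _).trans ?_
      filter_upwards [hcondX n] with ω hω
      simp only [Pi.smul_apply, smul_eq_mul]
      rw [hω]
    have hA1ne : A (n + 1) ≠ 0 := (hA0 (n + 1)).ne'
    filter_upwards [h1, h3, hξpos_ae] with ω h1ω h3ω hω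
    rw [h1ω]
    simp only [Pi.add_apply]
    rw [h2, h3ω]
    simp only [hV]
    have hXp := hXpos ω hω n
    have hWl := hWle ω hω n
    have hexp : (A (n + 1))⁻¹ * (X n ω + W n ω * e (n + 1) + S n)
        + (R (n + 1) + G (n + 1) ω)
        = (A (n + 1))⁻¹ * (X n ω + W n ω * a (n + 1)) + (A (n + 1))⁻¹ * S n
          + R (n + 1) + G n ω := by
      rw [hGsucc n ω, ← hab (n + 1)]
      field_simp
      ring
    have hXWa : X n ω + W n ω * a (n + 1) ≤ X n ω * (1 + a (n + 1)) := by
      nlinarith [hWl.2, ha0 (n + 1)]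
    have hc1 : (A (n + 1))⁻¹ * (X n ω + W n ω * a (n + 1)) ≤ X n ω / A n := by
      have h4 : (A (n + 1))⁻¹ * (X n ω + W n ω * a (n + 1))
          ≤ (A (n + 1))⁻¹ * (X n ω * (1 + a (n + 1))) :=
        mul_le_mul_of_nonneg_left hXWa (inv_nonneg.2 (hA0 (n + 1)).le)
      refine h4.trans (le_of_eq ?_)
      rw [hAsucc n]
      have h5 : (1:ℝ) + a (n + 1) ≠ 0 := by nlinarith [ha0 (n + 1)]
      field_simp
    have hc2 : (A (n + 1))⁻¹ * S n ≤ S n := by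
      have : (A (n + 1))⁻¹ ≤ 1 := inv_le_one_of_one_le₀ (hA1 (n + 1))
      nlinarith [hS n]
    have hc3 := hRrec n
    rw [hexp]
    have hfin : (A (n + 1))⁻¹ * (X n ω + W n ω * a (n + 1)) + (A (n + 1))⁻¹ * S n
        + R (n + 1) + G n ω ≤ X n ω / A n + S n + R (n + 1) + G n ω :=
      add_le_add (add_le_add (add_le_add hc1 hc2) le_rfl) le_rfl
    refine hfin.trans (le_of_eq ?_)
    rw [hc3]
    ring
  have hVsuper : Supermartingale V ℱ μ := supermartingale_nat hVadp hV_int hstep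
  -- nonnegativity
  have hG0 : ∀ ω, (∀ k, 0 < 1 + ξ k ω) → ∀ n, 0 ≤ G n ω := by
    intro ω hω n
    simp only [hG]
    refine Finset.sum_nonneg fun k _ => ?_
    have hWk := (hWle ω hω k).1
    have hbk : 0 ≤ -b (k + 1) := by linarith [hb0 (k + 1)]
    exact mul_nonneg hWk (div_nonneg hbk (hA0 (k + 1)).le)
  have hV0 : ∀ ω, (∀ k, 0 < 1 + ξ k ω) → ∀ n, 0 ≤ V n ω := by
    intro ω hω n
    simp only [hV]
    have h1 := (hXpos ω hω n)
    have h2 := hR0 n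
    have h3 := hG0 ω hω n
    have h4 := hA0 n
    exact add_nonneg (add_nonneg (div_nonneg h1.le h4.le) h2) h3
  -- L¹ bound and convergence
  have hbdd : ∀ n, eLpNorm (V n) 1 μ ≤ ENNReal.ofReal (∫ ω, V 0 ω ∂μ) := by
    intro n
    have h1 : ∫ ω, V n ω ∂μ ≤ ∫ ω, V 0 ω ∂μ := by
      have h := hVsuper.setIntegral_le (Nat.zero_le n) (MeasurableSet.univ)
      simpa [Measure.restrict_univ] using h
    have h2 : eLpNorm (V n) 1 μ = ENNReal.ofReal (∫ ω, ‖V n ω‖ ∂μ) := by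
      rw [eLpNorm_one_eq_lintegral_enorm,
        ← ofReal_integral_norm_eq_lintegral_enorm (hV_int n)]
    rw [h2]
    refine ENNReal.ofReal_le_ofReal (le_trans (le_of_eq ?_) h1)
    refine integral_congr_ae ?_
    filter_upwards [hξpos_ae] with ω hω
    rw [Real.norm_eq_abs, abs_of_nonneg (hV0 ω hω n)]
  have hVconv : ∀ᵐ ω ∂μ, ∃ c, Tendsto (fun n => V n ω) atTop (nhds c) := by
    have hsub : Submartingale (-V) ℱ μ := hVsuper.neg
    have hb2 : ∀ n, eLpNorm ((-V) n) 1 μ ≤ ENNReal.ofReal (∫ ω, V 0 ω ∂μ) := by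
      intro n
      have hne : ((-V) n) = -(V n) := rfl
      rw [hne, eLpNorm_neg]
      exact hbdd n
    have h := hsub.exists_ae_tendsto_of_bdd hb2
    filter_upwards [h] with ω hω
    obtain ⟨c, hc⟩ := hω
    refine ⟨-c, ?_⟩
    have : (fun n => V n ω) = fun n => -((-V) n ω) := by
      funext n; simp
    rw [this]
    exact hc.neg
  -- main pathwise statement
  have hmain : ∀ᵐ ω ∂μ, ∃ l : ℝ, Tendsto (fun n => X n ω) atTop (nhds l) ∧
      (l ≠ 0 → ∃ M : ℝ, ∀ m, ∑ k ∈ Finset.range m, (-b (k + 1)) ≤ M) := by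
    filter_upwards [hVconv, hξpos_ae] with ω hcv hω
    obtain ⟨c, hc⟩ := hcv
    have hXp : ∀ n, 0 < X n ω := hXpos ω hω
    have hGmono : Monotone fun n => G n ω := by
      refine monotone_nat_of_le_succ fun n => ?_
      rw [hGsucc n ω]
      have hWk := (hWle ω hω n).1
      have hbk : 0 ≤ -b (n + 1) := by linarith [hb0 (n + 1)]
      have hAk := (hA0 (n + 1)).le
      nlinarith [mul_nonneg hWk (div_nonneg hbk hAk)]
    have hGleV : ∀ n, G n ω ≤ V n ω := by
      intro n
      simp only [hV]
      have h1 := (hXp n).le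
      have h2 := hR0 n
      have h4 := hA0 n
      exact le_add_of_nonneg_left (add_nonneg (div_nonneg h1 h4.le) h2)
    have hVbdd : BddAbove (Set.range fun n => V n ω) := hc.bddAbove_range
    obtain ⟨MV, hMV⟩ := hVbdd
    have hMV' : ∀ n, V n ω ≤ MV := fun n => hMV ⟨n, rfl⟩
    have hGbdd : BddAbove (Set.range fun n => G n ω) := by
      refine ⟨MV, ?_⟩
      rintro x ⟨n, rfl⟩
      exact (hGleV n).trans (hMV' n)
    have hGconv : Tendsto (fun n => G n ω) atTop (nhds (⨆ n, G n ω)) :=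
      tendsto_atTop_ciSup hGmono hGbdd
    set g : ℝ := ⨆ n, G n ω with hg
    have hXA : Tendsto (fun n => X n ω / A n) atTop (nhds (c - 0 - g)) := by
      have heq : (fun n => X n ω / A n) = fun n => V n ω - R n - G n ω := by
        funext n; simp only [hV]; ring
      rw [heq]
      exact (hc.sub hRlim).sub hGconv
    have hXlim : Tendsto (fun n => X n ω) atTop (nhds ((c - 0 - g) * Al)) := by
      have h := hXA.mul hAl
      have heq : ∀ n, X n ω / A n * A n = X n ω := fun n =>
        div_mul_cancel₀ _ (hA0 n).ne'
      simpa only [heq] using h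
    refine ⟨(c - 0 - g) * Al, hXlim, ?_⟩
    intro hne
    set l : ℝ := (c - 0 - g) * Al with hl
    have hl0 : 0 ≤ l := ge_of_tendsto' hXlim fun n => (hXp n).le
    have hlpos : 0 < l := lt_of_le_of_ne hl0 (Ne.symm hne)
    have hflpos : 0 < f l := by
      rcases (hf0 l).lt_or_eq with h | h
      · exact h
      · exact absurd ((hf_zero l).1 h.symm) hne
    have hWlim : Tendsto (fun n => W n ω) atTop (nhds (l * f l)) := by
      have : (fun n => W n ω) = fun n => X n ω * f (X n ω) := by
        funext n; simp [hW]
      rw [this]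
      exact hXlim.mul ((hf_cont.tendsto l).comp hXlim)
    have hc0 : 0 < l * f l / 2 := by positivity
    obtain ⟨N, hN⟩ : ∃ N, ∀ n, N ≤ n → l * f l / 2 ≤ W n ω := by
      have hev := hWlim.eventually (eventually_ge_nhds (by linarith : l * f l / 2 < l * f l))
      exact eventually_atTop.1 hev
    refine ⟨(∑ k ∈ Finset.range N, (-b (k + 1)))
      + Ab / (l * f l / 2) * MV, fun m => ?_⟩
    have hbk : ∀ k, (0:ℝ) ≤ -b (k + 1) := fun k => by linarith [hb0 (k + 1)]
    have hMge : m ≤ max m N := le_max_left m N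
    have hsub : ∑ k ∈ Finset.range m, (-b (k + 1))
        ≤ ∑ k ∈ Finset.range (max m N), (-b (k + 1)) :=
      Finset.sum_le_sum_of_subset_of_nonneg (Finset.range_subset_range.2 hMge)
        (fun k _ _ => hbk k)
    have hsplit : ∑ k ∈ Finset.range (max m N), (-b (k + 1))
        = (∑ k ∈ Finset.range N, (-b (k + 1)))
          + ∑ k ∈ Finset.Ico N (max m N), (-b (k + 1)) := by
      rw [Finset.range_eq_Ico,
        ← Finset.sum_Ico_consecutive _ (Nat.zero_le N) (le_max_right m N)]
      rw [Finset.range_eq_Ico]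
    have hterm : ∀ k ∈ Finset.Ico N (max m N),
        (-b (k + 1)) ≤ (Ab / (l * f l / 2)) * (W k ω * (-b (k + 1) / A (k + 1))) := by
      intro k hk
      rcases Finset.mem_Ico.1 hk with ⟨hk1, _⟩
      have hWk := hN k hk1
      have hW0 := (hWle ω hω k).1
      have h1 : (l * f l / 2) * (-b (k + 1)) / Ab ≤ W k ω * (-b (k + 1)) / A (k + 1) :=
        div_le_div₀ (mul_nonneg hW0 (hbk k))
          (mul_le_mul_of_nonneg_right hWk (hbk k)) (hA0 (k + 1)) (hAle (k + 1))
      have h2 : (Ab / (l * f l / 2)) * ((l * f l / 2) * (-b (k + 1)) / Ab) = -b (k + 1) := by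
        field_simp
      calc (-b (k + 1)) = (Ab / (l * f l / 2)) * ((l * f l / 2) * (-b (k + 1)) / Ab) :=
            h2.symm
        _ ≤ (Ab / (l * f l / 2)) * (W k ω * (-b (k + 1)) / A (k + 1)) :=
            mul_le_mul_of_nonneg_left h1 (by positivity)
        _ = (Ab / (l * f l / 2)) * (W k ω * (-b (k + 1) / A (k + 1))) := by
            ring
    have hsum2 : ∑ k ∈ Finset.Ico N (max m N), (-b (k + 1))
        ≤ (Ab / (l * f l / 2)) * G (max m N) ω := by
      calc ∑ k ∈ Finset.Ico N (max m N), (-b (k + 1))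
          ≤ ∑ k ∈ Finset.Ico N (max m N),
            (Ab / (l * f l / 2)) * (W k ω * (-b (k + 1) / A (k + 1))) :=
            Finset.sum_le_sum hterm
        _ = (Ab / (l * f l / 2)) * ∑ k ∈ Finset.Ico N (max m N),
            (W k ω * (-b (k + 1) / A (k + 1))) := by rw [Finset.mul_sum]
        _ ≤ (Ab / (l * f l / 2)) * G (max m N) ω := by
            refine mul_le_mul_of_nonneg_left ?_ (by positivity)
            simp only [hG]
            refine Finset.sum_le_sum_of_subset_of_nonneg ?_ ?_
            · rw [Finset.range_eq_Ico]
              exact Finset.Ico_subset_Ico (Nat.zero_le N) le_rfl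
            · intro k _ _
              exact mul_nonneg (hWle ω hω k).1 (div_nonneg (hbk k) (hA0 (k + 1)).le)
    have hGM : G (max m N) ω ≤ MV := (hGleV _).trans (hMV' _)
    have hfin : (Ab / (l * f l / 2)) * G (max m N) ω ≤ Ab / (l * f l / 2) * MV :=
      mul_le_mul_of_nonneg_left hGM (by positivity)
    linarith [hsub, hsplit, hsum2, hfin]
  -- conclusion
  constructor
  · filter_upwards [hmain] with ω hω
    obtain ⟨l, hl, _⟩ := hω
    exact ⟨l, hl⟩
  · intro hdiv
    have hdiv' : Tendsto (fun N => ∑ n ∈ Finset.range N, b n) atTop atBot := hdiv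
    filter_upwards [hmain] with ω hω
    obtain ⟨l, hl, hbd⟩ := hω
    rcases eq_or_ne l 0 with rfl | hne
    · exact hl
    exfalso
    obtain ⟨M, hM⟩ := hbd hne
    obtain ⟨m, hm⟩ := (hdiv'.eventually (eventually_lt_atBot (min (b 0 - M) 0))).exists
    rcases Nat.eq_zero_or_pos m with rfl | hm0
    · simp only [Finset.range_zero, Finset.sum_empty] at hm
      have := min_le_right (b 0 - M) (0:ℝ)
      linarith
    obtain ⟨m', rfl⟩ : ∃ m', m = m' + 1 := ⟨m - 1, by omega⟩
    have hsum : ∑ n ∈ Finset.range (m' + 1), b n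
        = (∑ k ∈ Finset.range m', b (k + 1)) + b 0 := Finset.sum_range_succ' _ _
    have h2 : ∑ k ∈ Finset.range m', b (k + 1)
        = -∑ k ∈ Finset.range m', (-b (k + 1)) := by
      rw [← Finset.sum_neg_distrib]
      simp
    rw [hsum, h2] at hm
    have h3 := hM m'
    have h4 := min_le_left (b 0 - M) (0:ℝ)
    linarith
end

section
/- Let f: ℝ → [0,1] be continuous with f(u) = 0 iff u = 0, let ξ_n be i.i.d. bounded random variables with −1 < −k₀ ≤ ξ_n ≤ L and E ξ_n > 0, let S_n > 0 be non-random, X_0 > 0, and X_{n+1} = X_n(1 + f(X_n) ξ_{n+1}) + S_n. Then P(X_n → 0) = 0. -/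
open MeasureTheory ProbabilityTheory Filter
open scoped ENNReal

noncomputable def traj (f : ℝ → ℝ) (S : ℕ → ℝ) (X₀ : ℝ) (u : ℕ → ℝ) : ℕ → ℝ
  | 0 => X₀
  | n+1 => traj f S X₀ u n * (1 + f (traj f S X₀ u n) * u (n+1)) + S n

lemma traj_congr (f : ℝ → ℝ) (S : ℕ → ℝ) (X₀ : ℝ) {u v : ℕ → ℝ} :
    ∀ n, (∀ i ≤ n, u i = v i) → traj f S X₀ u n = traj f S X₀ v n := by
  intro n
  induction n with
  | zero => intro _; rfl
  | succ n ih =>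
    intro h
    have h1 : traj f S X₀ u n = traj f S X₀ v n := ih fun i hi => h i (hi.trans n.le_succ)
    simp only [traj, h1, h (n+1) le_rfl]

lemma traj_measurable (f : ℝ → ℝ) (hf : Continuous f) (S : ℕ → ℝ) (X₀ : ℝ) (n : ℕ) :
    Measurable (fun u : ℕ → ℝ => traj f S X₀ u n) := by
  induction n with
  | zero => exact measurable_const
  | succ n ih =>
    exact ((ih.mul ((measurable_const.add ((hf.measurable.comp ih).mul
      (measurable_pi_apply (n+1)))))).add measurable_const)

/-- (1+u)⁻¹ ≤ 1 - u + 2u² for u ≥ -1/2 -/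
lemma inv_one_add_le {u : ℝ} (hu : -(1/2) ≤ u) : (1 + u)⁻¹ ≤ 1 - u + 2 * u ^ 2 := by
  have h2 : (0:ℝ) < 1 + u := by linarith
  rw [inv_le_iff_one_le_mul₀ h2]  -- maybe wrong name
  nlinarith [sq_nonneg u]


lemma traj_succ (f : ℝ → ℝ) (S : ℕ → ℝ) (X₀ : ℝ) (u : ℕ → ℝ) (n : ℕ) :
    traj f S X₀ u (n+1) = traj f S X₀ u n * (1 + f (traj f S X₀ u n) * u (n+1)) + S n := rfl

lemma div_step
    {Ω : Type*} [MeasurableSpace Ω] (μ : Measure Ω) [IsProbabilityMeasure μ]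
    (f : ℝ → ℝ) (hf_cont : Continuous f) (hf_range : ∀ u, f u ∈ Set.Icc (0 : ℝ) 1)
    (ξ : ℕ → Ω → ℝ) (hξ_meas : ∀ n, Measurable (ξ n))
    (hξ_indep : iIndepFun ξ μ)
    (ν : Measure ℝ) [IsProbabilityMeasure ν] (hν : ∀ n, μ.map (ξ n) = ν)
    (S : ℕ → ℝ) (hS : ∀ n, 0 < S n) (X₀ : ℝ)
    (X : ℕ → Ω → ℝ) (hX_traj : ∀ ω n, X n ω = traj f S X₀ (fun i => ξ i ω) n)
    (hXmeas : ∀ n, Measurable (X n))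
    (hrec : ∀ n ω, X (n + 1) ω = X n ω * (1 + f (X n ω) * ξ (n + 1) ω) + S n)
    (k₀ : ℝ)
    (G : Set Ω) (hG : ∀ᵐ ω ∂μ, ω ∈ G) (hGk : ∀ ω ∈ G, ∀ n, -k₀ ≤ ξ n ω)
    (hfac : ∀ x s : ℝ, -k₀ ≤ s → 0 < 1 + f x * s)
    (ε δ : ℝ) (hfε : ∀ x : ℝ, 0 < x → x ≤ ε → f x ≤ δ)
    (key : ∀ a : ℝ, 0 ≤ a → a ≤ δ →
      Integrable (fun s => (1 + a*s)⁻¹) ν ∧ (0 ≤ᵐ[ν] fun s => (1 + a*s)⁻¹) ∧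
      ∫ s, (1 + a*s)⁻¹ ∂ν ≤ 1)
    (m N : ℕ) (hmN : m ≤ N)
    (hBmeas : ∀ M : ℕ, MeasurableSet {ω | ∀ n, m ≤ n → n ≤ M → (0 < X n ω ∧ X n ω ≤ ε)}) :
    ∫⁻ ω in {ω | ∀ n, m ≤ n → n ≤ N+1 → (0 < X n ω ∧ X n ω ≤ ε)},
        ENNReal.ofReal ((X (N+1) ω)⁻¹) ∂μ
      ≤ ∫⁻ ω in {ω | ∀ n, m ≤ n → n ≤ N → (0 < X n ω ∧ X n ω ≤ ε)},
        ENNReal.ofReal ((X N ω)⁻¹) ∂μ := by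
  classical
  set T : (ℕ → ℝ) → ℕ → ℝ := traj f S X₀ with hT_def
  set K := Finset.range (N+1) with hK_def
  set V : Ω → (K → ℝ) := fun ω i => ξ i ω with hV_def
  have hVmeas : Measurable V := measurable_pi_lambda _ fun i => hξ_meas i
  have hNmem : (N+1) ∈ ({N+1} : Finset ℕ) := Finset.mem_singleton_self _
  have hind : IndepFun V (ξ (N+1)) μ := by
    have hd : Disjoint K ({N+1} : Finset ℕ) := by
      simp [hK_def, Finset.disjoint_singleton_right]
    have h := hξ_indep.indepFun_finset K {N+1} hd hξ_meas
    exact h.comp measurable_id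
      (measurable_pi_apply (⟨N+1, hNmem⟩ : ({N+1} : Finset ℕ)))
  have hmap : μ.map (fun ω => (V ω, ξ (N+1) ω)) = (μ.map V).prod ν := by
    rw [(indepFun_iff_map_prod_eq_prod_map_map hVmeas.aemeasurable
      (hξ_meas (N+1)).aemeasurable).1 hind, hν (N+1)]
  set ee : (K → ℝ) → (ℕ → ℝ) := fun v i => if h : i ∈ K then v ⟨i, h⟩ else 0 with hee_def
  have hee_meas : Measurable ee := by
    apply measurable_pi_lambda
    intro i
    simp only [hee_def]
    by_cases h : i ∈ K
    · simp only [dif_pos h]; exact measurable_pi_apply _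
    · simp only [dif_neg h]; exact measurable_const
  have hee_eq : ∀ ω n, n ≤ N → T (ee (V ω)) n = X n ω := by
    intro ω n hn
    rw [hX_traj ω n, hT_def]
    apply traj_congr
    intro i hi
    have hiK : i ∈ K := by
      rw [hK_def]; exact Finset.mem_range.2 (Nat.lt_succ_of_le (hi.trans hn))
    simp only [hee_def, dif_pos hiK, hV_def]
  set Cv : Set (K → ℝ) :=
    {v | ∀ n, m ≤ n → n ≤ N → (0 < T (ee v) n ∧ T (ee v) n ≤ ε)} with hCv_def
  have hTn_meas : ∀ n, Measurable fun v : K → ℝ => T (ee v) n := fun n =>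
    (traj_measurable f hf_cont S X₀ n).comp hee_meas
  have hCv_meas : MeasurableSet Cv := by
    have hrw : Cv = ⋂ n, {v : K → ℝ | m ≤ n → n ≤ N → (0 < T (ee v) n ∧ T (ee v) n ≤ ε)} := by
      ext v; simp only [hCv_def, Set.mem_setOf_eq, Set.mem_iInter]
    rw [hrw]
    refine MeasurableSet.iInter fun n => ?_
    by_cases h : m ≤ n ∧ n ≤ N
    · have hrw2 : {v : K → ℝ | m ≤ n → n ≤ N → (0 < T (ee v) n ∧ T (ee v) n ≤ ε)}
          = (fun v : K → ℝ => T (ee v) n) ⁻¹' (Set.Ioc 0 ε) := by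
        ext v; simp [h.1, h.2, Set.mem_Ioc]
      rw [hrw2]; exact (hTn_meas n) measurableSet_Ioc
    · have hrw2 : {v : K → ℝ | m ≤ n → n ≤ N → (0 < T (ee v) n ∧ T (ee v) n ≤ ε)}
          = Set.univ := by
        ext v; simp only [Set.mem_setOf_eq, Set.mem_univ, iff_true]
        intro h1 h2; exact absurd ⟨h1, h2⟩ h
      rw [hrw2]; exact MeasurableSet.univ
  have hCvV : ∀ ω, (V ω ∈ Cv ↔ ω ∈ {ω | ∀ n, m ≤ n → n ≤ N → (0 < X n ω ∧ X n ω ≤ ε)}) := by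
    intro ω
    constructor
    · intro h n h1 h2; rw [← hee_eq ω n h2]; exact h n h1 h2
    · intro h n h1 h2; rw [hee_eq ω n h2]; exact h n h1 h2
  set g2 : (K → ℝ) × ℝ → ℝ≥0∞ := fun p =>
    ENNReal.ofReal ((T (ee p.1) N)⁻¹ * (1 + f (T (ee p.1) N) * p.2)⁻¹) with hg2_def
  set H : (K → ℝ) × ℝ → ℝ≥0∞ := fun p => if p.1 ∈ Cv then g2 p else 0 with hH_def
  have hg2_meas : Measurable g2 := by
    have hx : Measurable fun p : (K → ℝ) × ℝ => T (ee p.1) N :=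
      (hTn_meas N).comp measurable_fst
    exact ENNReal.measurable_ofReal.comp
      ((hx.inv).mul ((measurable_const.add
        ((hf_cont.measurable.comp hx).mul measurable_snd)).inv))
  have hH_meas : Measurable H := by
    have hrw : H = (Cv ×ˢ (Set.univ : Set ℝ)).indicator g2 := by
      ext p
      by_cases h : p.1 ∈ Cv
      · rw [hH_def]; simp only [if_pos h]
        rw [Set.indicator_of_mem (Set.mem_prod.2 ⟨h, Set.mem_univ _⟩)]
      · rw [hH_def]; simp only [if_neg h]
        rw [Set.indicator_of_notMem (fun hc => h (Set.mem_prod.1 hc).1)]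
    rw [hrw]
    exact hg2_meas.indicator (hCv_meas.prod MeasurableSet.univ)
  -- step 1 : pointwise domination
  have h1 : (∫⁻ ω in {ω | ∀ n, m ≤ n → n ≤ N+1 → (0 < X n ω ∧ X n ω ≤ ε)},
      ENNReal.ofReal ((X (N+1) ω)⁻¹) ∂μ) ≤ ∫⁻ ω, H (V ω, ξ (N+1) ω) ∂μ := by
    rw [← lintegral_indicator (hBmeas (N+1))]
    refine lintegral_mono_ae (hG.mono fun ω hωG => ?_)
    by_cases hω : ω ∈ {ω | ∀ n, m ≤ n → n ≤ N+1 → (0 < X n ω ∧ X n ω ≤ ε)}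
    · rw [Set.indicator_of_mem hω]
      have hωN : ω ∈ {ω | ∀ n, m ≤ n → n ≤ N → (0 < X n ω ∧ X n ω ≤ ε)} :=
        fun n hn1 hn2 => hω n hn1 (hn2.trans (Nat.le_succ N))
      have hCvω : V ω ∈ Cv := (hCvV ω).2 hωN
      have hXN : 0 < X N ω := (hωN N hmN le_rfl).1
      have hfacN : 0 < 1 + f (X N ω) * ξ (N+1) ω := hfac _ _ (hGk ω hωG (N+1))
      have hXN1 : 0 < X N ω * (1 + f (X N ω) * ξ (N+1) ω) := mul_pos hXN hfacN
      have hle : (X (N+1) ω)⁻¹ ≤ (X N ω)⁻¹ * (1 + f (X N ω) * ξ (N+1) ω)⁻¹ := by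
        rw [← mul_inv]
        refine inv_anti₀ hXN1 ?_
        rw [hrec]; linarith [hS N]
      have hHval : H (V ω, ξ (N+1) ω)
          = ENNReal.ofReal ((X N ω)⁻¹ * (1 + f (X N ω) * ξ (N+1) ω)⁻¹) := by
        rw [hH_def]; simp only [if_pos hCvω]
        rw [hg2_def]; simp only
        rw [hee_eq ω N le_rfl]
      rw [hHval]
      exact ENNReal.ofReal_le_ofReal hle
    · rw [Set.indicator_of_notMem hω]; exact zero_le
  -- step 2-3 : independence and Tonelli
  have h2 : ∫⁻ ω, H (V ω, ξ (N+1) ω) ∂μ = ∫⁻ v, ∫⁻ s, H (v, s) ∂ν ∂(μ.map V) := by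
    rw [← lintegral_map hH_meas (hVmeas.prodMk (hξ_meas (N+1))), hmap,
      lintegral_prod _ hH_meas.aemeasurable]
  -- step 4 : inner integral bound
  have h4 : ∀ v, (∫⁻ s, H (v, s) ∂ν)
      ≤ Cv.indicator (fun v => ENNReal.ofReal ((T (ee v) N)⁻¹)) v := by
    intro v
    by_cases hv : v ∈ Cv
    · rw [Set.indicator_of_mem hv]
      obtain ⟨hx0, hxε⟩ := hv N hmN le_rfl
      have hfx : f (T (ee v) N) ≤ δ := hfε _ hx0 hxε
      have hfx0 : 0 ≤ f (T (ee v) N) := (hf_range _).1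
      obtain ⟨hint, hnn, hle1⟩ := key (f (T (ee v) N)) hfx0 hfx
      have hsplit : ∀ s : ℝ, H (v, s) = ENNReal.ofReal ((T (ee v) N)⁻¹)
          * ENNReal.ofReal ((1 + f (T (ee v) N) * s)⁻¹) := by
        intro s
        rw [hH_def]; simp only [if_pos hv]
        rw [hg2_def]; simp only
        exact ENNReal.ofReal_mul (inv_nonneg.2 hx0.le)
      calc ∫⁻ s, H (v, s) ∂ν
          = ∫⁻ s, ENNReal.ofReal ((T (ee v) N)⁻¹)
            * ENNReal.ofReal ((1 + f (T (ee v) N) * s)⁻¹) ∂ν :=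
            lintegral_congr hsplit
        _ = ENNReal.ofReal ((T (ee v) N)⁻¹)
            * ∫⁻ s, ENNReal.ofReal ((1 + f (T (ee v) N) * s)⁻¹) ∂ν :=
            lintegral_const_mul _ (ENNReal.measurable_ofReal.comp
              ((measurable_const.add (measurable_const.mul measurable_id)).inv))
        _ = ENNReal.ofReal ((T (ee v) N)⁻¹)
            * ENNReal.ofReal (∫ s, (1 + f (T (ee v) N) * s)⁻¹ ∂ν) := by
            rw [ofReal_integral_eq_lintegral_ofReal hint hnn]
        _ ≤ ENNReal.ofReal ((T (ee v) N)⁻¹) * 1 := by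
            refine mul_le_mul_right ?_ _
            calc ENNReal.ofReal (∫ s, (1 + f (T (ee v) N) * s)⁻¹ ∂ν)
                ≤ ENNReal.ofReal 1 := ENNReal.ofReal_le_ofReal hle1
              _ = 1 := ENNReal.ofReal_one
        _ = ENNReal.ofReal ((T (ee v) N)⁻¹) := mul_one _
    · have hz : ∀ s : ℝ, H (v, s) = 0 := fun s => by rw [hH_def]; simp [hv]
      rw [Set.indicator_of_notMem hv]
      simp [hz]
  -- step 5 : transfer back
  have h5 : ∫⁻ v, Cv.indicator (fun v => ENNReal.ofReal ((T (ee v) N)⁻¹)) v ∂(μ.map V)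
      = ∫⁻ ω in {ω | ∀ n, m ≤ n → n ≤ N → (0 < X n ω ∧ X n ω ≤ ε)},
        ENNReal.ofReal ((X N ω)⁻¹) ∂μ := by
    have hmeasInd : Measurable fun v : K → ℝ =>
        Cv.indicator (fun v => ENNReal.ofReal ((T (ee v) N)⁻¹)) v :=
      (ENNReal.measurable_ofReal.comp (hTn_meas N).inv).indicator hCv_meas
    rw [lintegral_map hmeasInd hVmeas]
    have hpt : ∀ ω, Cv.indicator (fun v => ENNReal.ofReal ((T (ee v) N)⁻¹)) (V ω)
        = Set.indicator {ω | ∀ n, m ≤ n → n ≤ N → (0 < X n ω ∧ X n ω ≤ ε)}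
          (fun ω => ENNReal.ofReal ((X N ω)⁻¹)) ω := by
      intro ω
      by_cases hω : ω ∈ {ω | ∀ n, m ≤ n → n ≤ N → (0 < X n ω ∧ X n ω ≤ ε)}
      · rw [Set.indicator_of_mem ((hCvV ω).2 hω), Set.indicator_of_mem hω,
          hee_eq ω N le_rfl]
      · rw [Set.indicator_of_notMem (fun hc => hω ((hCvV ω).1 hc)),
          Set.indicator_of_notMem hω]
    rw [lintegral_congr hpt, lintegral_indicator (hBmeas N)]
  calc (∫⁻ ω in {ω | ∀ n, m ≤ n → n ≤ N+1 → (0 < X n ω ∧ X n ω ≤ ε)},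
      ENNReal.ofReal ((X (N+1) ω)⁻¹) ∂μ)
      ≤ ∫⁻ ω, H (V ω, ξ (N+1) ω) ∂μ := h1
    _ = ∫⁻ v, ∫⁻ s, H (v, s) ∂ν ∂(μ.map V) := h2
    _ ≤ ∫⁻ v, Cv.indicator (fun v => ENNReal.ofReal ((T (ee v) N)⁻¹)) v ∂(μ.map V) :=
        lintegral_mono h4
    _ = _ := h5

theorem nonlinear_positive_mean_divergence
    {Ω : Type*} [MeasurableSpace Ω] (μ : Measure Ω) [IsProbabilityMeasure μ]
    (f : ℝ → ℝ) (hf_cont : Continuous f) (hf_range : ∀ u, f u ∈ Set.Icc (0 : ℝ) 1)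
    (hf_zero : ∀ u, f u = 0 ↔ u = 0)
    (ξ : ℕ → Ω → ℝ) (hξ_meas : ∀ n, Measurable (ξ n))
    (hξ_indep : iIndepFun ξ μ)
    (hξ_ident : ∀ n m, Measure.map (ξ n) μ = Measure.map (ξ m) μ)
    (k₀ L : ℝ) (hk₀ : k₀ < 1)
    (hξ_bdd : ∀ n, ∀ᵐ ω ∂μ, -k₀ ≤ ξ n ω ∧ ξ n ω ≤ L)
    (hξ_int : ∀ n, Integrable (ξ n) μ)
    (hmean_pos : ∀ n, 0 < ∫ ω, ξ n ω ∂μ)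
    (S : ℕ → ℝ) (hS : ∀ n, 0 < S n)
    (X : ℕ → Ω → ℝ) (X₀ : ℝ) (hX₀ : 0 < X₀) (hX0 : ∀ ω, X 0 ω = X₀)
    (hrec : ∀ n ω, X (n + 1) ω = X n ω * (1 + f (X n ω) * ξ (n + 1) ω) + S n) :
    μ {ω | Tendsto (fun n => X n ω) atTop (nhds 0)} = 0 := by
  classical
  -- basic setup
  set ν : Measure ℝ := μ.map (ξ 0) with hν_def
  have hν_prob : IsProbabilityMeasure ν := Measure.isProbabilityMeasure_map (hξ_meas 0).aemeasurable
  set B : ℝ := max (max k₀ L) 1 with hB_def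
  have hB1 : (1:ℝ) ≤ B := le_max_right _ _
  have hB0 : (0:ℝ) < B := lt_of_lt_of_le one_pos hB1
  have hBk : k₀ ≤ B := le_trans (le_max_left _ _) (le_max_left _ _)
  have hBL : L ≤ B := le_trans (le_max_right _ _) (le_max_left _ _)
  have hν_bdd : ∀ᵐ s ∂ν, -k₀ ≤ s ∧ s ≤ L := by
    rw [hν_def, ae_map_iff (hξ_meas 0).aemeasurable]
    · exact hξ_bdd 0
    · exact (measurableSet_le measurable_const measurable_id).inter
        (measurableSet_le measurable_id measurable_const)
  set m0 : ℝ := ∫ s, s ∂ν with hm0_def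
  have hm0_pos : 0 < m0 := by
    have h : (∫ s, s ∂ν) = ∫ ω, ξ 0 ω ∂μ :=
      integral_map (hξ_meas 0).aemeasurable aestronglyMeasurable_id
    rw [hm0_def, h]
    exact hmean_pos 0
  set δ : ℝ := min (1/(2*B)) (m0/(2*B^2)) with hδ_def
  have hδ_pos : 0 < δ := lt_min (by positivity) (by positivity)
  have hδB : δ * B ≤ 1/2 := by
    calc δ * B ≤ (1/(2*B)) * B := by
          exact mul_le_mul_of_nonneg_right (min_le_left _ _) hB0.le
      _ = 1/2 := by field_simp
  -- the key integral inequality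
  have key : ∀ a : ℝ, 0 ≤ a → a ≤ δ →
      Integrable (fun s => (1 + a*s)⁻¹) ν ∧ (0 ≤ᵐ[ν] fun s => (1 + a*s)⁻¹) ∧
      ∫ s, (1 + a*s)⁻¹ ∂ν ≤ 1 := by
    intro a ha0 haδ
    have hmeas : Measurable fun s : ℝ => (1 + a*s)⁻¹ :=
      (measurable_const.add (measurable_const.mul measurable_id)).inv
    have hae : ∀ᵐ s ∂ν, |s| ≤ B ∧ -(1/2) ≤ a*s := by
      refine hν_bdd.mono fun s hs => ?_
      have h1 : |s| ≤ B := abs_le.2 ⟨by linarith [hs.1, hBk], le_trans hs.2 hBL⟩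
      refine ⟨h1, ?_⟩
      have h2 : |a*s| ≤ 1/2 := by
        rw [abs_mul, abs_of_nonneg ha0]
        calc a * |s| ≤ δ * B := mul_le_mul haδ h1 (abs_nonneg s) hδ_pos.le
          _ ≤ 1/2 := hδB
      linarith [neg_abs_le (a*s), abs_nonneg (a*s), abs_le.1 h2]
    have hhalf : ∀ᵐ s ∂ν, (1:ℝ)/2 ≤ 1 + a*s := hae.mono fun s hs => by linarith [hs.2]
    have hnn : 0 ≤ᵐ[ν] fun s => (1 + a*s)⁻¹ :=
      hhalf.mono fun s hs => inv_nonneg.2 (by linarith)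
    have hint : Integrable (fun s => (1 + a*s)⁻¹) ν := by
      refine (integrable_const (2:ℝ)).mono' hmeas.aestronglyMeasurable ?_
      refine hhalf.mono fun s hs => ?_
      rw [Real.norm_eq_abs, abs_of_nonneg (inv_nonneg.2 (by linarith : (0:ℝ) ≤ 1 + a*s))]
      calc (1 + a*s)⁻¹ ≤ ((1:ℝ)/2)⁻¹ := inv_anti₀ (by norm_num) hs
        _ = 2 := by norm_num
    have hintid : Integrable (fun s : ℝ => s) ν := by
      refine (integrable_const B).mono' measurable_id.aestronglyMeasurable ?_
      exact hae.mono fun s hs => by simpa [Real.norm_eq_abs] using hs.1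
    refine ⟨hint, hnn, ?_⟩
    have hle : (fun s => (1 + a*s)⁻¹) ≤ᵐ[ν] fun s => 1 - a*s + 2*a^2*B^2 := by
      refine hae.mono fun s hs => ?_
      have h := inv_one_add_le hs.2
      have h2 : 2*(a*s)^2 ≤ 2*a^2*B^2 := by
        have hs2 : s^2 ≤ B^2 := by nlinarith [sq_abs s, mul_self_le_mul_self (abs_nonneg s) hs.1]
        nlinarith [sq_nonneg a, sq_nonneg s]
      calc (1 + a*s)⁻¹ ≤ 1 - a*s + 2*(a*s)^2 := h
        _ ≤ 1 - a*s + 2*a^2*B^2 := by linarith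
    have hsub_int : Integrable (fun s : ℝ => 1 - a*s) ν :=
      (integrable_const 1).sub (hintid.const_mul a)
    have hR_int : Integrable (fun s : ℝ => 1 - a*s + 2*a^2*B^2) ν :=
      hsub_int.add (integrable_const _)
    have hmono := integral_mono_ae hint hR_int hle
    have hamul : Integrable (fun s : ℝ => a*s) ν := hintid.const_mul a
    have hcalc : ∫ s, (1 - a*s + 2*a^2*B^2) ∂ν = 1 - a*m0 + 2*a^2*B^2 := by
      rw [integral_add hsub_int (integrable_const _),
        integral_sub (integrable_const 1) hamul, integral_const_mul,
        integral_const, integral_const]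
      simp [hm0_def]
    rw [hcalc] at hmono
    have hδ2 : δ ≤ m0/(2*B^2) := min_le_right _ _
    have h2δ : 2*δ*B^2 ≤ m0 := by
      have h := mul_le_mul_of_nonneg_right hδ2 (by positivity : (0:ℝ) ≤ 2*B^2)
      have h2 : m0/(2*B^2)*(2*B^2) = m0 := div_mul_cancel₀ _ (by positivity)
      nlinarith
    nlinarith [sq_nonneg a, sq_nonneg B, mul_nonneg ha0 hm0_pos.le]
  -- choose ε by continuity of f at 0
  obtain ⟨ε, hε_pos, hfε⟩ : ∃ ε > 0, ∀ x : ℝ, |x| ≤ ε → f x ≤ δ := by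
    have hf0 : f 0 = 0 := (hf_zero 0).mpr rfl
    obtain ⟨r, hr_pos, hr⟩ := Metric.continuousAt_iff.1 (hf_cont.continuousAt (x := 0)) δ hδ_pos
    refine ⟨r/2, by positivity, fun x hx => ?_⟩
    have : dist x 0 < r := by
      rw [Real.dist_eq, sub_zero]; linarith
    have := hr this
    rw [Real.dist_eq, hf0, sub_zero] at this
    exact le_of_lt (lt_of_le_of_lt (le_abs_self _) this)
  -- good set
  set G : Set Ω := {ω | ∀ n, -k₀ ≤ ξ n ω ∧ ξ n ω ≤ L} with hG_def
  have hG : ∀ᵐ ω ∂μ, ω ∈ G := ae_all_iff.2 hξ_bdd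
  have hGc : μ Gᶜ = 0 := by
    have := hG; rwa [ae_iff] at this
  -- factor positivity
  have hfac : ∀ (x s : ℝ), -k₀ ≤ s → 0 < 1 + f x * s := by
    intro x s hs
    rcases le_or_gt 0 s with h | h
    · nlinarith [(hf_range x).1, (hf_range x).2]
    · nlinarith [(hf_range x).1, (hf_range x).2]
  -- positivity of X
  have hpos : ∀ ω ∈ G, ∀ n, 0 < X n ω := by
    intro ω hω n
    induction n with
    | zero => rw [hX0]; exact hX₀
    | succ n ih =>
      rw [hrec]
      have := hfac (X n ω) (ξ (n+1) ω) (hω (n+1)).1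
      nlinarith [hS n]
  have hXS : ∀ ω ∈ G, ∀ n, S n ≤ X (n+1) ω := by
    intro ω hω n
    rw [hrec]
    have h1 := hfac (X n ω) (ξ (n+1) ω) (hω (n+1)).1
    nlinarith [hpos ω hω n]
  -- X as a function of the noise path
  set T : (ℕ → ℝ) → ℕ → ℝ := traj f S X₀ with hT_def
  have hX_traj : ∀ ω n, X n ω = T (fun i => ξ i ω) n := by
    intro ω n
    induction n with
    | zero => rw [hX0]; rfl
    | succ n ih => rw [hrec, ih]; rfl
  have hXmeas : ∀ n, Measurable (X n) := by
    intro n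
    have : Measurable fun ω => (fun i => ξ i ω) := measurable_pi_lambda _ hξ_meas
    have := (traj_measurable f hf_cont S X₀ n).comp this
    convert this using 1
    ext ω; exact hX_traj ω n
  -- lower bound for X m
  set c : ℕ → ℝ := fun m => Nat.rec X₀ (fun k _ => S k) m with hc_def
  have hc_pos : ∀ m, 0 < c m := by
    intro m; cases m with
    | zero => exact hX₀
    | succ k => exact hS k
  have hXc : ∀ ω ∈ G, ∀ m, c m ≤ X m ω := by
    intro ω hω m; cases m with
    | zero => rw [hX0]; exact le_rfl
    | succ k => exact hXS ω hω k
  -- the sets B m N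
  set Bs : ℕ → ℕ → Set Ω := fun m N => {ω | ∀ n, m ≤ n → n ≤ N → (0 < X n ω ∧ X n ω ≤ ε)}
    with hBs_def
  have hBs_meas : ∀ m N, MeasurableSet (Bs m N) := by
    intro m N
    have : Bs m N = ⋂ n, {ω | m ≤ n → n ≤ N → (0 < X n ω ∧ X n ω ≤ ε)} := by
      ext ω; simp [hBs_def, Set.mem_iInter]
    rw [this]
    refine MeasurableSet.iInter fun n => ?_
    by_cases h : m ≤ n ∧ n ≤ N
    · have : {ω | m ≤ n → n ≤ N → (0 < X n ω ∧ X n ω ≤ ε)}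
          = (X n) ⁻¹' (Set.Ioc 0 ε) := by
        ext ω; simp [h.1, h.2, Set.mem_Ioc]
      rw [this]; exact (hXmeas n) measurableSet_Ioc
    · have : {ω | m ≤ n → n ≤ N → (0 < X n ω ∧ X n ω ≤ ε)} = Set.univ := by
        ext ω; simp only [Set.mem_setOf_eq, Set.mem_univ, iff_true]
        intro h1 h2; exact absurd ⟨h1, h2⟩ h
      rw [this]; exact MeasurableSet.univ
  -- the quantities I m N
  set I : ℕ → ℕ → ℝ≥0∞ := fun m N => ∫⁻ ω in Bs m N, ENNReal.ofReal ((X N ω)⁻¹) ∂μ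
    with hI_def
  -- key supermartingale step
  have step : ∀ m N, m ≤ N → I m (N+1) ≤ I m N := by
    intro m N hmN
    exact div_step μ f hf_cont hf_range ξ hξ_meas hξ_indep ν
      (fun n => hξ_ident n 0) S hS X₀ X hX_traj hXmeas hrec k₀ G hG
      (fun ω hω n => (hω n).1) hfac ε δ
      (fun x hx0 hxε => hfε x (abs_le.2 ⟨by linarith, hxε⟩)) key m N hmN
      (fun M => hBs_meas m M)
  -- bound for I m N
  have Ibound : ∀ m N, m ≤ N → I m N ≤ ENNReal.ofReal ((c m)⁻¹) := by
    intro m N hmN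
    induction N, hmN using Nat.le_induction with
    | base =>
      calc I m m ≤ ∫⁻ ω, ENNReal.ofReal ((X m ω)⁻¹) ∂μ :=
            setLIntegral_le_lintegral _ _
        _ ≤ ∫⁻ _, ENNReal.ofReal ((c m)⁻¹) ∂μ := by
            refine lintegral_mono_ae (hG.mono fun ω hω => ?_)
            exact ENNReal.ofReal_le_ofReal
              (inv_anti₀ (hc_pos m) (hXc ω hω m))
        _ = ENNReal.ofReal ((c m)⁻¹) := by simp
    | succ N hmN ih => exact le_trans (step m N hmN) ih
  -- Fatou / conclusion per m
  have hCm : ∀ m, μ (G ∩ {ω | ∀ n, m ≤ n → X n ω ≤ ε}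
      ∩ {ω | Tendsto (fun n => X n ω) atTop (nhds 0)}) = 0 := by
    intro m
    set F : ℕ → Ω → ℝ≥0∞ := fun N ω => (Bs m N).indicator (fun ω => ENNReal.ofReal ((X N ω)⁻¹)) ω
      with hF_def
    have hFmeas : ∀ N, Measurable (F N) := fun N =>
      (ENNReal.measurable_ofReal.comp (hXmeas N).inv).indicator (hBs_meas m N)
    have hFI : ∀ N, ∫⁻ ω, F N ω ∂μ = I m N := fun N =>
      lintegral_indicator (hBs_meas m N) _
    set g : Ω → ℝ≥0∞ := fun ω => Filter.liminf (fun N => F N ω) atTop with hg_def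
    have hgmeas : Measurable g := Measurable.liminf hFmeas
    have hliminf : ∫⁻ ω, g ω ∂μ ≤ ENNReal.ofReal ((c m)⁻¹) := by
      refine le_trans (lintegral_liminf_le hFmeas) ?_
      have hev : ∀ᶠ N in atTop, (∫⁻ ω, F N ω ∂μ) ≤ ENNReal.ofReal ((c m)⁻¹) :=
        eventually_atTop.2 ⟨m, fun N hN => (hFI N) ▸ Ibound m N hN⟩
      calc Filter.liminf (fun N => ∫⁻ ω, F N ω ∂μ) atTop
          ≤ Filter.liminf (fun _ => ENNReal.ofReal ((c m)⁻¹)) atTop := liminf_le_liminf hev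
        _ = ENNReal.ofReal ((c m)⁻¹) := liminf_const _
    have hae2 : ∀ᵐ ω ∂μ, g ω < ⊤ :=
      ae_lt_top hgmeas (lt_of_le_of_lt hliminf ENNReal.ofReal_lt_top).ne
    have hnull : μ {ω | ¬ g ω < ⊤} = 0 := ae_iff.1 hae2
    refine measure_mono_null (fun ω hω => ?_) hnull
    obtain ⟨⟨hωG, hωε⟩, hωT⟩ := hω
    have hFeq : ∀ N, F N ω = ENNReal.ofReal ((X N ω)⁻¹) := by
      intro N
      have hmem : ω ∈ Bs m N := by
        simp only [hBs_def, Set.mem_setOf_eq]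
        exact fun n hmn _ => ⟨hpos ω hωG n, hωε n hmn⟩
      exact Set.indicator_of_mem hmem _
    have htend0 : Tendsto (fun N => (X N ω)⁻¹) atTop atTop := by
      apply Filter.Tendsto.inv_tendsto_nhdsGT_zero
      rw [tendsto_nhdsWithin_iff]
      exact ⟨hωT, Eventually.of_forall fun n => hpos ω hωG n⟩
    have htend : Tendsto (fun N => F N ω) atTop (nhds ⊤) := by
      have := ENNReal.tendsto_ofReal_atTop.comp htend0
      exact Tendsto.congr (fun N => (hFeq N).symm) this
    have hgtop : g ω = ⊤ := htend.liminf_eq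
    simp only [Set.mem_setOf_eq, hgtop]
    exact fun h => lt_irrefl ⊤ h
  -- final assembly
  have hsub : {ω | Tendsto (fun n => X n ω) atTop (nhds 0)} ⊆
      Gᶜ ∪ ⋃ m, (G ∩ {ω | ∀ n, m ≤ n → X n ω ≤ ε}
        ∩ {ω | Tendsto (fun n => X n ω) atTop (nhds 0)}) := by
    intro ω hω
    by_cases hωG : ω ∈ G
    · right
      have : ∀ᶠ n in atTop, |X n ω| < ε := by
        have hT : Tendsto (fun n => X n ω) atTop (nhds 0) := hω
        obtain ⟨M, hM⟩ := Metric.tendsto_atTop.1 hT ε hε_pos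
        exact eventually_atTop.2 ⟨M, fun n hn => by
          have := hM n hn; rwa [Real.dist_eq, sub_zero] at this⟩
      obtain ⟨m, hm⟩ := eventually_atTop.1 this
      refine Set.mem_iUnion.2 ⟨m, ⟨⟨hωG, fun n hn => le_of_lt ?_⟩, hω⟩⟩
      exact lt_of_le_of_lt (le_abs_self _) (hm n hn)
    · left; exact hωG
  refine measure_mono_null hsub ?_
  refine measure_union_null hGc (measure_iUnion_null hCm)
end
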